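/- arXiv:2001.06482 — 10 statements merged into one kernel-verified Lean document; each statement's English description precedes it below -/
import Mathlib

section
/- (Theorem 1.) Let x : ℝ → E solve ẋ(t) = A(t) x(t) + f(t, x(t)) + F(t) for t ∈ [t₀, t₁], let W be a fundamental solution of ẋ = A(t)x with ‖W t₀‖ = 1, let p : ℝ → ℝ be continuous with ‖W t‖ = exp(∫_{t₀}^{t} p(s) ds) for all t ∈ [t₀, t₁], and set k(t) = ‖W t‖ · ‖(W t)⁻¹‖. Let Ω₁ ⊆ E contain 0, let l : ℝ → ℝ be continuous and nonnegative with ‖f(t, y)‖ ≤ l(t) ‖y‖ for all t ∈ [t₀, t₁] and all y ∈ Ω₁, and assume x(s) ∈ Ω₁ for all s ∈ [t₀, t₁]. Then for every t ∈ [t₀, t₁]: ‖x(t)‖ ≤ ‖W t‖ · ‖(W t₀)⁻¹ (x t₀)‖ · exp(∫_{t₀}^{t} k(s) l(s) ds) + ∫_{t₀}^{t} exp(∫_{τ}^{t} (p(s) + k(s) l(s)) ds) · k(τ) · ‖F τ‖ dτ. -/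
open Set intervalIntegral MeasureTheory

lemma my_gronwall_integral {t₀ t₁ : ℝ} (ht : t₀ ≤ t₁) {a : ℝ} {b c u : ℝ → ℝ}
    (hb : ContinuousOn b (Set.Icc t₀ t₁)) (hc : ContinuousOn c (Set.Icc t₀ t₁))
    (hu : ContinuousOn u (Set.Icc t₀ t₁))
    (hb0 : ∀ s ∈ Set.Icc t₀ t₁, 0 ≤ b s)
    (hbound : ∀ t ∈ Set.Icc t₀ t₁, u t ≤ a + ∫ s in t₀..t, (b s * u s + c s)) :
    ∀ t ∈ Set.Icc t₀ t₁, u t ≤ a * Real.exp (∫ s in t₀..t, b s)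
      + ∫ τ in t₀..t, Real.exp (∫ s in τ..t, b s) * c τ := by
  have hIcc : Set.uIcc t₀ t₁ = Set.Icc t₀ t₁ := Set.uIcc_of_le ht
  -- integrability of b and b*u+c on subintervals
  have hbu : ContinuousOn (fun s => b s * u s + c s) (Set.Icc t₀ t₁) :=
    (hb.mul hu).add hc
  have hsub : ∀ t ∈ Set.Icc t₀ t₁, Set.uIcc t₀ t ⊆ Set.Icc t₀ t₁ := by
    intro t htt
    rw [Set.uIcc_of_le htt.1]
    exact Set.Icc_subset_Icc le_rfl htt.2
  have hbint : ∀ t ∈ Set.Icc t₀ t₁, IntervalIntegrable b volume t₀ t := fun t htt =>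
    (hb.mono (hsub t htt)).intervalIntegrable
  have hbuint : ∀ t ∈ Set.Icc t₀ t₁, IntervalIntegrable (fun s => b s * u s + c s) volume t₀ t :=
    fun t htt => (hbu.mono (hsub t htt)).intervalIntegrable
  set B : ℝ → ℝ := fun s => ∫ r in t₀..s, b r with hB
  set R : ℝ → ℝ := fun s => a + ∫ r in t₀..s, (b r * u r + c r) with hR
  have hBcont : ContinuousOn B (Set.Icc t₀ t₁) := by
    rw [← hIcc]
    exact intervalIntegral.continuousOn_primitive_interval
      ((hb.mono hIcc.subset).integrableOn_compact isCompact_uIcc |>.mono_set le_rfl)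
  have hRcont : ContinuousOn R (Set.Icc t₀ t₁) := by
    apply continuousOn_const.add
    rw [← hIcc]
    exact intervalIntegral.continuousOn_primitive_interval
      ((hbu.mono hIcc.subset).integrableOn_compact isCompact_uIcc |>.mono_set le_rfl)
  have hcC : ContinuousOn (fun r => Real.exp (-(B r)) * c r) (Set.Icc t₀ t₁) :=
    ((hBcont.neg).rexp).mul hc
  have hcCint : ∀ t ∈ Set.Icc t₀ t₁,
      IntervalIntegrable (fun r => Real.exp (-(B r)) * c r) volume t₀ t :=
    fun t htt => (hcC.mono (hsub t htt)).intervalIntegrable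
  set C : ℝ → ℝ := fun s => ∫ r in t₀..s, Real.exp (-(B r)) * c r with hC
  have hCcont : ContinuousOn C (Set.Icc t₀ t₁) := by
    rw [← hIcc]
    exact intervalIntegral.continuousOn_primitive_interval
      ((hcC.mono hIcc.subset).integrableOn_compact isCompact_uIcc |>.mono_set le_rfl)
  set φ : ℝ → ℝ := fun s => R s * Real.exp (-(B s)) - C s with hφ
  have hφcont : ContinuousOn φ (Set.Icc t₀ t₁) :=
    (hRcont.mul (hBcont.neg).rexp).sub hCcont
  -- derivatives at interior points
  have hint_eq : interior (Set.Icc t₀ t₁) = Set.Ioo t₀ t₁ := interior_Icc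
  have hderiv : ∀ s ∈ Set.Ioo t₀ t₁,
      HasDerivAt φ ((b s * u s + c s) * Real.exp (-(B s))
        + R s * (Real.exp (-(B s)) * -(b s)) - Real.exp (-(B s)) * c s) s := by
    intro s hs
    have hsmem : s ∈ Set.Icc t₀ t₁ := Set.Ioo_subset_Icc_self hs
    have hCA : ∀ g : ℝ → ℝ, ContinuousOn g (Set.Icc t₀ t₁) → ContinuousAt g s := by
      intro g hg
      exact hg.continuousAt (Icc_mem_nhds hs.1 hs.2)
    have hmeas : ∀ g : ℝ → ℝ, ContinuousOn g (Set.Icc t₀ t₁) →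
        StronglyMeasurableAtFilter g (nhds s) volume := by
      intro g hg
      exact ContinuousOn.stronglyMeasurableAtFilter isOpen_Ioo
        (hg.mono Set.Ioo_subset_Icc_self) s hs
    have hBd : HasDerivAt B (b s) s :=
      intervalIntegral.integral_hasDerivAt_right (hbint s hsmem) (hmeas b hb) (hCA b hb)
    have hRd : HasDerivAt R (b s * u s + c s) s := by
      have := intervalIntegral.integral_hasDerivAt_right (hbuint s hsmem) (hmeas _ hbu)
        (hCA _ hbu)
      have h2 := (hasDerivAt_const s a).add this
      rw [zero_add] at h2
      exact h2
    have hCd : HasDerivAt C (Real.exp (-(B s)) * c s) s :=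
      intervalIntegral.integral_hasDerivAt_right (hcCint s hsmem) (hmeas _ hcC) (hCA _ hcC)
    have hEd : HasDerivAt (fun r => Real.exp (-(B r))) (Real.exp (-(B s)) * -(b s)) s := by
      simpa using (hBd.neg).exp
    exact (hRd.mul hEd).sub hCd
  have hφanti : AntitoneOn φ (Set.Icc t₀ t₁) := by
    apply antitoneOn_of_hasDerivWithinAt_nonpos (convex_Icc t₀ t₁) hφcont
      (f' := fun s => (b s * u s + c s) * Real.exp (-(B s))
        + R s * (Real.exp (-(B s)) * -(b s)) - Real.exp (-(B s)) * c s)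
    · intro s hs
      rw [hint_eq] at hs
      exact (hderiv s hs).hasDerivWithinAt
    · intro s hs
      rw [hint_eq] at hs
      have hsmem : s ∈ Set.Icc t₀ t₁ := Set.Ioo_subset_Icc_self hs
      have h1 : u s ≤ R s := hbound s hsmem
      have h2 : 0 ≤ b s := hb0 s hsmem
      have h3 : 0 < Real.exp (-(B s)) := Real.exp_pos _
      nlinarith [mul_nonneg h2 (sub_nonneg.2 h1)]
  intro t htt
  have hφt : φ t ≤ φ t₀ := hφanti (Set.left_mem_Icc.2 ht) htt htt.1
  have hφt₀ : φ t₀ = a := by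
    simp [hφ, hR, hB, hC, intervalIntegral.integral_same]
  rw [hφt₀] at hφt
  -- φ t = R t * exp(-(B t)) - C t ≤ a
  have hexp : (0:ℝ) < Real.exp (B t) := Real.exp_pos _
  have hRt : R t ≤ (a + C t) * Real.exp (B t) := by
    have : R t * Real.exp (-(B t)) ≤ a + C t := by
      have := hφt
      simp only [hφ] at this
      linarith
    calc R t = R t * Real.exp (-(B t)) * Real.exp (B t) := by
          rw [mul_assoc, ← Real.exp_add]; simp
      _ ≤ (a + C t) * Real.exp (B t) := by
          exact mul_le_mul_of_nonneg_right this hexp.le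
  have hut : u t ≤ R t := hbound t htt
  have hfinal : (a + C t) * Real.exp (B t)
      = a * Real.exp (∫ s in t₀..t, b s)
        + ∫ τ in t₀..t, Real.exp (∫ s in τ..t, b s) * c τ := by
    have hCt : Real.exp (B t) * C t = ∫ τ in t₀..t, Real.exp (∫ s in τ..t, b s) * c τ := by
      rw [hC, ← intervalIntegral.integral_const_mul]
      apply intervalIntegral.integral_congr
      intro τ hτ
      rw [Set.uIcc_of_le htt.1] at hτ
      have hτmem : τ ∈ Set.Icc t₀ t₁ := ⟨hτ.1, hτ.2.trans htt.2⟩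
      have hBsub : (∫ s in τ..t, b s) = B t - B τ := by
        rw [hB]
        exact (intervalIntegral.integral_interval_sub_left (hbint t htt)
          (hbint τ hτmem)).symm
      simp only [hBsub]
      have : Real.exp (B t - B τ) = Real.exp (B t) * Real.exp (-(B τ)) := by
        rw [← Real.exp_add]; ring_nf
      rw [this]; ring
    rw [add_mul, hB]
    rw [mul_comm (C t) (Real.exp _), hCt]
  linarith [hRt, hut, hfinal ▸ hRt]

set_option maxHeartbeats 1000000 in
/-- Theorem 1: bound on the norm of a solution of
`ẋ = A(t)x + f(t,x) + F(t)` on `[t₀, t₁]`, in terms of the fundamental solution `W`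
(with inverse family `Winv`), the logarithmic derivative `p` of `‖W‖`, the
running condition number `k`, and a Lipschitz bound `l` for `f` on `Ω₁`. -/
theorem theorem1_solution_norm_bound
    {n : ℕ} (hn : 1 ≤ n)
    (A : ℝ → (EuclideanSpace ℝ (Fin n) →L[ℝ] EuclideanSpace ℝ (Fin n)))
    (hA : Continuous A)
    (f : ℝ → EuclideanSpace ℝ (Fin n) → EuclideanSpace ℝ (Fin n))
    (hf : Continuous fun q : ℝ × EuclideanSpace ℝ (Fin n) => f q.1 q.2)
    (F : ℝ → EuclideanSpace ℝ (Fin n)) (hF : Continuous F)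
    (W Winv : ℝ → (EuclideanSpace ℝ (Fin n) →L[ℝ] EuclideanSpace ℝ (Fin n)))
    (hWinv₁ : ∀ t, (W t).comp (Winv t) = ContinuousLinearMap.id ℝ (EuclideanSpace ℝ (Fin n)))
    (hWinv₂ : ∀ t, (Winv t).comp (W t) = ContinuousLinearMap.id ℝ (EuclideanSpace ℝ (Fin n)))
    (hWinv_cont : Continuous Winv)
    (hW_deriv : ∀ t, HasDerivAt W ((A t).comp (W t)) t)
    (t₀ t₁ : ℝ) (ht : t₀ ≤ t₁)
    (hWnorm : ‖W t₀‖ = 1)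
    (p : ℝ → ℝ) (hp : Continuous p)
    (hWp : ∀ t ∈ Set.Icc t₀ t₁, ‖W t‖ = Real.exp (∫ s in t₀..t, p s))
    (k : ℝ → ℝ) (hk : ∀ t, k t = ‖W t‖ * ‖Winv t‖)
    (Ω₁ : Set (EuclideanSpace ℝ (Fin n))) (hΩ₁ : (0 : EuclideanSpace ℝ (Fin n)) ∈ Ω₁)
    (l : ℝ → ℝ) (hl : Continuous l) (hl0 : ∀ t, 0 ≤ l t)
    (hLip : ∀ t ∈ Set.Icc t₀ t₁, ∀ y ∈ Ω₁, ‖f t y‖ ≤ l t * ‖y‖)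
    (x : ℝ → EuclideanSpace ℝ (Fin n))
    (hx : ∀ t ∈ Set.Icc t₀ t₁, HasDerivAt x (A t (x t) + f t (x t) + F t) t)
    (hxΩ : ∀ s ∈ Set.Icc t₀ t₁, x s ∈ Ω₁) :
    ∀ t ∈ Set.Icc t₀ t₁,
      ‖x t‖ ≤ ‖W t‖ * ‖(Winv t₀) (x t₀)‖ * Real.exp (∫ s in t₀..t, k s * l s)
        + ∫ τ in t₀..t, Real.exp (∫ s in τ..t, p s + k s * l s) * k τ * ‖F τ‖ := by
  have my_gronwall_integral := fun {a : ℝ} {b c u : ℝ → ℝ} => my_gronwall_integral ht (a := a) (b := b) (c := c) (u := u)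
  -- basic algebra of W and Winv as units
  have hmul₁ : ∀ t, W t * Winv t = 1 := fun t => by
    rw [ContinuousLinearMap.mul_def, hWinv₁, ContinuousLinearMap.one_def]
  have hmul₂ : ∀ t, Winv t * W t = 1 := fun t => by
    rw [ContinuousLinearMap.mul_def, hWinv₂, ContinuousLinearMap.one_def]
  let eunit : ℝ → (EuclideanSpace ℝ (Fin n) →L[ℝ] EuclideanSpace ℝ (Fin n))ˣ :=
    fun t => ⟨W t, Winv t, hmul₁ t, hmul₂ t⟩
  have hWinv_eq : Winv = Ring.inverse ∘ W :=
    funext fun s => (Ring.inverse_unit (eunit s)).symm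
  have hWcont : Continuous W :=
    continuous_iff_continuousAt.2 fun t => (hW_deriv t).continuousAt
  have hkcont : Continuous k := by
    have : k = fun t => ‖W t‖ * ‖Winv t‖ := funext hk
    rw [this]; exact hWcont.norm.mul hWinv_cont.norm
  -- derivative of Winv
  have hWinv_deriv : ∀ t, HasDerivAt Winv (-(Winv t * A t)) t := by
    intro t
    have h1 := (hasFDerivAt_ringInverse (𝕜 := ℝ) (eunit t)).comp_hasDerivAt t (hW_deriv t)
    rw [← hWinv_eq] at h1
    convert h1 using 1
    simp only [ContinuousLinearMap.neg_apply, ContinuousLinearMap.mulLeftRight_apply]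
    show -(Winv t * A t) = -(Winv t * ((A t).comp (W t)) * Winv t)
    have hAW : (A t).comp (W t) = A t * W t := rfl
    have h2 : Winv t * (A t * W t) * Winv t = Winv t * A t := by
      rw [mul_assoc (Winv t), mul_assoc (A t), hmul₁, mul_one]
    rw [hAW, h2]
    all_goals rfl
  -- the transformed solution y and its derivative
  set y : ℝ → EuclideanSpace ℝ (Fin n) := fun s => Winv s (x s) with hy
  have hxy : ∀ s, W s (y s) = x s := by
    intro s
    have := congrArg (fun T : EuclideanSpace ℝ (Fin n) →L[ℝ] EuclideanSpace ℝ (Fin n)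
      => T (x s)) (hWinv₁ s)
    simpa using this
  have hxcont : ContinuousOn x (Set.Icc t₀ t₁) :=
    fun s hs => ((hx s hs).continuousAt).continuousWithinAt
  have hycont : ContinuousOn y (Set.Icc t₀ t₁) :=
    hWinv_cont.continuousOn.clm_apply hxcont
  set g : ℝ → EuclideanSpace ℝ (Fin n) := fun s => Winv s (f s (x s) + F s) with hg
  have hfx : ContinuousOn (fun s => f s (x s)) (Set.Icc t₀ t₁) :=
    by have h := hf.comp_continuousOn (continuousOn_id.prodMk hxcont); exact h
  have hgcont : ContinuousOn g (Set.Icc t₀ t₁) :=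
    hWinv_cont.continuousOn.clm_apply (hfx.add hF.continuousOn)
  have hyderiv : ∀ s ∈ Set.Icc t₀ t₁, HasDerivAt y (g s) s := by
    intro s hs
    have h := (hWinv_deriv s).clm_apply (hx s hs)
    convert h using 1
    simp only [ContinuousLinearMap.neg_apply, ContinuousLinearMap.mul_apply, hg, map_add]
    show Winv s (f s (x s) + F s) = -(Winv s (A s (x s))) + Winv s (A s (x s) + f s (x s) + F s)
    rw [map_add, map_add, map_add]
    abel
    all_goals rfl
  have hsub : ∀ t ∈ Set.Icc t₀ t₁, Set.uIcc t₀ t ⊆ Set.Icc t₀ t₁ := by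
    intro t htt
    rw [Set.uIcc_of_le htt.1]
    exact Set.Icc_subset_Icc le_rfl htt.2
  have hFTC : ∀ t ∈ Set.Icc t₀ t₁, y t = y t₀ + ∫ s in t₀..t, g s := by
    intro t htt
    have h1 : ∫ s in t₀..t, g s = y t - y t₀ :=
      intervalIntegral.integral_eq_sub_of_hasDerivAt
        (fun s hs => hyderiv s (hsub t htt hs))
        ((hgcont.mono (hsub t htt)).intervalIntegrable)
    rw [h1]; abel
  -- the integral inequality for ‖y‖
  have hWnn : ∀ s, (0:ℝ) ≤ ‖W s‖ := fun s => norm_nonneg _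
  have hbound : ∀ t ∈ Set.Icc t₀ t₁,
      ‖y t‖ ≤ ‖y t₀‖ + ∫ s in t₀..t, (k s * l s * ‖y s‖ + ‖Winv s‖ * ‖F s‖) := by
    intro t htt
    rw [hFTC t htt]
    refine (norm_add_le _ _).trans (add_le_add_right ?_ _)
    have hgn : ∀ s ∈ Set.Icc t₀ t, ‖g s‖ ≤ k s * l s * ‖y s‖ + ‖Winv s‖ * ‖F s‖ := by
      intro s hs
      have hsmem : s ∈ Set.Icc t₀ t₁ := ⟨hs.1, hs.2.trans htt.2⟩
      have h1 : ‖g s‖ ≤ ‖Winv s‖ * ‖f s (x s) + F s‖ := (Winv s).le_opNorm _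
      have h2 : ‖f s (x s) + F s‖ ≤ l s * ‖x s‖ + ‖F s‖ :=
        (norm_add_le _ _).trans (add_le_add_left (hLip s hsmem _ (hxΩ s hsmem)) _)
      have h3 : ‖x s‖ ≤ ‖W s‖ * ‖y s‖ := by
        rw [← hxy s]; exact (W s).le_opNorm _
      have h4 : (0:ℝ) ≤ ‖Winv s‖ := norm_nonneg _
      have h5 : (0:ℝ) ≤ l s := hl0 s
      have h6 : k s = ‖W s‖ * ‖Winv s‖ := hk s
      calc ‖g s‖ ≤ ‖Winv s‖ * ‖f s (x s) + F s‖ := h1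
        _ ≤ ‖Winv s‖ * (l s * ‖x s‖ + ‖F s‖) := mul_le_mul_of_nonneg_left h2 h4
        _ ≤ ‖Winv s‖ * (l s * (‖W s‖ * ‖y s‖) + ‖F s‖) :=
            mul_le_mul_of_nonneg_left
              (add_le_add_left (mul_le_mul_of_nonneg_left h3 h5) _) h4
        _ = k s * l s * ‖y s‖ + ‖Winv s‖ * ‖F s‖ := by rw [h6]; ring
    calc ‖∫ s in t₀..t, g s‖ ≤ ∫ s in t₀..t, ‖g s‖ :=
          intervalIntegral.norm_integral_le_integral_norm htt.1
      _ ≤ ∫ s in t₀..t, (k s * l s * ‖y s‖ + ‖Winv s‖ * ‖F s‖) := by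
          apply intervalIntegral.integral_mono_on htt.1
          · exact ((hgcont.mono (hsub t htt)).norm).intervalIntegrable
          · exact ((((hkcont.mul hl).continuousOn.mul hycont.norm).add
              ((hWinv_cont.norm.mul hF.norm).continuousOn)).mono (hsub t htt)).intervalIntegrable
          · exact hgn
  -- apply Gronwall
  have hgron := my_gronwall_integral
    ((hkcont.mul hl).continuousOn)
    ((hWinv_cont.norm.mul hF.norm).continuousOn)
    hycont.norm
    (fun s _ => mul_nonneg (hk s ▸ mul_nonneg (norm_nonneg _) (norm_nonneg _)) (hl0 s))
    hbound
  -- assemble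
  intro t htt
  have hyb := hgron t htt
  have hxle : ‖x t‖ ≤ ‖W t‖ * ‖y t‖ := by
    rw [← hxy t]; exact (W t).le_opNorm _
  have hstep : ‖x t‖ ≤ ‖W t‖ * (‖y t₀‖ * Real.exp (∫ s in t₀..t, k s * l s)
      + ∫ τ in t₀..t, Real.exp (∫ s in τ..t, k s * l s) * (‖Winv τ‖ * ‖F τ‖)) :=
    hxle.trans (mul_le_mul_of_nonneg_left hyb (hWnn t))
  refine hstep.trans (le_of_eq ?_)
  rw [mul_add, ← mul_assoc]
  congr 1
  rw [← intervalIntegral.integral_const_mul]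
  apply intervalIntegral.integral_congr
  intro τ hτ
  dsimp only
  rw [Set.uIcc_of_le htt.1] at hτ
  have hτmem : τ ∈ Set.Icc t₀ t₁ := ⟨hτ.1, hτ.2.trans htt.2⟩
  have hpint : ∀ a b : ℝ, IntervalIntegrable p volume a b := fun a b => hp.intervalIntegrable a b
  have hklint : ∀ a b : ℝ, IntervalIntegrable (fun s => k s * l s) volume a b :=
    fun a b => (hkcont.mul hl).intervalIntegrable a b
  have hsplit : (∫ s in t₀..τ, p s) + ∫ s in τ..t, p s = ∫ s in t₀..t, p s :=
    intervalIntegral.integral_add_adjacent_intervals (hpint _ _) (hpint _ _)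
  have hadd : (∫ s in τ..t, (p s + k s * l s))
      = (∫ s in τ..t, p s) + ∫ s in τ..t, k s * l s :=
    intervalIntegral.integral_add (hpint _ _) (hklint _ _)
  rw [hWp t htt, hadd, ← hsplit, Real.exp_add, Real.exp_add, hk τ, hWp τ hτmem]
  ring
end

section
/- (Corollary 1, quantitative form.) In the setting of Theorem 1 with Ω₁ = E (global Lipschitz bound ‖f(t,y)‖ ≤ l(t)‖y‖ for all y ∈ E) and F ≡ 0, suppose in addition that the map w(t) = ‖W t‖ has a derivative w′(t) at every t ≥ t₀ and that ‖W t‖ · k(t) · l(t) + w′(t) ≤ 0 for all t ≥ t₀. Then the function t ↦ ‖W t‖ · exp(∫_{t₀}^{t} k(s) l(s) ds) is nonincreasing on [t₀, ∞), and every solution x of ẋ = A(t)x + f(t,x) satisfies ‖x(t)‖ ≤ ‖(W t₀)⁻¹ (x t₀)‖ for all t ≥ t₀; in particular the trivial solution is Lyapunov stable. -/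
/-- Corollary 1 (quantitative form): if `‖W t‖ k(t) l(t) + (d/dt)‖W t‖ ≤ 0` for all
`t ≥ t₀`, then `t ↦ ‖W t‖ exp(∫_{t₀}^t k l)` is nonincreasing on `[t₀, ∞)` and every
solution of `ẋ = A(t)x + f(t,x)` satisfies `‖x(t)‖ ≤ ‖(W t₀)⁻¹ x(t₀)‖` for `t ≥ t₀`. -/
theorem corollary1_quantitative
    {n : ℕ} (hn : 1 ≤ n)
    (A : ℝ → (EuclideanSpace ℝ (Fin n) →L[ℝ] EuclideanSpace ℝ (Fin n)))
    (hA : Continuous A)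
    (f : ℝ → EuclideanSpace ℝ (Fin n) → EuclideanSpace ℝ (Fin n))
    (hf : Continuous fun q : ℝ × EuclideanSpace ℝ (Fin n) => f q.1 q.2)
    (W Winv : ℝ → (EuclideanSpace ℝ (Fin n) →L[ℝ] EuclideanSpace ℝ (Fin n)))
    (hWinv₁ : ∀ t, (W t).comp (Winv t) = ContinuousLinearMap.id ℝ (EuclideanSpace ℝ (Fin n)))
    (hWinv₂ : ∀ t, (Winv t).comp (W t) = ContinuousLinearMap.id ℝ (EuclideanSpace ℝ (Fin n)))
    (hWinv_cont : Continuous Winv)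
    (hW_deriv : ∀ t, HasDerivAt W ((A t).comp (W t)) t)
    (t₀ : ℝ) (hWnorm : ‖W t₀‖ = 1)
    (k : ℝ → ℝ) (hk : ∀ t, k t = ‖W t‖ * ‖Winv t‖)
    (l : ℝ → ℝ) (hl : Continuous l) (hl0 : ∀ t, 0 ≤ l t)
    (hLip : ∀ t ≥ t₀, ∀ y : EuclideanSpace ℝ (Fin n), ‖f t y‖ ≤ l t * ‖y‖)
    (w' : ℝ → ℝ)
    (hw' : ∀ t ≥ t₀, HasDerivAt (fun s => ‖W s‖) (w' t) t)
    (hdecay : ∀ t ≥ t₀, ‖W t‖ * k t * l t + w' t ≤ 0) :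
    AntitoneOn (fun t => ‖W t‖ * Real.exp (∫ s in t₀..t, k s * l s)) (Set.Ici t₀) ∧
      ∀ x : ℝ → EuclideanSpace ℝ (Fin n),
        (∀ t ≥ t₀, HasDerivAt x (A t (x t) + f t (x t)) t) →
        ∀ t ≥ t₀, ‖x t‖ ≤ ‖(Winv t₀) (x t₀)‖ := by
  -- ring versions of the inverse equations
  have h1 : ∀ t, W t * Winv t = 1 := hWinv₁
  have h2 : ∀ t, Winv t * W t = 1 := hWinv₂
  have hWcont : Continuous W := continuous_iff_continuousAt.2 fun t => (hW_deriv t).continuousAt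
  have hklcont : Continuous fun s => k s * l s := by
    have : (fun s => k s * l s) = fun s => (‖W s‖ * ‖Winv s‖) * l s := by
      funext s; rw [hk]
    rw [this]
    exact (hWcont.norm.mul hWinv_cont.norm).mul hl
  have hI : ∀ t, HasDerivAt (fun u => ∫ s in t₀..u, k s * l s) (k t * l t) t := fun t =>
    intervalIntegral.integral_hasDerivAt_right (hklcont.intervalIntegrable _ _)
      (hklcont.stronglyMeasurableAtFilter _ _) hklcont.continuousAt
  have hIcont : Continuous fun u => ∫ s in t₀..u, k s * l s :=
    continuous_iff_continuousAt.2 fun t => (hI t).continuousAt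
  have hk0 : ∀ t, 0 ≤ k t := fun t => (hk t) ▸ mul_nonneg (norm_nonneg _) (norm_nonneg _)
  -- Part 1
  have part1 : AntitoneOn (fun t => ‖W t‖ * Real.exp (∫ s in t₀..t, k s * l s)) (Set.Ici t₀) := by
    have hφ : ∀ t ≥ t₀, HasDerivAt (fun t => ‖W t‖ * Real.exp (∫ s in t₀..t, k s * l s))
        (w' t * Real.exp (∫ s in t₀..t, k s * l s) +
          ‖W t‖ * (Real.exp (∫ s in t₀..t, k s * l s) * (k t * l t))) t := fun t ht =>
      (hw' t ht).mul ((hI t).exp)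
    apply antitoneOn_of_deriv_nonpos (convex_Ici t₀)
    · exact (hWcont.norm.mul (Real.continuous_exp.comp hIcont)).continuousOn
    · intro t ht
      rw [interior_Ici] at ht
      exact (hφ t (le_of_lt ht)).differentiableAt.differentiableWithinAt
    · intro t ht
      rw [interior_Ici] at ht
      rw [(hφ t ht.le).deriv]
      have h1 := hdecay t ht.le
      have h2 := Real.exp_pos (∫ s in t₀..t, k s * l s)
      nlinarith [hk0 t, hl0 t, norm_nonneg (W t)]
  refine ⟨part1, ?_⟩
  -- the inverse has derivative -(Winv t) ∘ (A t)
  have hWinv_deriv : ∀ s, HasDerivAt Winv (-((Winv s).comp (A s))) s := by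
    intro s
    have hu : (Ring.inverse ∘ W) = Winv := by
      funext r
      exact (Ring.inverse_unit (⟨W r, Winv r, h1 r, h2 r⟩ :
        (EuclideanSpace ℝ (Fin n) →L[ℝ] EuclideanSpace ℝ (Fin n))ˣ)).trans rfl
    have hF := hasFDerivAt_ringInverse (𝕜 := ℝ) (⟨W s, Winv s, h1 s, h2 s⟩ :
      (EuclideanSpace ℝ (Fin n) →L[ℝ] EuclideanSpace ℝ (Fin n))ˣ)
    have hD := hF.comp_hasDerivAt s (hW_deriv s)
    rw [hu] at hD
    refine hD.congr_deriv (Eq.symm ?_)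
    simp only [ContinuousLinearMap.neg_apply, ContinuousLinearMap.mulLeftRight_apply]
    show -((Winv s) * (A s)) = -(Winv s * ((A s) * W s) * Winv s)
    rw [mul_assoc (Winv s), mul_assoc (A s), h1 s, mul_one]
  intro x hx t ht
  set z : ℝ → EuclideanSpace ℝ (Fin n) := fun s => Winv s (x s) with hzdef
  have hxz : ∀ s, x s = W s (z s) := by
    intro s
    have := congrArg (fun T : EuclideanSpace ℝ (Fin n) →L[ℝ] EuclideanSpace ℝ (Fin n) =>
      T (x s)) (hWinv₁ s)
    simpa [ContinuousLinearMap.comp_apply] using this.symm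
  have hz : ∀ s, s ≥ t₀ → HasDerivAt z (Winv s (f s (x s))) s := by
    intro s hs
    have := (hWinv_deriv s).clm_apply (hx s hs)
    refine this.congr_deriv (Eq.symm ?_)
    simp [ContinuousLinearMap.neg_apply, map_add]
  set δ := ‖(Winv t₀) (x t₀)‖ with hδdef
  set I := ∫ s in t₀..t, k s * l s with hIdef
  -- Gronwall with ε-room
  have key : ∀ ε > (0:ℝ), ‖z t‖ ≤ (δ + ε) * Real.exp (I + ε * (t - t₀)) := by
    intro ε hε
    set B : ℝ → ℝ := fun u => (δ + ε) * Real.exp ((∫ s in t₀..u, k s * l s) + ε * (u - t₀))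
      with hBdef
    have hBpos : ∀ u, 0 < B u := fun u =>
      mul_pos (by positivity) (Real.exp_pos _)
    have hB : ∀ u, HasDerivAt B ((k u * l u + ε) * B u) u := by
      intro u
      have h := (((hI u).add (((hasDerivAt_id u).sub_const t₀).const_mul ε)).exp).const_mul
        (δ + ε)
      refine h.congr_deriv (Eq.symm ?_)
      simp only [hBdef, id_eq, Pi.add_apply]
      ring
    have hzcont : ContinuousOn z (Set.Icc t₀ t) := fun u hu =>
      ((hz u hu.1).continuousAt).continuousWithinAt
    have hzderiv : ∀ u ∈ Set.Ico t₀ t,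
        HasDerivWithinAt z (Winv u (f u (x u))) (Set.Ici u) u := fun u hu =>
      ((hz u hu.1).hasDerivWithinAt)
    have ha : ‖z t₀‖ ≤ B t₀ := by
      simp only [hBdef, intervalIntegral.integral_same, sub_self, mul_zero, add_zero,
        Real.exp_zero, mul_one]
      simp only [hzdef, ← hδdef]
      linarith
    have bound : ∀ u ∈ Set.Ico t₀ t, ‖z u‖ = B u →
        ‖Winv u (f u (x u))‖ < (k u * l u + ε) * B u := by
      intro u hu heq
      have e1 : ‖Winv u (f u (x u))‖ ≤ ‖Winv u‖ * ‖f u (x u)‖ :=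
        ContinuousLinearMap.le_opNorm _ _
      have e2 : ‖f u (x u)‖ ≤ l u * ‖x u‖ := hLip u hu.1 _
      have e3 : ‖x u‖ ≤ ‖W u‖ * ‖z u‖ := by
        rw [hxz u]; exact ContinuousLinearMap.le_opNorm _ _
      have e4 : ‖Winv u (f u (x u))‖ ≤ k u * l u * ‖z u‖ := by
        rw [hk]
        calc ‖Winv u (f u (x u))‖ ≤ ‖Winv u‖ * (l u * (‖W u‖ * ‖z u‖)) := by
              refine e1.trans (mul_le_mul_of_nonneg_left ?_ (norm_nonneg _))
              exact e2.trans (mul_le_mul_of_nonneg_left e3 (hl0 u))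
          _ = ‖W u‖ * ‖Winv u‖ * l u * ‖z u‖ := by ring
          _ = _ := by ring
      rw [heq] at e4
      have := hBpos u
      nlinarith [hk0 u, hl0 u]
    have := image_norm_le_of_norm_deriv_right_lt_deriv_boundary hzcont hzderiv ha hB bound
      (Set.right_mem_Icc.2 ht)
    simpa [hBdef, ← hIdef] using this
  have hzle : ‖z t‖ ≤ δ * Real.exp I := by
    have hlim : Filter.Tendsto (fun ε : ℝ => (δ + ε) * Real.exp (I + ε * (t - t₀)))
        (nhdsWithin 0 (Set.Ioi 0)) (nhds (δ * Real.exp I)) := by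
      have hc : ContinuousAt (fun ε : ℝ => (δ + ε) * Real.exp (I + ε * (t - t₀))) 0 := by
        fun_prop
      have h := hc.tendsto.mono_left (nhdsWithin_le_nhds (s := Set.Ioi (0:ℝ)))
      simpa using h
    exact ge_of_tendsto hlim (Filter.eventually_of_mem self_mem_nhdsWithin fun ε hε =>
      key ε hε)
  -- conclusion
  have hφ := part1 (Set.self_mem_Ici) ht ht
  simp only [intervalIntegral.integral_same, Real.exp_zero, mul_one, hWnorm, ← hIdef] at hφ
  have hxb : ‖x t‖ ≤ ‖W t‖ * ‖z t‖ := by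
    rw [hxz t]; exact ContinuousLinearMap.le_opNorm _ _
  have hδ0 : (0:ℝ) ≤ δ := norm_nonneg _
  calc ‖x t‖ ≤ ‖W t‖ * ‖z t‖ := hxb
    _ ≤ ‖W t‖ * (δ * Real.exp I) := mul_le_mul_of_nonneg_left hzle (norm_nonneg _)
    _ = (‖W t‖ * Real.exp I) * δ := by ring
    _ ≤ 1 * δ := mul_le_mul_of_nonneg_right hφ hδ0
    _ = δ := one_mul δ
end

section
/- (Corollary 2, homogeneous part.) In the setting of Theorem 1 with Ω₁ = E (global Lipschitz bound ‖f(t,y)‖ ≤ l(t)‖y‖ for all y ∈ E) and F ≡ 0, suppose there is ν > 0 with p(t) + k(t) l(t) ≤ −ν for all t ≥ t₀. Then every solution x of ẋ = A(t)x + f(t,x) satisfies ‖x(t)‖ ≤ ‖(W t₀)⁻¹ (x t₀)‖ · exp(−ν (t − t₀)) for all t ≥ t₀; in particular the trivial solution is exponentially stable. -/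
open Set Filter intervalIntegral
open scoped Topology

set_option maxHeartbeats 1000000 in
set_option synthInstance.maxHeartbeats 200000 in

/-- Corollary 2, homogeneous part: if `p(t) + k(t) l(t) ≤ -ν < 0` for all `t ≥ t₀`,
then every solution of `ẋ = A(t)x + f(t,x)` satisfies
`‖x(t)‖ ≤ ‖(W t₀)⁻¹ x(t₀)‖ exp(-ν (t - t₀))` for all `t ≥ t₀`. -/
theorem corollary2_homogeneous
    {n : ℕ} (hn : 1 ≤ n)
    (A : ℝ → (EuclideanSpace ℝ (Fin n) →L[ℝ] EuclideanSpace ℝ (Fin n)))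
    (hA : Continuous A)
    (f : ℝ → EuclideanSpace ℝ (Fin n) → EuclideanSpace ℝ (Fin n))
    (hf : Continuous fun q : ℝ × EuclideanSpace ℝ (Fin n) => f q.1 q.2)
    (W Winv : ℝ → (EuclideanSpace ℝ (Fin n) →L[ℝ] EuclideanSpace ℝ (Fin n)))
    (hWinv₁ : ∀ t, (W t).comp (Winv t) = ContinuousLinearMap.id ℝ (EuclideanSpace ℝ (Fin n)))
    (hWinv₂ : ∀ t, (Winv t).comp (W t) = ContinuousLinearMap.id ℝ (EuclideanSpace ℝ (Fin n)))
    (hWinv_cont : Continuous Winv)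
    (hW_deriv : ∀ t, HasDerivAt W ((A t).comp (W t)) t)
    (t₀ : ℝ) (hWnorm : ‖W t₀‖ = 1)
    (p : ℝ → ℝ) (hp : Continuous p)
    (hWp : ∀ t ≥ t₀, ‖W t‖ = Real.exp (∫ s in t₀..t, p s))
    (k : ℝ → ℝ) (hk : ∀ t, k t = ‖W t‖ * ‖Winv t‖)
    (l : ℝ → ℝ) (hl : Continuous l) (hl0 : ∀ t, 0 ≤ l t)
    (hLip : ∀ t ≥ t₀, ∀ y : EuclideanSpace ℝ (Fin n), ‖f t y‖ ≤ l t * ‖y‖)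
    (ν : ℝ) (hν : 0 < ν)
    (hdecay : ∀ t ≥ t₀, p t + k t * l t ≤ -ν)
    (x : ℝ → EuclideanSpace ℝ (Fin n))
    (hx : ∀ t ≥ t₀, HasDerivAt x (A t (x t) + f t (x t)) t) :
    ∀ t ≥ t₀, ‖x t‖ ≤ ‖(Winv t₀) (x t₀)‖ * Real.exp (-ν * (t - t₀)) := by
  have hWcont : Continuous W := continuous_iff_continuousAt.2 fun t => (hW_deriv t).continuousAt
  have hkcont : Continuous k := by
    have : k = fun t => ‖W t‖ * ‖Winv t‖ := funext hk
    rw [this]; exact hWcont.norm.mul hWinv_cont.norm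
  have hkl_cont : Continuous fun t => k t * l t := hkcont.mul hl
  -- units
  have hmul1 : ∀ t, W t * Winv t = 1 := fun t => hWinv₁ t
  have hmul2 : ∀ t, Winv t * W t = 1 := fun t => hWinv₂ t
  set U : ℝ → (EuclideanSpace ℝ (Fin n) →L[ℝ] EuclideanSpace ℝ (Fin n))ˣ :=
    fun t => ⟨W t, Winv t, hmul1 t, hmul2 t⟩ with hU
  -- derivative of Winv
  have hWinv_deriv : ∀ t, HasDerivAt Winv (-((Winv t).comp (A t))) t := by
    intro t
    have h2 := (hasFDerivAt_ringInverse (𝕜 := ℝ) (U t)).comp_hasDerivAt t (hW_deriv t)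
    have heq : Ring.inverse ∘ W = Winv := by
      funext s
      exact Ring.inverse_unit (U s)
    rw [heq] at h2
    refine h2.congr_deriv ?_
    have : ((U t)⁻¹ : _) = Winv t := rfl
    simp only [ContinuousLinearMap.neg_apply, ContinuousLinearMap.mulLeftRight_apply, this]
    rw [ContinuousLinearMap.mul_def, ContinuousLinearMap.mul_def, ContinuousLinearMap.comp_assoc,
      ContinuousLinearMap.comp_assoc, hWinv₁ t, ContinuousLinearMap.comp_id]
  -- derivative of g
  have hg_deriv : ∀ t ≥ t₀, HasDerivAt (fun s => Winv s (x s)) (Winv t (f t (x t))) t := by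
    intro t ht
    have h := (hWinv_deriv t).clm_apply (hx t ht)
    refine h.congr_deriv ?_
    simp [map_add]
  -- x t = W t (g t)
  have hxg : ∀ t, x t = W t (Winv t (x t)) := by
    intro t
    have := ContinuousLinearMap.ext_iff.1 (hWinv₁ t) (x t)
    simpa using this.symm
  set C := ‖Winv t₀ (x t₀)‖ with hC
  have hg_bound : ∀ T ≥ t₀, ‖Winv T (x T)‖ ≤ C * Real.exp (∫ s in t₀..T, k s * l s) := by
    intro T hT
    have key : ∀ ε > (0:ℝ), ‖Winv T (x T)‖ ≤
        (C + ε) * Real.exp ((∫ s in t₀..T, k s * l s) + ε * (T - t₀)) := by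
      intro ε hε
      set B : ℝ → ℝ := fun t => (C + ε) * Real.exp ((∫ s in t₀..t, k s * l s) + ε * (t - t₀))
        with hBdef
      have hCε : (0:ℝ) < C + ε := add_pos_of_nonneg_of_pos (norm_nonneg _) hε
      have hBpos : ∀ t, 0 < B t := fun t => mul_pos hCε (Real.exp_pos _)
      have hB' : ∀ t, HasDerivAt B ((k t * l t + ε) * B t) t := by
        intro t
        have hint : HasDerivAt (fun u => ∫ s in t₀..u, k s * l s) (k t * l t) t :=
          intervalIntegral.integral_hasDerivAt_right (hkl_cont.intervalIntegrable _ _)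
            (hkl_cont.stronglyMeasurableAtFilter _ _) hkl_cont.continuousAt
        have hlin : HasDerivAt (fun u : ℝ => ε * (u - t₀)) ε t := by
          simpa using ((hasDerivAt_id t).sub_const t₀).const_mul ε
        have h := ((hint.add hlin).exp).const_mul (C + ε)
        refine h.congr_deriv ?_
        simp only [hBdef, Pi.add_apply]
        ring
      have hcont : ContinuousOn (fun s => Winv s (x s)) (Icc t₀ T) := fun s hs =>
        ((hg_deriv s hs.1).continuousAt).continuousWithinAt
      have hderiv : ∀ s ∈ Ico t₀ T,
          HasDerivWithinAt (fun u => Winv u (x u)) (Winv s (f s (x s))) (Ici s) s :=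
        fun s hs => (hg_deriv s hs.1).hasDerivWithinAt
      have ha : ‖Winv t₀ (x t₀)‖ ≤ B t₀ := by
        simp only [hBdef, intervalIntegral.integral_same, sub_self, mul_zero, add_zero,
          Real.exp_zero, mul_one]
        linarith
      have hbound : ∀ s ∈ Ico t₀ T, ‖Winv s (x s)‖ = B s →
          ‖Winv s (f s (x s))‖ < (k s * l s + ε) * B s := by
        intro s hs heq
        have h1 : ‖Winv s (f s (x s))‖ ≤ ‖Winv s‖ * ‖f s (x s)‖ :=
          (Winv s).le_opNorm _
        have h2 : ‖f s (x s)‖ ≤ l s * ‖x s‖ := hLip s hs.1 _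
        have h3 : ‖x s‖ ≤ ‖W s‖ * ‖Winv s (x s)‖ := by
          have h3' := (W s).le_opNorm (Winv s (x s))
          rwa [← hxg s] at h3'
        have h4 : ‖Winv s (f s (x s))‖ ≤ k s * l s * B s := by
          rw [hk s]
          calc ‖Winv s (f s (x s))‖ ≤ ‖Winv s‖ * ‖f s (x s)‖ := h1
            _ ≤ ‖Winv s‖ * (l s * ‖x s‖) :=
                mul_le_mul_of_nonneg_left h2 (norm_nonneg _)
            _ ≤ ‖Winv s‖ * (l s * (‖W s‖ * B s)) := by
                apply mul_le_mul_of_nonneg_left _ (norm_nonneg _)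
                apply mul_le_mul_of_nonneg_left _ (hl0 s)
                rw [← heq]; exact h3
            _ = ‖W s‖ * ‖Winv s‖ * l s * B s := by ring
        have hB := hBpos s
        nlinarith
      have := image_norm_le_of_norm_deriv_right_lt_deriv_boundary hcont hderiv ha hB' hbound
        (right_mem_Icc.2 hT)
      simpa [hBdef] using this
    -- let ε → 0⁺
    have htend : Tendsto
        (fun ε : ℝ => (C + ε) * Real.exp ((∫ s in t₀..T, k s * l s) + ε * (T - t₀)))
        (𝓝[>] (0:ℝ)) (𝓝 (C * Real.exp (∫ s in t₀..T, k s * l s))) := by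
      have hcε : Continuous
          (fun ε : ℝ => (C + ε) * Real.exp ((∫ s in t₀..T, k s * l s) + ε * (T - t₀))) :=
        (continuous_const.add continuous_id).mul (Real.continuous_exp.comp
          (continuous_const.add (continuous_id.mul continuous_const)))
      have := hcε.tendsto 0
      simp only [add_zero, zero_mul] at this
      exact this.mono_left nhdsWithin_le_nhds
    exact ge_of_tendsto htend (eventually_mem_nhdsWithin.mono fun ε hε => key ε hε)
  -- final assembly
  intro t ht
  have hW_eq : ‖W t‖ = Real.exp (∫ s in t₀..t, p s) := hWp t ht
  calc ‖x t‖ ≤ ‖W t‖ * ‖Winv t (x t)‖ := by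
        have h' := (W t).le_opNorm (Winv t (x t))
        rwa [← hxg t] at h'
    _ ≤ Real.exp (∫ s in t₀..t, p s) * (C * Real.exp (∫ s in t₀..t, k s * l s)) := by
        rw [hW_eq]
        exact mul_le_mul_of_nonneg_left (hg_bound t ht) (Real.exp_pos _).le
    _ = C * Real.exp ((∫ s in t₀..t, p s) + ∫ s in t₀..t, k s * l s) := by
        rw [Real.exp_add]; ring
    _ = C * Real.exp (∫ s in t₀..t, (p s + k s * l s)) := by
        rw [intervalIntegral.integral_add (hp.intervalIntegrable _ _)
          (hkl_cont.intervalIntegrable _ _)]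
    _ ≤ C * Real.exp (-ν * (t - t₀)) := by
        apply mul_le_mul_of_nonneg_left _ (norm_nonneg _)
        apply Real.exp_le_exp.2
        have hmono : (∫ s in t₀..t, (p s + k s * l s)) ≤ ∫ s in t₀..t, (-ν : ℝ) := by
          apply intervalIntegral.integral_mono_on ht
            ((hp.add hkl_cont).intervalIntegrable _ _) (intervalIntegrable_const)
          exact fun s hs => hdecay s hs.1
        rw [intervalIntegral.integral_const, smul_eq_mul] at hmono
        linarith [hmono]
end

section
/- (Corollary 2, forced part.) In the setting of Theorem 1 with Ω₁ = E (global Lipschitz bound ‖f(t,y)‖ ≤ l(t)‖y‖ for all y ∈ E), suppose there are constants ν > 0, k̂ ≥ 1, F̂ ≥ 0 with p(t) + k(t) l(t) ≤ −ν, k(t) ≤ k̂ and ‖F t‖ ≤ F̂ for all t ≥ t₀. Then every solution x of ẋ = A(t)x + f(t,x) + F(t) satisfies ‖x(t)‖ ≤ ‖(W t₀)⁻¹ (x t₀)‖ · exp(−ν (t − t₀)) + (F̂ k̂ / ν)(1 − exp(−ν (t − t₀))) for all t ≥ t₀; in particular limsup_{t → ∞} ‖x(t)‖ ≤ F̂ k̂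 / ν. -/
open Filter Set intervalIntegral Real

/-- Corollary 2, forced part: if `p(t) + k(t) l(t) ≤ -ν < 0`, `k(t) ≤ k̂` and
`‖F t‖ ≤ F̂` for all `t ≥ t₀`, then every solution of `ẋ = A(t)x + f(t,x) + F(t)`
satisfies `‖x(t)‖ ≤ ‖(W t₀)⁻¹ x(t₀)‖ e^{-ν(t-t₀)} + (F̂ k̂ / ν)(1 - e^{-ν(t-t₀)})`,
and in particular `limsup_{t→∞} ‖x(t)‖ ≤ F̂ k̂ / ν`. -/
theorem corollary2_forced
    {n : ℕ} (hn : 1 ≤ n)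
    (A : ℝ → (EuclideanSpace ℝ (Fin n) →L[ℝ] EuclideanSpace ℝ (Fin n)))
    (hA : Continuous A)
    (f : ℝ → EuclideanSpace ℝ (Fin n) → EuclideanSpace ℝ (Fin n))
    (hf : Continuous fun q : ℝ × EuclideanSpace ℝ (Fin n) => f q.1 q.2)
    (F : ℝ → EuclideanSpace ℝ (Fin n)) (hF : Continuous F)
    (W Winv : ℝ → (EuclideanSpace ℝ (Fin n) →L[ℝ] EuclideanSpace ℝ (Fin n)))
    (hWinv₁ : ∀ t, (W t).comp (Winv t) = ContinuousLinearMap.id ℝ (EuclideanSpace ℝ (Fin n)))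
    (hWinv₂ : ∀ t, (Winv t).comp (W t) = ContinuousLinearMap.id ℝ (EuclideanSpace ℝ (Fin n)))
    (hWinv_cont : Continuous Winv)
    (hW_deriv : ∀ t, HasDerivAt W ((A t).comp (W t)) t)
    (t₀ : ℝ) (hWnorm : ‖W t₀‖ = 1)
    (p : ℝ → ℝ) (hp : Continuous p)
    (hWp : ∀ t ≥ t₀, ‖W t‖ = Real.exp (∫ s in t₀..t, p s))
    (k : ℝ → ℝ) (hk : ∀ t, k t = ‖W t‖ * ‖Winv t‖)
    (l : ℝ → ℝ) (hl : Continuous l) (hl0 : ∀ t, 0 ≤ l t)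
    (hLip : ∀ t ≥ t₀, ∀ y : EuclideanSpace ℝ (Fin n), ‖f t y‖ ≤ l t * ‖y‖)
    (ν khat Fhat : ℝ) (hν : 0 < ν) (hkhat : 1 ≤ khat) (hFhat : 0 ≤ Fhat)
    (hdecay : ∀ t ≥ t₀, p t + k t * l t ≤ -ν)
    (hkb : ∀ t ≥ t₀, k t ≤ khat)
    (hFb : ∀ t ≥ t₀, ‖F t‖ ≤ Fhat)
    (x : ℝ → EuclideanSpace ℝ (Fin n))
    (hx : ∀ t ≥ t₀, HasDerivAt x (A t (x t) + f t (x t) + F t) t) :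
    (∀ t ≥ t₀, ‖x t‖ ≤ ‖(Winv t₀) (x t₀)‖ * Real.exp (-ν * (t - t₀))
        + (Fhat * khat / ν) * (1 - Real.exp (-ν * (t - t₀)))) ∧
      Filter.limsup (fun t => ‖x t‖) Filter.atTop ≤ Fhat * khat / ν := by
  have hWid : ∀ s v, W s (Winv s v) = v := fun s v => by
    simpa using ContinuousLinearMap.ext_iff.mp (hWinv₁ s) v
  -- derivative of Winv
  have hWinv_deriv : ∀ t, HasDerivAt Winv (-((Winv t).comp (A t))) t := by
    intro t
    let U : ℝ → (EuclideanSpace ℝ (Fin n) →L[ℝ] EuclideanSpace ℝ (Fin n))ˣ := fun s =>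
      ⟨W s, Winv s,
        (ContinuousLinearMap.mul_def (W s) (Winv s)).trans
          ((hWinv₁ s).trans ContinuousLinearMap.one_def.symm),
        (ContinuousLinearMap.mul_def (Winv s) (W s)).trans
          ((hWinv₂ s).trans ContinuousLinearMap.one_def.symm)⟩
    have h1 := (hasFDerivAt_ringInverse (𝕜 := ℝ) (U t)).comp_hasDerivAt t (hW_deriv t)
    have h2 : Winv = fun s => Ring.inverse (W s) := by
      funext s
      exact (Ring.inverse_unit (U s)).symm
    have h3 : Ring.inverse (W t) = Winv t := Ring.inverse_unit (U t)
    rw [h2]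
    refine h1.congr_deriv ?_
    ext v
    simp [U, h3, ContinuousLinearMap.mul_apply, hWid]
  have hxcont : ∀ s, t₀ ≤ s → ContinuousAt x s := fun s hs => (hx s hs).continuousAt
  -- derivative of y = Winv • x
  have hy' : ∀ t, t₀ ≤ t →
      HasDerivAt (fun s => Winv s (x s)) (Winv t (f t (x t) + F t)) t := by
    intro t ht
    have h := (hWinv_deriv t).clm_apply (hx t ht)
    refine h.congr_deriv ?_
    simp only [ContinuousLinearMap.neg_apply, ContinuousLinearMap.comp_apply, map_add]
    abel
  -- the auxiliary functions
  set g : ℝ → ℝ := fun s => ‖Winv s‖ * (l s * ‖x (max s t₀)‖ + Fhat) with hg_def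
  have hxc : Continuous fun s => x (max s t₀) := by
    rw [continuous_iff_continuousAt]
    intro s
    have hm : ContinuousAt (fun s : ℝ => max s t₀) s :=
      (continuous_id.max continuous_const).continuousAt
    exact ContinuousAt.comp (hxcont (max s t₀) (le_max_right _ _)) hm
  have hgc : Continuous g := (hWinv_cont.norm).mul ((hl.mul hxc.norm).add continuous_const)
  have hg0 : ∀ s, 0 ≤ g s := fun s =>
    mul_nonneg (norm_nonneg _) (add_nonneg (mul_nonneg (hl0 s) (norm_nonneg _)) hFhat)
  set P : ℝ → ℝ := fun t => ∫ s in t₀..t, p s with hP_def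
  set r : ℝ → ℝ := fun t => ‖Winv t₀ (x t₀)‖ + ∫ s in t₀..t, g s with hr_def
  set z : ℝ → ℝ := fun t => Real.exp (P t) * r t with hz_def
  have hPd : ∀ t, HasDerivAt P (p t) t := fun t => (hp.integral_hasStrictDerivAt t₀ t).hasDerivAt
  have hrd : ∀ t, HasDerivAt r (g t) t := fun t =>
    ((hgc.integral_hasStrictDerivAt t₀ t).hasDerivAt).const_add _
  have hzd : ∀ t, HasDerivAt z (p t * Real.exp (P t) * r t + Real.exp (P t) * g t) t := by
    intro t
    have := ((hPd t).exp).mul (hrd t)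
    refine this.congr_deriv ?_
    ring
  -- integral representation of y
  set φ : ℝ → EuclideanSpace ℝ (Fin n) := fun s => Winv s (f s (x s) + F s) with hφ_def
  have hφcont : ∀ s, t₀ ≤ s → ContinuousAt φ s := by
    intro s hs
    have hinner : ContinuousAt (fun s => f s (x s) + F s) s :=
      (hf.continuousAt.comp ((continuousAt_id).prodMk (hxcont s hs))).add hF.continuousAt
    exact (isBoundedBilinearMap_apply (𝕜 := ℝ)).continuous.continuousAt.comp
      ((hWinv_cont.continuousAt).prodMk hinner)
  have hφint : ∀ t, t₀ ≤ t → IntervalIntegrable φ MeasureTheory.volume t₀ t := by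
    intro t ht
    apply ContinuousOn.intervalIntegrable
    intro s hs
    rw [uIcc_of_le ht] at hs
    exact (hφcont s hs.1).continuousWithinAt
  have hyeq : ∀ t, t₀ ≤ t → (∫ s in t₀..t, φ s) = Winv t (x t) - Winv t₀ (x t₀) := by
    intro t ht
    apply intervalIntegral.integral_eq_sub_of_hasDerivAt
    · intro s hs
      rw [uIcc_of_le ht] at hs
      exact hy' s hs.1
    · exact hφint t ht
  -- pointwise bound ‖φ s‖ ≤ g s  for s ≥ t₀
  have hφg : ∀ s, t₀ ≤ s → ‖φ s‖ ≤ g s := by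
    intro s hs
    have h1 : ‖φ s‖ ≤ ‖Winv s‖ * ‖f s (x s) + F s‖ := (Winv s).le_opNorm _
    have h2 : ‖f s (x s) + F s‖ ≤ l s * ‖x s‖ + Fhat :=
      (norm_add_le _ _).trans (add_le_add (hLip s hs (x s)) (hFb s hs))
    have h3 : max s t₀ = s := max_eq_left hs
    calc ‖φ s‖ ≤ ‖Winv s‖ * ‖f s (x s) + F s‖ := h1
      _ ≤ ‖Winv s‖ * (l s * ‖x s‖ + Fhat) :=
          mul_le_mul_of_nonneg_left h2 (norm_nonneg _)
      _ = g s := by simp only [hg_def, h3]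
  -- ‖y t‖ ≤ r t
  have hyr : ∀ t, t₀ ≤ t → ‖Winv t (x t)‖ ≤ r t := by
    intro t ht
    have h1 : Winv t (x t) = Winv t₀ (x t₀) + ∫ s in t₀..t, φ s :=
      sub_eq_iff_eq_add'.mp (hyeq t ht).symm
    have h2 : ‖∫ s in t₀..t, φ s‖ ≤ ∫ s in t₀..t, ‖φ s‖ :=
      intervalIntegral.norm_integral_le_integral_norm ht
    have h3 : (∫ s in t₀..t, ‖φ s‖) ≤ ∫ s in t₀..t, g s := by
      apply intervalIntegral.integral_mono_on ht ((hφint t ht).norm)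
        ((hgc.intervalIntegrable t₀ t))
      intro s hs
      exact hφg s hs.1
    calc ‖Winv t (x t)‖ ≤ ‖Winv t₀ (x t₀)‖ + ‖∫ s in t₀..t, φ s‖ := by
          rw [h1]; exact norm_add_le _ _
      _ ≤ ‖Winv t₀ (x t₀)‖ + ∫ s in t₀..t, g s := by linarith
      _ = r t := rfl
  -- ‖x t‖ ≤ z t
  have hxz : ∀ t, t₀ ≤ t → ‖x t‖ ≤ z t := by
    intro t ht
    calc ‖x t‖ = ‖W t (Winv t (x t))‖ := by rw [hWid]
      _ ≤ ‖W t‖ * ‖Winv t (x t)‖ := (W t).le_opNorm _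
      _ = Real.exp (P t) * ‖Winv t (x t)‖ := by rw [hWp t ht]
      _ ≤ Real.exp (P t) * r t :=
          mul_le_mul_of_nonneg_left (hyr t ht) (Real.exp_pos _).le
  have hz0 : ∀ t, t₀ ≤ t → 0 ≤ z t := fun t ht => (norm_nonneg _).trans (hxz t ht)
  have hk0 : ∀ s, 0 ≤ k s := fun s => by
    rw [hk]; positivity
  -- Gronwall
  have hzcont : Continuous z := by
    rw [continuous_iff_continuousAt]; exact fun t => (hzd t).continuousAt
  have main : ∀ t, t₀ ≤ t → ‖x t‖ ≤ ‖(Winv t₀) (x t₀)‖ * Real.exp (-ν * (t - t₀))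
      + (Fhat * khat / ν) * (1 - Real.exp (-ν * (t - t₀))) := by
    intro t ht
    have key := le_gronwallBound_of_liminf_deriv_right_le
      (f := z) (f' := fun s => p s * Real.exp (P s) * r s + Real.exp (P s) * g s)
      (δ := ‖Winv t₀ (x t₀)‖) (K := -ν) (ε := Fhat * khat) (a := t₀) (b := t)
      hzcont.continuousOn
      (fun s _ rr hrr => ((hzd s).hasDerivWithinAt).liminf_right_slope_le hrr)
      (by simp [hz_def, hP_def, hr_def, intervalIntegral.integral_same])
      ?_ t ⟨ht, le_rfl⟩
    · have hb := (hxz t ht).trans key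
      simp only [gronwallBound_of_K_ne_0 (neg_ne_zero.mpr hν.ne')] at hb
      have hrw : Fhat * khat / (-ν) * (Real.exp (-ν * (t - t₀)) - 1)
          = Fhat * khat / ν * (1 - Real.exp (-ν * (t - t₀))) := by
        rw [div_neg]
        ring
      rw [hrw] at hb
      exact hb
    · -- derivative bound
      intro s hs
      have hs0 : t₀ ≤ s := hs.1
      have e1 : Real.exp (P s) = ‖W s‖ := (hWp s hs0).symm
      have h3 : max s t₀ = s := max_eq_left hs0
      have e2 : Real.exp (P s) * g s = k s * l s * ‖x s‖ + k s * Fhat := by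
        simp only [hg_def, h3, e1, hk s]
        ring
      have hx1 : ‖x s‖ ≤ z s := hxz s hs0
      have hz1 : 0 ≤ z s := hz0 s hs0
      have hkl : 0 ≤ k s * l s := mul_nonneg (hk0 s) (hl0 s)
      have b1 : k s * l s * ‖x s‖ ≤ k s * l s * z s := mul_le_mul_of_nonneg_left hx1 hkl
      have b2 : k s * Fhat ≤ khat * Fhat := mul_le_mul_of_nonneg_right (hkb s hs0) hFhat
      have b3 : (p s + k s * l s) * z s ≤ -ν * z s :=
        mul_le_mul_of_nonneg_right (hdecay s hs0) hz1
      have hpz : p s * Real.exp (P s) * r s = p s * z s := by rw [hz_def]; ring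
      show p s * Real.exp (P s) * r s + Real.exp (P s) * g s ≤ -ν * z s + Fhat * khat
      rw [hpz, e2]
      nlinarith [b1, b2, b3]
  refine ⟨main, ?_⟩
  -- limsup part
  set C : ℝ := Fhat * khat / ν with hC_def
  have hC : 0 ≤ C := by positivity
  set δ : ℝ := ‖Winv t₀ (x t₀)‖ with hδ_def
  have hev : ∀ᶠ t in atTop, ‖x t‖ ≤ δ * Real.exp (-ν * (t - t₀)) + C := by
    filter_upwards [eventually_ge_atTop t₀] with t ht
    have h1 := main t ht
    have h2 : C * (1 - Real.exp (-ν * (t - t₀))) ≤ C := by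
      nlinarith [Real.exp_pos (-ν * (t - t₀))]
    linarith
  have htend : Tendsto (fun t => δ * Real.exp (-ν * (t - t₀)) + C) atTop (nhds C) := by
    have h1 : Tendsto (fun t : ℝ => -ν * (t - t₀)) atTop atBot := by
      have h0 : Tendsto (fun t : ℝ => t - t₀) atTop atTop :=
        tendsto_atTop_add_const_right atTop (-t₀) tendsto_id
      exact h0.const_mul_atTop_of_neg (neg_lt_zero.mpr hν)
    have h2 : Tendsto (fun t : ℝ => Real.exp (-ν * (t - t₀))) atTop (nhds 0) :=
      Real.tendsto_exp_atBot.comp h1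
    have h3 := (h2.const_mul δ).add_const C
    simpa using h3
  calc Filter.limsup (fun t => ‖x t‖) Filter.atTop
      ≤ Filter.limsup (fun t => δ * Real.exp (-ν * (t - t₀)) + C) Filter.atTop := by
        exact Filter.limsup_le_limsup hev
          (Filter.isCoboundedUnder_le_of_eventually_le atTop
            (Filter.Eventually.of_forall fun t => norm_nonneg _))
          htend.isBoundedUnder_le
    _ = C := htend.limsup_eq
end

section
/- (Corollary 3.) In the setting of Theorem 1 with Ω₁ = E (global Lipschitz bound ‖f(t,y)‖ ≤ l(t)‖y‖ for all y ∈ E) and F ≡ 0, let χ = limsup_{t → ∞} (t − t₀)⁻¹ (∫_{t₀}^{t} k(s) l(s) ds + Real.log ‖W t‖) and suppose χ < 0. Then for every ε ∈ (0, −χ) there exists D > 0 such that every solution x of ẋ = A(t)x + f(t,x) satisfies ‖x(t)‖ ≤ D · ‖(W t₀)⁻¹ (x t₀)‖ · exp((χ + ε)(t − t₀)) for all t ≥ t₀; in particular x(t) → 0 as t → ∞, so the trivial solution is asymptotically stable. -/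
open Set Filter Real

/-- Time-dependent Grönwall inequality. -/
lemma gronwall_time_dep {E : Type*} [NormedAddCommGroup E] [NormedSpace ℝ E]
    {y g : ℝ → E} {c : ℝ → ℝ} (hc : Continuous c) {a b : ℝ} (hab : a ≤ b)
    (hy : ∀ t ∈ Set.Icc a b, HasDerivAt y (g t) t)
    (hbound : ∀ t ∈ Set.Icc a b, ‖g t‖ ≤ c t * ‖y t‖) :
    ‖y b‖ ≤ ‖y a‖ * Real.exp (∫ s in a..b, c s) := by
  set δ := ‖y a‖ with hδ
  have hkey : ∀ η > (0 : ℝ),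
      ‖y b‖ ≤ (δ + η) * Real.exp ((∫ s in a..b, c s) + η * (b - a)) := by
    intro η hη
    set B : ℝ → ℝ := fun t => (δ + η) * Real.exp ((∫ s in a..t, c s) + η * (t - a)) with hB
    have hBpos : ∀ t, 0 < B t := fun t =>
      mul_pos (by positivity) (Real.exp_pos _)
    have hBderiv : ∀ t, HasDerivAt B ((δ + η) *
        (Real.exp ((∫ s in a..t, c s) + η * (t - a)) * (c t + η))) t := by
      intro t
      have h1 : HasDerivAt (fun u => (∫ s in a..u, c s) + η * (u - a)) (c t + η) t := by
        have hi : HasDerivAt (fun u => ∫ s in a..u, c s) (c t) t :=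
          (hc.integral_hasStrictDerivAt a t).hasDerivAt
        have h2 : HasDerivAt (fun u : ℝ => η * (u - a)) (η * 1) t :=
          ((hasDerivAt_id t).sub_const a).const_mul η
        have h3 := hi.add h2
        simp only [mul_one] at h3
        exact h3
      exact (h1.exp).const_mul (δ + η)
    have := image_norm_le_of_norm_deriv_right_lt_deriv_boundary
      (f := y) (f' := g) (a := a) (b := b)
      (fun t ht => (hy t ht).continuousAt.continuousWithinAt)
      (fun t ht => (hy t (Set.Ico_subset_Icc_self ht)).hasDerivWithinAt)
      (B := B)
      (B' := fun t => (δ + η) * (Real.exp ((∫ s in a..t, c s) + η * (t - a)) * (c t + η)))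
      (by simp [hB, hδ]; nlinarith [Real.exp_pos (η * (a-a))])
      hBderiv
      (fun t ht heq => by
        have h1 := hbound t (Set.Ico_subset_Icc_self ht)
        have h2 : c t * ‖y t‖ < (c t + η) * B t := by
          rw [heq]; nlinarith [hBpos t]
        calc ‖g t‖ ≤ c t * ‖y t‖ := h1
          _ < (c t + η) * B t := h2
          _ = (δ + η) * (Real.exp ((∫ s in a..t, c s) + η * (t - a)) * (c t + η)) := by
              rw [hB]; ring)
    have hb := this (Set.right_mem_Icc.2 hab)
    simpa [hB] using hb
  have hlim : Filter.Tendsto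
      (fun η : ℝ => (δ + η) * Real.exp ((∫ s in a..b, c s) + η * (b - a)))
      (nhdsWithin 0 (Set.Ioi 0)) (nhds (δ * Real.exp (∫ s in a..b, c s))) := by
    have hcont : ContinuousAt
        (fun η : ℝ => (δ + η) * Real.exp ((∫ s in a..b, c s) + η * (b - a))) 0 := by
      fun_prop
    have := hcont.tendsto.mono_left (nhdsWithin_le_nhds (s := Set.Ioi 0))
    simpa using this
  refine ge_of_tendsto hlim ?_
  filter_upwards [self_mem_nhdsWithin] with η hη
  exact hkey η hη

set_option maxHeartbeats 1000000 in
/-- Corollary 3: if the characteristic exponent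
`χ = limsup_{t→∞} (t-t₀)⁻¹ (∫_{t₀}^t k l + log ‖W t‖)` is negative, then for every
`ε ∈ (0, -χ)` there is `D > 0` such that every solution of `ẋ = A(t)x + f(t,x)`
satisfies `‖x(t)‖ ≤ D ‖(W t₀)⁻¹ x(t₀)‖ e^{(χ+ε)(t-t₀)}` for `t ≥ t₀`; in particular
every solution tends to `0`. -/
theorem corollary3_asymptotic_stability
    {n : ℕ} (hn : 1 ≤ n)
    (A : ℝ → (EuclideanSpace ℝ (Fin n) →L[ℝ] EuclideanSpace ℝ (Fin n)))
    (hA : Continuous A)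
    (f : ℝ → EuclideanSpace ℝ (Fin n) → EuclideanSpace ℝ (Fin n))
    (hf : Continuous fun q : ℝ × EuclideanSpace ℝ (Fin n) => f q.1 q.2)
    (W Winv : ℝ → (EuclideanSpace ℝ (Fin n) →L[ℝ] EuclideanSpace ℝ (Fin n)))
    (hWinv₁ : ∀ t, (W t).comp (Winv t) = ContinuousLinearMap.id ℝ (EuclideanSpace ℝ (Fin n)))
    (hWinv₂ : ∀ t, (Winv t).comp (W t) = ContinuousLinearMap.id ℝ (EuclideanSpace ℝ (Fin n)))
    (hWinv_cont : Continuous Winv)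
    (hW_deriv : ∀ t, HasDerivAt W ((A t).comp (W t)) t)
    (t₀ : ℝ) (hWnorm : ‖W t₀‖ = 1)
    (k : ℝ → ℝ) (hk : ∀ t, k t = ‖W t‖ * ‖Winv t‖)
    (l : ℝ → ℝ) (hl : Continuous l) (hl0 : ∀ t, 0 ≤ l t)
    (hLip : ∀ t ≥ t₀, ∀ y : EuclideanSpace ℝ (Fin n), ‖f t y‖ ≤ l t * ‖y‖)
    (χ : ℝ)
    (hχdef : χ = Filter.limsup
      (fun t => (t - t₀)⁻¹ * ((∫ s in t₀..t, k s * l s) + Real.log ‖W t‖)) Filter.atTop)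
    (hχ : χ < 0) :
    (∀ ε ∈ Set.Ioo (0 : ℝ) (-χ), ∃ D > (0 : ℝ),
        ∀ x : ℝ → EuclideanSpace ℝ (Fin n),
          (∀ t ≥ t₀, HasDerivAt x (A t (x t) + f t (x t)) t) →
          ∀ t ≥ t₀,
            ‖x t‖ ≤ D * ‖(Winv t₀) (x t₀)‖ * Real.exp ((χ + ε) * (t - t₀))) ∧
      ∀ x : ℝ → EuclideanSpace ℝ (Fin n),
        (∀ t ≥ t₀, HasDerivAt x (A t (x t) + f t (x t)) t) →
        Filter.Tendsto x Filter.atTop (nhds 0) := by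
  haveI : Nonempty (Fin n) := ⟨⟨0, hn⟩⟩
  haveI : Nontrivial (EuclideanSpace ℝ (Fin n)) := by
    refine ⟨⟨EuclideanSpace.single ⟨0, hn⟩ (1 : ℝ), 0, ?_⟩⟩
    intro h
    have := congrArg (fun v : (EuclideanSpace ℝ (Fin n)) => v ⟨0, hn⟩) h
    simp [EuclideanSpace.single_apply] at this
  -- continuity of W
  have hW_cont : Continuous W :=
    continuous_iff_continuousAt.mpr fun t => (hW_deriv t).continuousAt
  -- W t * Winv t = 1 etc.
  have h1 : ∀ t, W t * Winv t = 1 := by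
    intro t
    rw [ContinuousLinearMap.mul_def, hWinv₁ t]
    exact (ContinuousLinearMap.one_def).symm
  have h2 : ∀ t, Winv t * W t = 1 := by
    intro t
    rw [ContinuousLinearMap.mul_def, hWinv₂ t]
    exact (ContinuousLinearMap.one_def).symm
  have hWW : ∀ t (v : (EuclideanSpace ℝ (Fin n))), W t (Winv t v) = v := by
    intro t v
    show ((W t).comp (Winv t)) v = v
    rw [hWinv₁ t]
    rfl
  -- norms are positive
  have hnormid : ‖ContinuousLinearMap.id ℝ (EuclideanSpace ℝ (Fin n))‖ = 1 := ContinuousLinearMap.norm_id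
  have hk1 : ∀ t, (1 : ℝ) ≤ ‖W t‖ * ‖Winv t‖ := by
    intro t
    calc (1 : ℝ) = ‖ContinuousLinearMap.id ℝ (EuclideanSpace ℝ (Fin n))‖ := hnormid.symm
      _ = ‖(W t).comp (Winv t)‖ := by rw [hWinv₁ t]
      _ ≤ ‖W t‖ * ‖Winv t‖ := ContinuousLinearMap.opNorm_comp_le _ _
  have hWpos : ∀ t, 0 < ‖W t‖ := by
    intro t
    by_contra h
    push_neg at h
    have h0 : ‖W t‖ = 0 := le_antisymm h (norm_nonneg _)
    have h3 := hk1 t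
    rw [h0, zero_mul] at h3
    linarith
  -- derivative of Winv
  have hWinv_deriv : ∀ t, HasDerivAt Winv (-((Winv t).comp (A t))) t := by
    intro t
    set u : ((EuclideanSpace ℝ (Fin n)) →L[ℝ] (EuclideanSpace ℝ (Fin n)))ˣ := ⟨W t, Winv t, h1 t, h2 t⟩ with hu
    have hr : ∀ s, Winv s = Ring.inverse (W s) := by
      intro s
      exact (Ring.inverse_unit ⟨W s, Winv s, h1 s, h2 s⟩).symm
    have hfd := hasFDerivAt_ringInverse (𝕜 := ℝ) (R := (EuclideanSpace ℝ (Fin n)) →L[ℝ] (EuclideanSpace ℝ (Fin n))) u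
    have hcomp := hfd.comp_hasDerivAt t (hW_deriv t)
    have heq : Ring.inverse ∘ W = Winv := funext fun s => (hr s).symm
    rw [heq] at hcomp
    refine hcomp.congr_deriv ?_
    ext v
    simp only [ContinuousLinearMap.neg_apply, ContinuousLinearMap.comp_apply,
      ContinuousLinearMap.mulLeftRight_apply, hu]
    simp only [Units.inv_mk, ContinuousLinearMap.mul_apply, ContinuousLinearMap.comp_apply,
      hWW t]
  -- continuity of k·l and φ
  have hkl_cont : Continuous fun t => k t * l t := by
    have hkc : Continuous k := by
      have hke : k = fun t => ‖W t‖ * ‖Winv t‖ := funext hk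
      rw [hke]; exact hW_cont.norm.mul hWinv_cont.norm
    exact hkc.mul hl
  set φ : ℝ → ℝ := fun t => ∫ s in t₀..t, k s * l s with hφ
  have hφ_deriv : ∀ t, HasDerivAt φ (k t * l t) t := fun t =>
    (hkl_cont.integral_hasStrictDerivAt t₀ t).hasDerivAt
  have hφ_cont : Continuous φ :=
    continuous_iff_continuousAt.mpr fun t => (hφ_deriv t).continuousAt
  -- the key estimate coming from variation of constants + Grönwall
  have key : ∀ x : ℝ → (EuclideanSpace ℝ (Fin n)), (∀ t ≥ t₀, HasDerivAt x (A t (x t) + f t (x t)) t) →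
      ∀ t ≥ t₀, ‖x t‖ ≤ ‖Winv t₀ (x t₀)‖ * Real.exp (φ t + Real.log ‖W t‖) := by
    intro x hx t ht
    set y : ℝ → (EuclideanSpace ℝ (Fin n)) := fun s => Winv s (x s) with hy
    have hy_deriv : ∀ s ∈ Set.Icc t₀ t, HasDerivAt y (Winv s (f s (x s))) s := by
      intro s hs
      have h := (hWinv_deriv s).clm_apply (hx s hs.1)
      have heq : (-(Winv s).comp (A s)) (x s) + (Winv s) (A s (x s) + f s (x s))
          = Winv s (f s (x s)) := by
        simp only [ContinuousLinearMap.neg_apply, ContinuousLinearMap.comp_apply, map_add]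
        abel
      rw [heq] at h
      exact h
    have hbound : ∀ s ∈ Set.Icc t₀ t, ‖Winv s (f s (x s))‖ ≤ (k s * l s) * ‖y s‖ := by
      intro s hs
      have e2 : ‖f s (x s)‖ ≤ l s * ‖x s‖ := hLip s hs.1 _
      have e3 : ‖x s‖ ≤ ‖W s‖ * ‖y s‖ := by
        conv_lhs => rw [← hWW s (x s)]
        exact (W s).le_opNorm _
      calc ‖Winv s (f s (x s))‖ ≤ ‖Winv s‖ * ‖f s (x s)‖ := (Winv s).le_opNorm _
        _ ≤ ‖Winv s‖ * (l s * ‖x s‖) := mul_le_mul_of_nonneg_left e2 (norm_nonneg _)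
        _ ≤ ‖Winv s‖ * (l s * (‖W s‖ * ‖y s‖)) :=
            mul_le_mul_of_nonneg_left (mul_le_mul_of_nonneg_left e3 (hl0 s)) (norm_nonneg _)
        _ = (k s * l s) * ‖y s‖ := by rw [hk s]; ring
    have hg := gronwall_time_dep hkl_cont ht hy_deriv hbound
    have e4 : ‖x t‖ ≤ ‖W t‖ * ‖y t‖ := by
      conv_lhs => rw [← hWW t (x t)]
      exact (W t).le_opNorm _
    calc ‖x t‖ ≤ ‖W t‖ * ‖y t‖ := e4
      _ ≤ ‖W t‖ * (‖y t₀‖ * Real.exp (φ t)) := mul_le_mul_of_nonneg_left hg (norm_nonneg _)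
      _ = ‖y t₀‖ * (Real.exp (Real.log ‖W t‖) * Real.exp (φ t)) := by
          rw [Real.exp_log (hWpos t)]; ring
      _ = ‖Winv t₀ (x t₀)‖ * Real.exp (φ t + Real.log ‖W t‖) := by
          rw [← Real.exp_add, add_comm (Real.log ‖W t‖) (φ t)]
  -- Part 1
  have part1 : ∀ ε ∈ Set.Ioo (0 : ℝ) (-χ), ∃ D > (0 : ℝ),
      ∀ x : ℝ → (EuclideanSpace ℝ (Fin n)), (∀ t ≥ t₀, HasDerivAt x (A t (x t) + f t (x t)) t) →
        ∀ t ≥ t₀, ‖x t‖ ≤ D * ‖(Winv t₀) (x t₀)‖ * Real.exp ((χ + ε) * (t - t₀)) := by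
    rintro ε ⟨hε0, hεχ⟩
    set g : ℝ → ℝ := fun t => (t - t₀)⁻¹ * (φ t + Real.log ‖W t‖) with hgdef
    have hχg : χ = Filter.limsup g Filter.atTop := hχdef
    have hbdd : Filter.IsBoundedUnder (· ≤ ·) Filter.atTop g := by
      by_contra hb
      have hempty : {a : ℝ | ∀ᶠ t in Filter.atTop, g t ≤ a} = ∅ := by
        ext a
        simp only [Set.mem_setOf_eq, Set.mem_empty_iff_false, iff_false]
        intro ha
        exact hb ⟨a, Filter.eventually_map.mpr ha⟩
      rw [hχg, Filter.limsup_eq, hempty, Real.sInf_empty] at hχ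
      exact lt_irrefl 0 hχ
    have hev : ∀ᶠ t in Filter.atTop, g t < χ + ε :=
      Filter.eventually_lt_of_limsup_lt (by rw [← hχg]; linarith) hbdd
    obtain ⟨T₀, hT₀⟩ := Filter.eventually_atTop.mp hev
    set T := max T₀ (t₀ + 1) with hT
    have hTt₀ : t₀ ≤ T := le_trans (by linarith) (le_max_right _ _)
    have hlog_cont : Continuous fun t => Real.log ‖W t‖ :=
      hW_cont.norm.log fun t => (hWpos t).ne'
    have hh_cont : Continuous fun t =>
        Real.exp (φ t + Real.log ‖W t‖ - (χ + ε) * (t - t₀)) :=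
      ((hφ_cont.add hlog_cont).sub
        (continuous_const.mul (continuous_id.sub continuous_const))).rexp
    obtain ⟨m, hm, hmax⟩ := isCompact_Icc.exists_isMaxOn
      ⟨t₀, Set.left_mem_Icc.mpr hTt₀⟩ hh_cont.continuousOn
    set D := max (Real.exp (φ m + Real.log ‖W m‖ - (χ + ε) * (m - t₀))) 1 with hD
    refine ⟨D, lt_of_lt_of_le one_pos (le_max_right _ _), ?_⟩
    intro x hx t ht
    have hkey := key x hx t ht
    have hED : Real.exp (φ t + Real.log ‖W t‖) ≤ D * Real.exp ((χ + ε) * (t - t₀)) := by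
      rcases le_total t T with hcase | hcase
      · have h5 := hmax ⟨ht, hcase⟩
        have h6 : Real.exp (φ t + Real.log ‖W t‖) =
            Real.exp (φ t + Real.log ‖W t‖ - (χ + ε) * (t - t₀)) *
              Real.exp ((χ + ε) * (t - t₀)) := by
          rw [← Real.exp_add]; ring_nf
        rw [h6]
        exact mul_le_mul_of_nonneg_right (h5.trans (le_max_left _ _)) (Real.exp_pos _).le
      · have h7 : g t < χ + ε := hT₀ t (le_trans (le_max_left _ _) hcase)
        have h8 : (0 : ℝ) < t - t₀ := by
          have h81 : t₀ + 1 ≤ T := le_max_right _ _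
          linarith [le_trans h81 hcase]
        have h9 : φ t + Real.log ‖W t‖ ≤ (χ + ε) * (t - t₀) := by
          have h10 := mul_lt_mul_of_pos_left h7 h8
          rw [hgdef] at h10
          simp only at h10
          rw [← mul_assoc, mul_inv_cancel₀ h8.ne', one_mul] at h10
          linarith
        calc Real.exp (φ t + Real.log ‖W t‖)
            ≤ Real.exp ((χ + ε) * (t - t₀)) := Real.exp_le_exp.mpr h9
          _ = 1 * Real.exp ((χ + ε) * (t - t₀)) := (one_mul _).symm
          _ ≤ D * Real.exp ((χ + ε) * (t - t₀)) :=
              mul_le_mul_of_nonneg_right (le_max_right _ _) (Real.exp_pos _).le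
    calc ‖x t‖ ≤ ‖Winv t₀ (x t₀)‖ * Real.exp (φ t + Real.log ‖W t‖) := hkey
      _ ≤ ‖Winv t₀ (x t₀)‖ * (D * Real.exp ((χ + ε) * (t - t₀))) :=
          mul_le_mul_of_nonneg_left hED (norm_nonneg _)
      _ = D * ‖Winv t₀ (x t₀)‖ * Real.exp ((χ + ε) * (t - t₀)) := by ring
  refine ⟨part1, ?_⟩
  intro x hx
  obtain ⟨D, hD, hDx⟩ := part1 (-χ / 2) ⟨by linarith, by linarith⟩
  have hb2 : ∀ᶠ t in Filter.atTop,
      ‖x t‖ ≤ D * ‖Winv t₀ (x t₀)‖ * Real.exp ((χ / 2) * (t - t₀)) := by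
    rw [Filter.eventually_atTop]
    refine ⟨t₀, fun t ht => ?_⟩
    have h := hDx x hx t ht
    rwa [show χ + -χ / 2 = χ / 2 by ring] at h
  have hlim0 : Filter.Tendsto
      (fun t => D * ‖Winv t₀ (x t₀)‖ * Real.exp ((χ / 2) * (t - t₀)))
      Filter.atTop (nhds 0) := by
    have h1 : Filter.Tendsto (fun t : ℝ => t - t₀) Filter.atTop Filter.atTop := by
      simpa [sub_eq_add_neg] using
        tendsto_atTop_add_const_right Filter.atTop (-t₀) (tendsto_id (α := ℝ))
    have h2 : Filter.Tendsto (fun t : ℝ => (χ / 2) * (t - t₀)) Filter.atTop Filter.atBot :=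
      Filter.Tendsto.const_mul_atTop_of_neg (by linarith) h1
    have h3 := Real.tendsto_exp_atBot.comp h2
    have h4 := h3.const_mul (D * ‖Winv t₀ (x t₀)‖)
    simpa [Function.comp, mul_assoc] using h4
  exact squeeze_zero_norm' hb2 hlim0
end

section
/- (Corollary 4.) In the setting of Theorem 1 with Ω₁ = E (global Lipschitz bound ‖f(t,y)‖ ≤ l(t)‖y‖ for all y ∈ E), suppose there are constants D̂ ≥ 1, ρ > 0, k̂ ≥ 1, F̂ ≥ 0 such that exp(∫_{τ}^{t} (p(s) + k(s) l(s)) ds) ≤ D̂ · exp(−ρ (t − τ)) for all t₀ ≤ τ ≤ t, k(t) ≤ k̂ and ‖F t‖ ≤ F̂ for all t ≥ t₀. Then every solution x of ẋ = A(t)x + f(t,x) + F(t) satisfies ‖x(t)‖ ≤ D̂ · ‖(W t₀)⁻¹ (x t₀)‖ · exp(−ρ(t − t₀)) + (D̂ F̂ k̂ / ρ)(1 − exp(−ρ(t − t₀))) for all t ≥ t₀; in particular solutions are bounded in norm and limsup_{t → ∞} ‖x(t)‖ ≤ D̂ F̂ k̂ / ρ. -/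
open Filter Set intervalIntegral Real

set_option maxHeartbeats 2000000 in
set_option synthInstance.maxHeartbeats 400000 in
/-- Corollary 4: if the transition function of the linearized auxiliary equation decays as
`exp(∫_τ^t (p + k l)) ≤ D̂ e^{-ρ(t-τ)}` with `k ≤ k̂` and `‖F‖ ≤ F̂`, then every solution of
`ẋ = A(t)x + f(t,x) + F(t)` satisfies
`‖x(t)‖ ≤ D̂ ‖(W t₀)⁻¹ x(t₀)‖ e^{-ρ(t-t₀)} + (D̂ F̂ k̂ / ρ)(1 - e^{-ρ(t-t₀)})`,
and in particular `limsup_{t→∞} ‖x(t)‖ ≤ D̂ F̂ k̂ / ρ`. -/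
theorem corollary4_forced_bound
    {n : ℕ} (hn : 1 ≤ n)
    (A : ℝ → (EuclideanSpace ℝ (Fin n) →L[ℝ] EuclideanSpace ℝ (Fin n)))
    (hA : Continuous A)
    (f : ℝ → EuclideanSpace ℝ (Fin n) → EuclideanSpace ℝ (Fin n))
    (hf : Continuous fun q : ℝ × EuclideanSpace ℝ (Fin n) => f q.1 q.2)
    (F : ℝ → EuclideanSpace ℝ (Fin n)) (hF : Continuous F)
    (W Winv : ℝ → (EuclideanSpace ℝ (Fin n) →L[ℝ] EuclideanSpace ℝ (Fin n)))
    (hWinv₁ : ∀ t, (W t).comp (Winv t) = ContinuousLinearMap.id ℝ (EuclideanSpace ℝ (Fin n)))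
    (hWinv₂ : ∀ t, (Winv t).comp (W t) = ContinuousLinearMap.id ℝ (EuclideanSpace ℝ (Fin n)))
    (hWinv_cont : Continuous Winv)
    (hW_deriv : ∀ t, HasDerivAt W ((A t).comp (W t)) t)
    (t₀ : ℝ) (hWnorm : ‖W t₀‖ = 1)
    (p : ℝ → ℝ) (hp : Continuous p)
    (hWp : ∀ t ≥ t₀, ‖W t‖ = Real.exp (∫ s in t₀..t, p s))
    (k : ℝ → ℝ) (hk : ∀ t, k t = ‖W t‖ * ‖Winv t‖)
    (l : ℝ → ℝ) (hl : Continuous l) (hl0 : ∀ t, 0 ≤ l t)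
    (hLip : ∀ t ≥ t₀, ∀ y : EuclideanSpace ℝ (Fin n), ‖f t y‖ ≤ l t * ‖y‖)
    (Dhat ρ khat Fhat : ℝ)
    (hDhat : 1 ≤ Dhat) (hρ : 0 < ρ) (hkhat : 1 ≤ khat) (hFhat : 0 ≤ Fhat)
    (htrans : ∀ τ t : ℝ, t₀ ≤ τ → τ ≤ t →
      Real.exp (∫ s in τ..t, p s + k s * l s) ≤ Dhat * Real.exp (-ρ * (t - τ)))
    (hkb : ∀ t ≥ t₀, k t ≤ khat)
    (hFb : ∀ t ≥ t₀, ‖F t‖ ≤ Fhat)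
    (x : ℝ → EuclideanSpace ℝ (Fin n))
    (hx : ∀ t ≥ t₀, HasDerivAt x (A t (x t) + f t (x t) + F t) t) :
    (∀ t ≥ t₀, ‖x t‖ ≤ Dhat * ‖(Winv t₀) (x t₀)‖ * Real.exp (-ρ * (t - t₀))
        + (Dhat * Fhat * khat / ρ) * (1 - Real.exp (-ρ * (t - t₀)))) ∧
      Filter.limsup (fun t => ‖x t‖) Filter.atTop ≤ Dhat * Fhat * khat / ρ := by
  haveI : Nonempty (Fin n) := ⟨⟨0, hn⟩⟩
  haveI : Nontrivial (EuclideanSpace ℝ (Fin n)) := inferInstance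
  have hW_app : ∀ t v, W t (Winv t v) = v := fun t v => by
    have := ContinuousLinearMap.ext_iff.1 (hWinv₁ t) v
    simpa using this
  have hWdiff : Differentiable ℝ W := fun t => (hW_deriv t).differentiableAt
  have hWcont : Continuous W := hWdiff.continuous
  have hkc : Continuous k := by
    have hkfun : k = fun t => ‖W t‖ * ‖Winv t‖ := funext hk
    rw [hkfun]; exact hWcont.norm.mul hWinv_cont.norm
  have hklc : Continuous fun s => k s * l s := hkc.mul hl
  have hk0 : ∀ t, 0 ≤ k t := fun t =>
    (hk t) ▸ mul_nonneg (norm_nonneg _) (norm_nonneg _)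
  -- units of the operator algebra
  let u : ℝ → (EuclideanSpace ℝ (Fin n) →L[ℝ] EuclideanSpace ℝ (Fin n))ˣ := fun t =>
    ⟨W t, Winv t,
      by rw [ContinuousLinearMap.mul_def, hWinv₁ t]; rfl,
      by rw [ContinuousLinearMap.mul_def, hWinv₂ t]; rfl⟩
  have hWinv_deriv : ∀ t, HasDerivAt Winv (-((Winv t).comp (A t))) t := by
    intro t
    have h0 := hasFDerivAt_ringInverse (𝕜 := ℝ) (u t)
    have h1 := h0.comp_hasDerivAt t (hW_deriv t)
    have heq : (Ring.inverse ∘ W) = Winv := by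
      funext s
      simp only [Function.comp_apply]
      exact Ring.inverse_unit (u s)
    rw [heq] at h1
    refine h1.congr_deriv ?_
    have hu : (↑(u t)⁻¹ : EuclideanSpace ℝ (Fin n) →L[ℝ] EuclideanSpace ℝ (Fin n)) = Winv t := rfl
    refine ContinuousLinearMap.ext fun v => ?_
    simp only [ContinuousLinearMap.mulLeftRight_apply, ContinuousLinearMap.mul_apply,
      ContinuousLinearMap.comp_apply, ContinuousLinearMap.neg_apply, hu, hW_app]
  set z : ℝ → EuclideanSpace ℝ (Fin n) := fun t => Winv t (x t) with hzdef
  set C := ‖Winv t₀ (x t₀)‖ with hCdef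
  have hC0 : 0 ≤ C := norm_nonneg _
  have hz_deriv : ∀ t, t₀ ≤ t → HasDerivAt z (Winv t (f t (x t) + F t)) t := by
    intro t ht
    have h := (hWinv_deriv t).clm_apply (hx t ht)
    refine h.congr_deriv ?_
    simp only [ContinuousLinearMap.neg_apply, ContinuousLinearMap.comp_apply, map_add]
    abel
  -- FTC derivatives of the weight functions
  set P : ℝ → ℝ := fun t => ∫ s in t₀..t, p s with hPdef
  set R : ℝ → ℝ := fun t => ∫ s in t₀..t, k s * l s with hRdef
  have hPd : ∀ t, HasDerivAt P (p t) t := fun t =>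
    intervalIntegral.integral_hasDerivAt_right (hp.intervalIntegrable _ _)
      (hp.stronglyMeasurableAtFilter _ _) hp.continuousAt
  have hRd : ∀ t, HasDerivAt R (k t * l t) t := fun t =>
    intervalIntegral.integral_hasDerivAt_right (hklc.intervalIntegrable _ _)
      (hklc.stronglyMeasurableAtFilter _ _) hklc.continuousAt
  have hPc : Continuous P := Differentiable.continuous fun t => (hPd t).differentiableAt
  have hRc : Continuous R := Differentiable.continuous fun t => (hRd t).differentiableAt
  have hP0 : P t₀ = 0 := intervalIntegral.integral_same
  have hR0 : R t₀ = 0 := intervalIntegral.integral_same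
  have hWP : ∀ t, t₀ ≤ t → ‖W t‖ = Real.exp (P t) := fun t ht => hWp t ht
  -- forcing term
  set g : ℝ → ℝ := fun s => k s * Fhat * Real.exp (-P s) with hgdef
  have hgc : Continuous g := by
    simp only [hgdef]
    exact (hkc.mul continuous_const).mul (hPc.neg.rexp)
  have hg0 : ∀ s, 0 ≤ g s := fun s =>
    mul_nonneg (mul_nonneg (hk0 s) hFhat) (Real.exp_nonneg _)
  -- additivity of the exponents
  have hPRsub : ∀ s T, Real.exp (P T - P s + (R T - R s))
      = Real.exp (∫ u in s..T, p u + k u * l u) := by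
    intro s T
    have h1 : P T - P s = ∫ u in s..T, p u :=
      intervalIntegral.integral_interval_sub_left (hp.intervalIntegrable _ _)
        (hp.intervalIntegrable _ _)
    have h2 : R T - R s = ∫ u in s..T, k u * l u :=
      intervalIntegral.integral_interval_sub_left (hklc.intervalIntegrable _ _)
        (hklc.intervalIntegrable _ _)
    rw [h1, h2, ← intervalIntegral.integral_add (hp.intervalIntegrable _ _)
      (hklc.intervalIntegrable _ _)]
  have hPRbound : ∀ s T, t₀ ≤ s → s ≤ T →
      Real.exp (P T - P s + (R T - R s)) ≤ Dhat * Real.exp (-ρ * (T - s)) := by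
    intro s T hs hsT
    rw [hPRsub s T]
    exact htrans s T hs hsT
  -- the key pointwise bound
  have key : ∀ T, t₀ ≤ T → ‖x T‖ ≤ Dhat * C * Real.exp (-ρ * (T - t₀))
      + Dhat * Fhat * khat / ρ * (1 - Real.exp (-ρ * (T - t₀))) := by
    intro T hT
    -- Gronwall-type fencing with boundary B ε
    set B : ℝ → ℝ → ℝ := fun ε t =>
      Real.exp (R t) * (C + ∫ s in t₀..t, (g s + ε) * Real.exp (-R s)) with hBdef
    have hintc : ∀ ε : ℝ, Continuous fun s => (g s + ε) * Real.exp (-R s) := fun ε =>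
      (hgc.add continuous_const).mul (hRc.neg.rexp)
    have hBd : ∀ ε t, HasDerivAt (B ε) (k t * l t * B ε t + (g t + ε)) t := by
      intro ε t
      have hInt : HasDerivAt (fun t => ∫ s in t₀..t, (g s + ε) * Real.exp (-R s))
          ((g t + ε) * Real.exp (-R t)) t :=
        intervalIntegral.integral_hasDerivAt_right ((hintc ε).intervalIntegrable _ _)
          ((hintc ε).stronglyMeasurableAtFilter _ _) (hintc ε).continuousAt
      have h1 : HasDerivAt (fun t => Real.exp (R t)) (Real.exp (R t) * (k t * l t)) t :=
        (hRd t).exp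
      have h2 := h1.mul ((hasDerivAt_const t C).add hInt)
      refine h2.congr_deriv ?_
      simp only [hBdef, Pi.add_apply, zero_add]
      have hexp : Real.exp (R t) * ((g t + ε) * Real.exp (-R t)) = g t + ε := by
        rw [Real.exp_neg]
        field_simp
      rw [hexp]
      ring
    have hzcont : ContinuousOn z (Set.Icc t₀ T) := by
      intro t ht
      have h1 : ContinuousAt (fun s => (Winv s, x s)) t :=
        hWinv_cont.continuousAt.prodMk (hx t ht.1).continuousAt
      exact ((isBoundedBilinearMap_apply.continuous.continuousAt).comp h1).continuousWithinAt
    have hz_icc : ∀ t ∈ Set.Ico t₀ T,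
        HasDerivWithinAt z (Winv t (f t (x t) + F t)) (Set.Ici t) t :=
      fun t ht => (hz_deriv t ht.1).hasDerivWithinAt
    have hgron : ∀ ε, 0 < ε → ‖z T‖ ≤ B ε T := by
      intro ε hε
      have ha : ‖z t₀‖ ≤ B ε t₀ := by
        simp only [hBdef, hR0, intervalIntegral.integral_same, Real.exp_zero, one_mul, add_zero]
        exact le_of_eq rfl
      have bound : ∀ t ∈ Set.Ico t₀ T, ‖z t‖ = B ε t →
          ‖Winv t (f t (x t) + F t)‖ < k t * l t * B ε t + (g t + ε) := by
        intro t ht heqz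
        have ht0 : t₀ ≤ t := ht.1
        have hWt : ‖W t‖ = Real.exp (P t) := hWP t ht0
        have hWinv_norm : ‖Winv t‖ = k t * Real.exp (-P t) := by
          have h1 : k t * Real.exp (-P t) = ‖Winv t‖ := by
            rw [hk t, hWt, Real.exp_neg]
            field_simp
          exact h1.symm
        have e1 : ‖Winv t (f t (x t) + F t)‖ ≤ ‖Winv t‖ * ‖f t (x t) + F t‖ :=
          ContinuousLinearMap.le_opNorm _ _
        have e2 : ‖f t (x t) + F t‖ ≤ l t * ‖x t‖ + Fhat :=
          (norm_add_le _ _).trans (add_le_add (hLip t ht0 (x t)) (hFb t ht0))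
        have e3 : ‖x t‖ ≤ ‖W t‖ * ‖z t‖ := by
          conv_lhs => rw [show x t = W t (z t) from (hW_app t (x t)).symm]
          exact ContinuousLinearMap.le_opNorm _ _
        have e4 : ‖Winv t (f t (x t) + F t)‖ ≤ k t * l t * ‖z t‖ + g t := by
          calc ‖Winv t (f t (x t) + F t)‖
              ≤ ‖Winv t‖ * (l t * ‖x t‖ + Fhat) :=
                e1.trans (mul_le_mul_of_nonneg_left e2 (norm_nonneg _))
            _ ≤ ‖Winv t‖ * (l t * (‖W t‖ * ‖z t‖) + Fhat) := by
                apply mul_le_mul_of_nonneg_left _ (norm_nonneg _)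
                exact add_le_add_left (mul_le_mul_of_nonneg_left e3 (hl0 t)) _
            _ = k t * l t * ‖z t‖ + g t := by
                simp only [hgdef]
                rw [hWinv_norm, hWt, Real.exp_neg]
                field_simp
        rw [heqz] at e4
        linarith
      have := image_norm_le_of_norm_deriv_right_lt_deriv_boundary hzcont hz_icc ha
        (fun t => hBd ε t) bound (Set.right_mem_Icc.2 hT)
      exact this
    -- let ε → 0
    set J : ℝ := ∫ s in t₀..T, g s * Real.exp (-R s) with hJdef
    set J2 : ℝ := ∫ s in t₀..T, Real.exp (-R s) with hJ2def
    have hJ2nn : 0 ≤ J2 :=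
      intervalIntegral.integral_nonneg hT (fun s _ => Real.exp_nonneg _)
    have hBexp : ∀ ε : ℝ, B ε T = Real.exp (R T) * (C + J) + ε * (Real.exp (R T) * J2) := by
      intro ε
      simp only [hBdef, hJdef, hJ2def]
      rw [show (fun s => (g s + ε) * Real.exp (-R s))
          = fun s => g s * Real.exp (-R s) + ε * Real.exp (-R s) from funext fun s => by ring]
      rw [intervalIntegral.integral_add (f := fun s => g s * Real.exp (-R s))
          (g := fun s => ε * Real.exp (-R s)) ((hgc.mul hRc.neg.rexp).intervalIntegrable _ _)
        ((continuous_const.mul hRc.neg.rexp).intervalIntegrable _ _),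
        intervalIntegral.integral_const_mul]
      ring
    have hzT : ‖z T‖ ≤ Real.exp (R T) * (C + J) := by
      apply le_of_forall_pos_le_add
      intro ε' hε'
      set c := Real.exp (R T) * J2 with hcdef
      have hc0 : 0 ≤ c := mul_nonneg (Real.exp_nonneg _) hJ2nn
      have hδ : 0 < ε' / (c + 1) := div_pos hε' (by linarith)
      have h1 := hgron _ hδ
      rw [hBexp] at h1
      have h2 : ε' / (c + 1) * c ≤ ε' := by
        rw [div_mul_eq_mul_div, div_le_iff₀ (by linarith : (0:ℝ) < c + 1)]
        nlinarith
      linarith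
    -- pass to x
    have hxT : ‖x T‖ ≤ Real.exp (P T) * (Real.exp (R T) * (C + J)) := by
      have e3 : ‖x T‖ ≤ ‖W T‖ * ‖z T‖ := by
        conv_lhs => rw [show x T = W T (z T) from (hW_app T (x T)).symm]
        exact ContinuousLinearMap.le_opNorm _ _
      calc ‖x T‖ ≤ ‖W T‖ * ‖z T‖ := e3
        _ = Real.exp (P T) * ‖z T‖ := by rw [hWP T hT]
        _ ≤ Real.exp (P T) * (Real.exp (R T) * (C + J)) :=
            mul_le_mul_of_nonneg_left hzT (Real.exp_nonneg _)
    have hsplit : Real.exp (P T) * (Real.exp (R T) * (C + J))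
        = C * Real.exp (P T - P t₀ + (R T - R t₀))
          + ∫ s in t₀..T, k s * Fhat * Real.exp (P T - P s + (R T - R s)) := by
      have hpt : ∀ s : ℝ, Real.exp (P T) * (Real.exp (R T) * (g s * Real.exp (-R s)))
          = k s * Fhat * Real.exp (P T - P s + (R T - R s)) := by
        intro s
        simp only [hgdef]
        rw [Real.exp_add, Real.exp_sub, Real.exp_sub, Real.exp_neg, Real.exp_neg]
        field_simp
      rw [hP0, hR0]
      rw [show ∫ s in t₀..T, k s * Fhat * Real.exp (P T - P s + (R T - R s))
          = ∫ s in t₀..T, Real.exp (P T) * (Real.exp (R T) * (g s * Real.exp (-R s))) from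
        intervalIntegral.integral_congr fun s _ => (hpt s).symm]
      rw [show (fun s => Real.exp (P T) * (Real.exp (R T) * (g s * Real.exp (-R s))))
          = fun s => (Real.exp (P T) * Real.exp (R T)) * (g s * Real.exp (-R s)) from
        funext fun s => by ring]
      rw [intervalIntegral.integral_const_mul]
      simp only [hJdef]
      rw [show P T - 0 + (R T - 0) = P T + R T from by ring, Real.exp_add]
      ring
    have hmono : (∫ s in t₀..T, k s * Fhat * Real.exp (P T - P s + (R T - R s)))
        ≤ ∫ s in t₀..T, khat * Fhat * (Dhat * Real.exp (-ρ * (T - s))) := by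
      apply intervalIntegral.integral_mono_on hT
      · exact ((hkc.mul continuous_const).mul
          (((continuous_const.sub hPc).add (continuous_const.sub hRc)).rexp)).intervalIntegrable _ _
      · exact (continuous_const.mul (continuous_const.mul
          ((continuous_const.mul (continuous_const.sub continuous_id)).rexp))).intervalIntegrable _ _
      · intro s hs
        have h1 : k s ≤ khat := hkb s hs.1
        have h2 : Real.exp (P T - P s + (R T - R s)) ≤ Dhat * Real.exp (-ρ * (T - s)) :=
          hPRbound s T hs.1 hs.2
        calc k s * Fhat * Real.exp (P T - P s + (R T - R s))
            ≤ khat * Fhat * Real.exp (P T - P s + (R T - R s)) := by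
              apply mul_le_mul_of_nonneg_right _ (Real.exp_nonneg _)
              exact mul_le_mul_of_nonneg_right h1 hFhat
          _ ≤ khat * Fhat * (Dhat * Real.exp (-ρ * (T - s))) := by
              apply mul_le_mul_of_nonneg_left h2
              exact mul_nonneg (by linarith) hFhat
    have hexpint : (∫ s in t₀..T, Real.exp (-ρ * (T - s)))
        = (1 - Real.exp (-ρ * (T - t₀))) / ρ := by
      have hd : ∀ s ∈ Set.uIcc t₀ T,
          HasDerivAt (fun s => Real.exp (-ρ * (T - s)) / ρ) (Real.exp (-ρ * (T - s))) s := by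
        intro s _
        have h1 : HasDerivAt (fun s : ℝ => -ρ * (T - s)) ρ s := by
          have := ((hasDerivAt_id s).const_sub T).const_mul (-ρ)
          refine this.congr_deriv ?_
          ring
        have h2 := (h1.exp).div_const ρ
        refine h2.congr_deriv ?_
        field_simp
      rw [intervalIntegral.integral_eq_sub_of_hasDerivAt hd
        (((continuous_const.mul (continuous_const.sub continuous_id)).rexp).intervalIntegrable _ _)]
      rw [sub_self, mul_zero, Real.exp_zero]
      ring
    have hC1 : C * Real.exp (P T - P t₀ + (R T - R t₀)) ≤ C * (Dhat * Real.exp (-ρ * (T - t₀))) :=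
      mul_le_mul_of_nonneg_left (hPRbound t₀ T le_rfl hT) hC0
    have hint2 : (∫ s in t₀..T, khat * Fhat * (Dhat * Real.exp (-ρ * (T - s))))
        = khat * Fhat * Dhat * ((1 - Real.exp (-ρ * (T - t₀))) / ρ) := by
      rw [show (fun s => khat * Fhat * (Dhat * Real.exp (-ρ * (T - s))))
          = fun s => (khat * Fhat * Dhat) * Real.exp (-ρ * (T - s)) from
        funext fun s => by ring]
      rw [intervalIntegral.integral_const_mul, hexpint]
    have : ‖x T‖ ≤ C * (Dhat * Real.exp (-ρ * (T - t₀)))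
        + khat * Fhat * Dhat * ((1 - Real.exp (-ρ * (T - t₀))) / ρ) := by
      calc ‖x T‖ ≤ Real.exp (P T) * (Real.exp (R T) * (C + J)) := hxT
        _ = C * Real.exp (P T - P t₀ + (R T - R t₀))
            + ∫ s in t₀..T, k s * Fhat * Real.exp (P T - P s + (R T - R s)) := hsplit
        _ ≤ C * (Dhat * Real.exp (-ρ * (T - t₀)))
            + khat * Fhat * Dhat * ((1 - Real.exp (-ρ * (T - t₀))) / ρ) := by
            rw [← hint2]
            exact add_le_add hC1 hmono
    calc ‖x T‖ ≤ C * (Dhat * Real.exp (-ρ * (T - t₀)))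
          + khat * Fhat * Dhat * ((1 - Real.exp (-ρ * (T - t₀))) / ρ) := this
      _ = Dhat * C * Real.exp (-ρ * (T - t₀))
          + Dhat * Fhat * khat / ρ * (1 - Real.exp (-ρ * (T - t₀))) := by ring
  refine ⟨fun t ht => key t ht, ?_⟩
  -- limsup part
  have htend : Filter.Tendsto (fun t => Real.exp (-ρ * (t - t₀))) Filter.atTop (nhds 0) := by
    apply Real.tendsto_exp_atBot.comp
    rw [Filter.tendsto_const_mul_atBot_of_neg (by linarith : -ρ < 0)]
    exact Filter.tendsto_atTop_add_const_right _ (-t₀) Filter.tendsto_id |>.congr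
      (fun t => by simp only [id_eq]; ring)
  have hgt : Filter.Tendsto (fun t => Dhat * C * Real.exp (-ρ * (t - t₀))
      + Dhat * Fhat * khat / ρ * (1 - Real.exp (-ρ * (t - t₀)))) Filter.atTop
      (nhds (Dhat * Fhat * khat / ρ)) := by
    have hbase := (htend.const_mul (Dhat * C)).add
      (((tendsto_const_nhds (α := ℝ) (f := Filter.atTop) (x := (1:ℝ))).sub htend).const_mul
        (Dhat * Fhat * khat / ρ))
    simpa using hbase
  have h1 : Filter.limsup (fun t => ‖x t‖) Filter.atTop
      ≤ Filter.limsup (fun t => Dhat * C * Real.exp (-ρ * (t - t₀))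
        + Dhat * Fhat * khat / ρ * (1 - Real.exp (-ρ * (t - t₀)))) Filter.atTop := by
    apply Filter.limsup_le_limsup
    · filter_upwards [Filter.eventually_ge_atTop t₀] with t ht using key t ht
    · exact Filter.isCoboundedUnder_le_of_le Filter.atTop (fun t => norm_nonneg _)
    · exact hgt.isBoundedUnder_le
  rw [hgt.limsup_eq] at h1
  exact h1
end

section
/- (Theorem 3, unstable fixed point.) In the extended-Lipschitz setting with F ≡ 0, suppose there are constants p̂ < 0 and k̂ ≥ 1 and a function L̂ : ℝ → ℝ (continuous, nondecreasing, locally Lipschitz, L̂(0) = 0) such that p(t) ≤ p̂, 1 ≤ k(t) ≤ k̂ and L(t, X) ≤ L̂(X) for all t ≥ t₀ and X ≥ 0. Define Q(X) = p̂ X + k̂ L̂(X) and suppose d > 0 satisfies Q(X) < 0 for all X ∈ (0, d). Then every solution x of ẋ = A(t)x + f(t,x) with ‖(W t₀)⁻¹ (x t₀)‖ < d satisfies ‖x(t)‖ < d for all t ≥ t₀ and ‖x(t)‖ → 0 as t → ∞; i.e., the open set {x₀ : ‖(W t₀)⁻¹ x₀‖ < d} is contained in the stability basin of the trivial solution. 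-/
open Set Filter Topology


lemma aux_inverse_hasDerivAt {R : Type*} [NormedRing R] [NormedAlgebra ℝ R] [CompleteSpace R]
    (W Winv D : ℝ → R) (h1 : ∀ t, W t * Winv t = 1) (h2 : ∀ t, Winv t * W t = 1)
    (hW : ∀ t, HasDerivAt W (D t) t) (t : ℝ) :
    HasDerivAt Winv (-(Winv t * D t * Winv t)) t := by
  have h0 : HasFDerivAt (Ring.inverse : R → R)
      (-(ContinuousLinearMap.mulLeftRight ℝ R (Winv t) (Winv t))) (W t) :=
    hasFDerivAt_ringInverse ⟨W t, Winv t, h1 t, h2 t⟩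
  have h := h0.comp_hasDerivAt t (hW t)
  have h3 : (fun s => Ring.inverse (W s)) = Winv := by
    funext s
    exact Ring.inverse_unit ⟨W s, Winv s, h1 s, h2 s⟩
  rw [Function.comp_def, h3] at h
  simpa [ContinuousLinearMap.mulLeftRight_apply] using h

/-- Theorem 3, unstable fixed point: in the extended-Lipschitz setting with `F ≡ 0`,
bounds `p(t) ≤ p̂ < 0`, `1 ≤ k(t) ≤ k̂`, `L(t,X) ≤ L̂(X)`, if `Q(X) = p̂ X + k̂ L̂(X)`
is negative on `(0, d)`, then every solution of `ẋ = A(t)x + f(t,x)` with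
`‖(W t₀)⁻¹ x(t₀)‖ < d` stays in norm below `d` and tends to `0`. -/
theorem theorem3_unstable_fixed_point
    {n : ℕ} (hn : 1 ≤ n)
    (A : ℝ → (EuclideanSpace ℝ (Fin n) →L[ℝ] EuclideanSpace ℝ (Fin n)))
    (hA : Continuous A)
    (f : ℝ → EuclideanSpace ℝ (Fin n) → EuclideanSpace ℝ (Fin n))
    (hf : Continuous fun q : ℝ × EuclideanSpace ℝ (Fin n) => f q.1 q.2)
    (W Winv : ℝ → (EuclideanSpace ℝ (Fin n) →L[ℝ] EuclideanSpace ℝ (Fin n)))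
    (hWinv₁ : ∀ t, (W t).comp (Winv t) = ContinuousLinearMap.id ℝ (EuclideanSpace ℝ (Fin n)))
    (hWinv₂ : ∀ t, (Winv t).comp (W t) = ContinuousLinearMap.id ℝ (EuclideanSpace ℝ (Fin n)))
    (hWinv_cont : Continuous Winv)
    (hW_deriv : ∀ t, HasDerivAt W ((A t).comp (W t)) t)
    (t₀ : ℝ) (hWnorm : ‖W t₀‖ = 1)
    (p : ℝ → ℝ) (hp : Continuous p)
    (hWp : ∀ t ≥ t₀, ‖W t‖ = Real.exp (∫ s in t₀..t, p s))
    (k : ℝ → ℝ) (hk : ∀ t, k t = ‖W t‖ * ‖Winv t‖)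
    -- extended-Lipschitz setting
    (L : ℝ → ℝ → ℝ) (hL : Continuous fun q : ℝ × ℝ => L q.1 q.2)
    (hL0 : ∀ t, L t 0 = 0)
    (hLmono : ∀ t, Monotone (L t))
    (hLlip : ∀ t, LocallyLipschitz (L t))
    (hfL : ∀ t ≥ t₀, ∀ y : EuclideanSpace ℝ (Fin n), ‖f t y‖ ≤ L t ‖y‖)
    -- bounds by constants and an autonomous majorant
    (phat khat : ℝ) (hphat : phat < 0) (hkhat : 1 ≤ khat)
    (Lhat : ℝ → ℝ) (hLhat_cont : Continuous Lhat) (hLhat_mono : Monotone Lhat)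
    (hLhat_lip : LocallyLipschitz Lhat) (hLhat0 : Lhat 0 = 0)
    (hpb : ∀ t ≥ t₀, p t ≤ phat)
    (hkb : ∀ t ≥ t₀, 1 ≤ k t ∧ k t ≤ khat)
    (hLb : ∀ t ≥ t₀, ∀ X ≥ (0 : ℝ), L t X ≤ Lhat X)
    (Q : ℝ → ℝ) (hQdef : ∀ X, Q X = phat * X + khat * Lhat X)
    (d : ℝ) (hd : 0 < d)
    (hQneg : ∀ X ∈ Set.Ioo (0 : ℝ) d, Q X < 0) :
    ∀ x : ℝ → EuclideanSpace ℝ (Fin n),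
      (∀ t ≥ t₀, HasDerivAt x (A t (x t) + f t (x t)) t) →
      ‖(Winv t₀) (x t₀)‖ < d →
      (∀ t ≥ t₀, ‖x t‖ < d) ∧
        Filter.Tendsto (fun t => ‖x t‖) Filter.atTop (nhds 0) := by
  intro x hx hx0
  -- basic algebraic facts
  have hWV : ∀ s (v : EuclideanSpace ℝ (Fin n)), W s (Winv s v) = v := by
    intro s v
    have := ContinuousLinearMap.ext_iff.1 (hWinv₁ s) v
    simpa using this
  -- derivative of Winv
  have hWinv_deriv : ∀ t, HasDerivAt Winv (-((Winv t).comp (A t))) t := by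
    intro t
    have h := aux_inverse_hasDerivAt W Winv (fun s => (A s).comp (W s))
      (fun s => hWinv₁ s) (fun s => hWinv₂ s) hW_deriv t
    refine h.congr_deriv ?_
    ext v
    simp [ContinuousLinearMap.mul_apply, hWV]
  set z : ℝ → EuclideanSpace ℝ (Fin n) := fun t => Winv t (x t) with hz
  have hz_deriv : ∀ t, t₀ ≤ t → HasDerivAt z (Winv t (f t (x t))) t := by
    intro t ht
    have h := (hWinv_deriv t).clm_apply (hx t ht)
    refine h.congr_deriv ?_
    simp [map_add]
  set g : ℝ → ℝ := fun t => Real.exp (∫ s in t₀..t, p s) with hg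
  have hg_deriv : ∀ t, HasDerivAt g (p t * g t) t := by
    intro t
    have h : HasDerivAt (fun u => ∫ s in t₀..u, p s) (p t) t :=
      intervalIntegral.integral_hasDerivAt_right (hp.intervalIntegrable _ _)
        hp.aestronglyMeasurable.stronglyMeasurableAtFilter hp.continuousAt
    simpa [hg, mul_comm] using h.exp
  have hg_pos : ∀ t, 0 < g t := fun t => Real.exp_pos _
  have hg_cont : Continuous g := continuous_iff_continuousAt.2 fun t => (hg_deriv t).continuousAt
  have hgW : ∀ t, t₀ ≤ t → g t = ‖W t‖ := fun t ht => (hWp t ht).symm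
  set φ : ℝ → ℝ := fun t => g t * ‖z t‖ with hφ
  have hφ_nonneg : ∀ t, 0 ≤ φ t := fun t =>
    mul_nonneg (hg_pos t).le (norm_nonneg _)
  have hφ_contAt : ∀ t, t₀ ≤ t → ContinuousAt φ t := fun t ht =>
    hg_cont.continuousAt.mul (hz_deriv t ht).continuousAt.norm
  have hxz : ∀ t, x t = W t (z t) := fun t => (hWV t (x t)).symm
  have hxφ : ∀ t, t₀ ≤ t → ‖x t‖ ≤ φ t := by
    intro t ht
    calc ‖x t‖ = ‖W t (z t)‖ := by rw [← hxz]
      _ ≤ ‖W t‖ * ‖z t‖ := (W t).le_opNorm _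
      _ = g t * ‖z t‖ := by rw [hgW t ht]
      _ = φ t := rfl
  have hLhat_nonneg : ∀ X, 0 ≤ X → 0 ≤ Lhat X := by
    intro X hX; rw [← hLhat0]; exact hLhat_mono hX
  -- the key Dini-derivative (slope) estimate
  have key : ∀ t, t₀ ≤ t → ∀ r, Q (φ t) < r → ∃ᶠ y in 𝓝[>] t, slope φ t y < r := by
    intro t ht r hr
    set D : ℝ := g t * ‖Winv t (f t (x t))‖ + ‖z t‖ * (p t * g t) with hD
    have hDle : D ≤ Q (φ t) := by
      have h1 : ‖Winv t (f t (x t))‖ ≤ ‖Winv t‖ * L t ‖x t‖ := by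
        calc ‖Winv t (f t (x t))‖ ≤ ‖Winv t‖ * ‖f t (x t)‖ := (Winv t).le_opNorm _
          _ ≤ ‖Winv t‖ * L t ‖x t‖ :=
            mul_le_mul_of_nonneg_left (hfL t ht (x t)) (norm_nonneg _)
      have hL_nonneg : 0 ≤ L t ‖x t‖ := by
        rw [← hL0 t]; exact hLmono t (norm_nonneg _)
      have h2 : g t * ‖Winv t (f t (x t))‖ ≤ k t * L t ‖x t‖ := by
        calc g t * ‖Winv t (f t (x t))‖ ≤ g t * (‖Winv t‖ * L t ‖x t‖) :=
              mul_le_mul_of_nonneg_left h1 (hg_pos t).le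
          _ = k t * L t ‖x t‖ := by rw [hk t, ← hgW t ht]; ring
      have hkt : k t ≤ khat := (hkb t ht).2
      have hkt0 : 0 ≤ k t := le_trans zero_le_one (hkb t ht).1
      have h3 : L t ‖x t‖ ≤ Lhat (φ t) :=
        le_trans (hLb t ht _ (norm_nonneg _)) (hLhat_mono (hxφ t ht))
      have h4 : k t * L t ‖x t‖ ≤ khat * Lhat (φ t) :=
        mul_le_mul hkt h3 hL_nonneg (le_trans zero_le_one hkhat)
      have h5 : ‖z t‖ * (p t * g t) ≤ phat * φ t := by
        have : ‖z t‖ * (p t * g t) = p t * φ t := by rw [hφ]; ring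
        rw [this]
        exact mul_le_mul_of_nonneg_right (hpb t ht) (hφ_nonneg t)
      rw [hQdef]
      have := add_le_add (le_trans h2 h4) h5
      linarith
    have hslope_z : Tendsto (fun y => ‖slope z t y‖) (𝓝[>] t) (𝓝 ‖Winv t (f t (x t))‖) := by
      have := hasDerivAt_iff_tendsto_slope.1 (hz_deriv t ht)
      exact (this.mono_left (nhdsWithin_mono _ fun y hy => ne_of_gt hy)).norm
    have hslope_g : Tendsto (fun y => slope g t y) (𝓝[>] t) (𝓝 (p t * g t)) := by
      have := hasDerivAt_iff_tendsto_slope.1 (hg_deriv t)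
      exact this.mono_left (nhdsWithin_mono _ fun y hy => ne_of_gt hy)
    have hgy : Tendsto g (𝓝[>] t) (𝓝 (g t)) :=
      hg_cont.continuousAt.tendsto.mono_left nhdsWithin_le_nhds
    have h1 : Tendsto (fun y => g y * ‖slope z t y‖ + ‖z t‖ * slope g t y) (𝓝[>] t) (𝓝 D) :=
      (hgy.mul hslope_z).add (tendsto_const_nhds.mul hslope_g)
    have h3 : ∀ᶠ y in 𝓝[>] t, g y * ‖slope z t y‖ + ‖z t‖ * slope g t y < r :=
      h1.eventually (Filter.Tendsto.eventually_lt_const (lt_of_le_of_lt hDle hr) tendsto_id)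
    have h2 : ∀ᶠ y in 𝓝[>] t, slope φ t y ≤ g y * ‖slope z t y‖ + ‖z t‖ * slope g t y := by
      filter_upwards [self_mem_nhdsWithin] with y hy
      have hyt : (0:ℝ) < y - t := sub_pos.2 hy
      have e1 : slope φ t y = g y * ((‖z y‖ - ‖z t‖) / (y - t)) + ‖z t‖ * slope g t y := by
        rw [slope_def_field, slope_def_field]
        field_simp
        ring
      have e2 : (‖z y‖ - ‖z t‖) / (y - t) ≤ ‖slope z t y‖ := by
        rw [div_le_iff₀ hyt]
        have e3 : ‖slope z t y‖ * (y - t) = ‖z y - z t‖ := by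
          rw [slope, vsub_eq_sub, norm_smul, norm_inv, Real.norm_eq_abs, abs_of_pos hyt]
          field_simp
        rw [e3]
        exact norm_sub_norm_le _ _
      rw [e1]
      exact add_le_add_left (mul_le_mul_of_nonneg_left e2 (hg_pos y).le) _
    exact ((h3.and h2).mono fun y hy => lt_of_le_of_lt hy.2 hy.1).frequently
  -- constant barrier
  have step1 : ∀ t₁, t₀ ≤ t₁ → ∀ c, 0 < c → c < d → φ t₁ ≤ c → ∀ t, t₁ ≤ t → φ t ≤ c := by
    intro t₁ ht₁ c hc hcd hφc t ht
    have := image_le_of_liminf_slope_right_lt_deriv_boundary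
      (f := φ) (f' := fun s => Q (φ s)) (a := t₁) (b := t)
      (fun s hs => (hφ_contAt s (le_trans ht₁ hs.1)).continuousWithinAt)
      (fun s hs r hr => key s (le_trans ht₁ hs.1) r hr)
      (B := fun _ => c) (B' := fun _ => 0) hφc (fun s => hasDerivAt_const _ _)
      (fun s hs heq => by
        show Q (φ s) < 0
        rw [show φ s = c from heq]
        exact hQneg c ⟨hc, hcd⟩)
    exact this ⟨ht, le_rfl⟩
  have hφt₀ : φ t₀ = ‖z t₀‖ := by
    simp [hφ, hg, intervalIntegral.integral_same]
  have hφ0d : φ t₀ < d := by rw [hφt₀]; exact hx0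
  set M : ℝ := (φ t₀ + d) / 2 with hM
  have hMd : M < d := by rw [hM]; linarith
  have hM0 : 0 < M := by have := hφ_nonneg t₀; rw [hM]; linarith
  have hφM : ∀ t, t₀ ≤ t → φ t ≤ M :=
    step1 t₀ le_rfl M hM0 hMd (by rw [hM]; linarith)
  have hfirst : ∀ t ≥ t₀, ‖x t‖ < d := fun t ht =>
    lt_of_le_of_lt (le_trans (hxφ t ht) (hφM t ht)) hMd
  refine ⟨hfirst, ?_⟩
  -- antitone past t₀
  have hanti : ∀ t₁, t₀ ≤ t₁ → ∀ t, t₁ ≤ t → φ t ≤ φ t₁ := by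
    intro t₁ ht₁ t ht
    by_contra h
    push_neg at h
    have hφt₁d : φ t₁ < min (φ t) d := lt_min h (lt_of_le_of_lt (hφM t₁ ht₁) hMd)
    obtain ⟨c, hc1, hc2⟩ := exists_between hφt₁d
    have hc0 : 0 < c := lt_of_le_of_lt (hφ_nonneg t₁) hc1
    have := step1 t₁ ht₁ c hc0 (lt_of_lt_of_le hc2 (min_le_right _ _)) hc1.le t ht
    exact absurd this (not_le.2 (lt_of_lt_of_le hc2 (min_le_left _ _)))
  -- limit of φ
  set ψ : ℝ → ℝ := fun t => φ (max t t₀) with hψ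
  have hψ_anti : Antitone ψ := by
    intro s t hst
    exact hanti (max s t₀) (le_max_right _ _) (max t t₀) (max_le_max hst le_rfl)
  have hψ_bdd : BddBelow (Set.range ψ) := ⟨0, fun y ⟨t, ht⟩ => ht ▸ hφ_nonneg _⟩
  have hψ_tendsto : Tendsto ψ atTop (𝓝 (⨅ t, ψ t)) := tendsto_atTop_ciInf hψ_anti hψ_bdd
  set l : ℝ := ⨅ t, ψ t with hl
  have hφψ : ∀ᶠ t in atTop, φ t = ψ t := by
    filter_upwards [eventually_ge_atTop t₀] with t ht
    rw [hψ]; simp [max_eq_left ht]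
  have hφ_tendsto : Tendsto φ atTop (𝓝 l) :=
    hψ_tendsto.congr' (by filter_upwards [hφψ] with t ht using ht.symm)
  have hlφ : ∀ t, t₀ ≤ t → l ≤ φ t := by
    intro t ht
    have h1 : l ≤ ψ t := ciInf_le hψ_bdd t
    have h2 : ψ t = φ t := by
      show φ (max t t₀) = φ t
      rw [max_eq_left ht]
    rwa [h2] at h1
  have hl0 : 0 ≤ l :=
    ge_of_tendsto hφ_tendsto (by filter_upwards with t using hφ_nonneg t)
  have hlM : l ≤ M := le_trans (hlφ t₀ le_rfl) (hφM t₀ le_rfl)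
  -- show l = 0
  have hl_eq : l = 0 := by
    by_contra hne
    have hlpos : 0 < l := lt_of_le_of_ne hl0 (Ne.symm hne)
    -- negative maximum of Q on [l, M]
    have hQcont : Continuous Q := by
      have : Q = fun X => phat * X + khat * Lhat X := funext hQdef
      rw [this]
      exact (continuous_const.mul continuous_id).add (continuous_const.mul hLhat_cont)
    obtain ⟨X₀, hX₀S, hX₀max⟩ :=
      isCompact_Icc.exists_isMaxOn (Set.nonempty_Icc.2 hlM) hQcont.continuousOn
    have hQX₀ : Q X₀ < 0 := hQneg X₀ ⟨lt_of_lt_of_le hlpos hX₀S.1, lt_of_le_of_lt hX₀S.2 hMd⟩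
    set ε : ℝ := -Q X₀ with hε
    have hεpos : 0 < ε := by rw [hε]; linarith
    set b : ℝ := t₀ + (2 / ε) * (φ t₀ - l) + 2 with hb
    have hbt₀ : t₀ ≤ b := by
      have h1 : 0 ≤ (2 / ε) * (φ t₀ - l) :=
        mul_nonneg (by positivity) (by linarith [hlφ t₀ le_rfl])
      rw [hb]; linarith
    have hbound := image_le_of_liminf_slope_right_lt_deriv_boundary
      (f := φ) (f' := fun s => Q (φ s)) (a := t₀) (b := b)
      (fun s hs => (hφ_contAt s hs.1).continuousWithinAt)
      (fun s hs r hr => key s hs.1 r hr)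
      (B := fun s => φ t₀ + (-(ε/2)) * (s - t₀)) (B' := fun _ => -(ε/2))
      (by simp)
      (fun s => by
        simpa using (((hasDerivAt_id s).sub_const t₀).const_mul (-(ε/2))).const_add (φ t₀))
      (fun s hs _ => by
        have hsS : φ s ∈ Set.Icc l M := ⟨hlφ s hs.1, hφM s hs.1⟩
        have := hX₀max hsS
        have hQs : Q (φ s) ≤ -ε := by rw [hε]; simpa using this
        linarith)
    have hfb := hbound (Set.right_mem_Icc.2 hbt₀)
    have : φ b ≤ φ t₀ + (-(ε/2)) * (b - t₀) := hfb
    have hbval : (-(ε/2)) * (b - t₀) = -(φ t₀ - l) - ε := by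
      rw [hb]
      field_simp
      ring
    rw [hbval] at this
    have := hlφ b hbt₀
    linarith
  rw [hl_eq] at hφ_tendsto
  exact squeeze_zero' (by filter_upwards with t using norm_nonneg _)
    (by filter_upwards [eventually_ge_atTop t₀] with t ht using hxφ t ht) hφ_tendsto
end

section
/- (Theorem 3, stable fixed point.) In the extended-Lipschitz setting with F ≡ 0 and with p̂ < 0, k̂ ≥ 1, L̂ as above (p(t) ≤ p̂, 1 ≤ k(t) ≤ k̂, L(t, X) ≤ L̂(X)), define Q(X) = p̂ X + k̂ L̂(X) and suppose d > 0 satisfies Q(d) = 0, Q(X) > 0 for all X ∈ (0, d), and Q(X) < 0 for all X > d. Then every solution x of ẋ = A(t)x + f(t,x) with ‖(W t₀)⁻¹ (x t₀)‖ ≤ d satisfies ‖x(t)‖ ≤ d for all t ≥ t₀, and every solution (regardless of initial condition) satisfies limsup_{t → ∞} ‖x(t)‖ ≤ d. -/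
open Set Filter Real

lemma slope_aux {V : Type*} [NormedAddCommGroup V] [NormedSpace ℝ V]
    {E : ℝ → ℝ} {y : ℝ → V} {τ : ℝ} {E' : ℝ} {y' : V}
    (hE : HasDerivAt E E' τ) (hEpos : ∀ z, 0 < E z) (hy : HasDerivAt y y' τ)
    (r : ℝ) (hr : ‖y τ‖ * E' + E τ * ‖y'‖ < r) :
    ∃ᶠ z in nhdsWithin τ (Set.Ioi τ), slope (fun z => E z * ‖y z‖) τ z < r := by
  have hmono : nhdsWithin τ (Set.Ioi τ) ≤ nhdsWithin τ {τ}ᶜ :=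
    nhdsWithin_mono τ (fun z hz => Set.mem_compl_singleton_iff.mpr (LT.lt.ne' hz))
  have h1 : Tendsto (slope E τ) (nhdsWithin τ (Set.Ioi τ)) (nhds E') :=
    (hasDerivAt_iff_tendsto_slope.mp hE).mono_left hmono
  have h2 : Tendsto (fun z => ‖slope y τ z‖) (nhdsWithin τ (Set.Ioi τ)) (nhds ‖y'‖) :=
    (continuous_norm.continuousAt.tendsto.comp
      ((hasDerivAt_iff_tendsto_slope.mp hy).mono_left hmono))
  have h3 : Tendsto E (nhdsWithin τ (Set.Ioi τ)) (nhds (E τ)) :=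
    hE.continuousAt.continuousWithinAt
  have hh : Tendsto (fun z => ‖y τ‖ * slope E τ z + E z * ‖slope y τ z‖)
      (nhdsWithin τ (Set.Ioi τ)) (nhds (‖y τ‖ * E' + E τ * ‖y'‖)) :=
    (tendsto_const_nhds.mul h1).add (h3.mul h2)
  have hev : ∀ᶠ z in nhdsWithin τ (Set.Ioi τ),
      ‖y τ‖ * slope E τ z + E z * ‖slope y τ z‖ < r := hh.eventually_lt_const hr
  have hle : ∀ᶠ z in nhdsWithin τ (Set.Ioi τ), slope (fun z => E z * ‖y z‖) τ z ≤
      ‖y τ‖ * slope E τ z + E z * ‖slope y τ z‖ := by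
    filter_upwards [self_mem_nhdsWithin] with z hz
    have hzτ : (0:ℝ) < z - τ := sub_pos.mpr hz
    rw [slope_def_field, slope_def_field]
    rw [slope, norm_smul]
    have hns : ‖(z - τ)⁻¹‖ = (z - τ)⁻¹ := by
      rw [Real.norm_eq_abs, abs_of_pos (inv_pos.mpr hzτ)]
    rw [hns]
    have key : E z * ‖y z‖ - E τ * ‖y τ‖ ≤
        E z * ‖y z - y τ‖ + ‖y τ‖ * (E z - E τ) := by
      have h4 : ‖y z‖ - ‖y τ‖ ≤ ‖y z - y τ‖ := norm_sub_norm_le _ _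
      nlinarith [(hEpos z).le]
    calc (E z * ‖y z‖ - E τ * ‖y τ‖) / (z - τ)
        ≤ (E z * ‖y z - y τ‖ + ‖y τ‖ * (E z - E τ)) / (z - τ) :=
          div_le_div_of_nonneg_right key hzτ.le
      _ = ‖y τ‖ * ((E z - E τ) / (z - τ)) + E z * ((z - τ)⁻¹ * ‖y z - y τ‖) := by
          field_simp; ring
  exact ((hle.and hev).mono (fun z ⟨a, b⟩ => lt_of_le_of_lt a b)).frequently

/-- Theorem 3, stable fixed point: in the extended-Lipschitz setting with `F ≡ 0`, bounds
`p(t) ≤ p̂ < 0`, `1 ≤ k(t) ≤ k̂`, `L(t,X) ≤ L̂(X)`, if `Q(X) = p̂ X + k̂ L̂(X)` has a stable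
positive zero `d` (`Q > 0` on `(0, d)`, `Q < 0` on `(d, ∞)`), then every solution of
`ẋ = A(t)x + f(t,x)` with `‖(W t₀)⁻¹ x(t₀)‖ ≤ d` stays in norm below `d`, and every
solution satisfies `limsup_{t→∞} ‖x(t)‖ ≤ d`. -/
theorem theorem3_stable_fixed_point
    {n : ℕ} (hn : 1 ≤ n)
    (A : ℝ → (EuclideanSpace ℝ (Fin n) →L[ℝ] EuclideanSpace ℝ (Fin n)))
    (hA : Continuous A)
    (f : ℝ → EuclideanSpace ℝ (Fin n) → EuclideanSpace ℝ (Fin n))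
    (hf : Continuous fun q : ℝ × EuclideanSpace ℝ (Fin n) => f q.1 q.2)
    (W Winv : ℝ → (EuclideanSpace ℝ (Fin n) →L[ℝ] EuclideanSpace ℝ (Fin n)))
    (hWinv₁ : ∀ t, (W t).comp (Winv t) = ContinuousLinearMap.id ℝ (EuclideanSpace ℝ (Fin n)))
    (hWinv₂ : ∀ t, (Winv t).comp (W t) = ContinuousLinearMap.id ℝ (EuclideanSpace ℝ (Fin n)))
    (hWinv_cont : Continuous Winv)
    (hW_deriv : ∀ t, HasDerivAt W ((A t).comp (W t)) t)
    (t₀ : ℝ) (hWnorm : ‖W t₀‖ = 1)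
    (p : ℝ → ℝ) (hp : Continuous p)
    (hWp : ∀ t ≥ t₀, ‖W t‖ = Real.exp (∫ s in t₀..t, p s))
    (k : ℝ → ℝ) (hk : ∀ t, k t = ‖W t‖ * ‖Winv t‖)
    -- extended-Lipschitz setting
    (L : ℝ → ℝ → ℝ) (hL : Continuous fun q : ℝ × ℝ => L q.1 q.2)
    (hL0 : ∀ t, L t 0 = 0)
    (hLmono : ∀ t, Monotone (L t))
    (hLlip : ∀ t, LocallyLipschitz (L t))
    (hfL : ∀ t ≥ t₀, ∀ y : EuclideanSpace ℝ (Fin n), ‖f t y‖ ≤ L t ‖y‖)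
    -- bounds by constants and an autonomous majorant
    (phat khat : ℝ) (hphat : phat < 0) (hkhat : 1 ≤ khat)
    (Lhat : ℝ → ℝ) (hLhat_cont : Continuous Lhat) (hLhat_mono : Monotone Lhat)
    (hLhat_lip : LocallyLipschitz Lhat) (hLhat0 : Lhat 0 = 0)
    (hpb : ∀ t ≥ t₀, p t ≤ phat)
    (hkb : ∀ t ≥ t₀, 1 ≤ k t ∧ k t ≤ khat)
    (hLb : ∀ t ≥ t₀, ∀ X ≥ (0 : ℝ), L t X ≤ Lhat X)
    (Q : ℝ → ℝ) (hQdef : ∀ X, Q X = phat * X + khat * Lhat X)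
    (d : ℝ) (hd : 0 < d)
    (hQroot : Q d = 0)
    (hQpos : ∀ X ∈ Set.Ioo (0 : ℝ) d, 0 < Q X)
    (hQneg : ∀ X > d, Q X < 0) :
    (∀ x : ℝ → EuclideanSpace ℝ (Fin n),
        (∀ t ≥ t₀, HasDerivAt x (A t (x t) + f t (x t)) t) →
        ‖(Winv t₀) (x t₀)‖ ≤ d →
        ∀ t ≥ t₀, ‖x t‖ ≤ d) ∧
      ∀ x : ℝ → EuclideanSpace ℝ (Fin n),
        (∀ t ≥ t₀, HasDerivAt x (A t (x t) + f t (x t)) t) →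
        Filter.limsup (fun t => ‖x t‖) Filter.atTop ≤ d := by
  classical
  -- ring facts about W, Winv
  have h1 : ∀ s, W s * Winv s = 1 := hWinv₁
  have h2 : ∀ s, Winv s * W s = 1 := hWinv₂
  have hWid : ∀ t (v : EuclideanSpace ℝ (Fin n)), W t (Winv t v) = v := by
    intro t v
    have := ContinuousLinearMap.ext_iff.mp (hWinv₁ t) v
    simpa using this
  have hWinv_deriv : ∀ t, HasDerivAt Winv (-(Winv t * A t)) t := by
    intro t
    have hu : ∀ s, Ring.inverse (W s) = Winv s := fun s =>
      Ring.inverse_unit ⟨W s, Winv s, h1 s, h2 s⟩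
    have hD := (hasFDerivAt_ringInverse (𝕜 := ℝ)
      ⟨W t, Winv t, h1 t, h2 t⟩).comp_hasDerivAt t (hW_deriv t)
    have hthis : HasDerivAt (fun s => Ring.inverse (W s))
        (-(Winv t * ((A t).comp (W t)) * Winv t)) t := by
      simp [ContinuousLinearMap.mulLeftRight_apply] at hD
      exact hD
    rw [funext hu] at hthis
    have heq : Winv t * ((A t).comp (W t)) * Winv t = Winv t * A t := by
      rw [show (A t).comp (W t) = A t * W t from rfl, ← mul_assoc,
        mul_assoc (Winv t * A t), h1 t, mul_one]
    rwa [heq] at hthis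
  -- E and its properties
  set E : ℝ → ℝ := fun t => Real.exp (∫ s in t₀..t, p s) with hEdef
  have hE_deriv : ∀ t, HasDerivAt E (p t * E t) t := by
    intro t
    have hI : HasDerivAt (fun b => ∫ s in t₀..b, p s) (p t) t :=
      intervalIntegral.integral_hasDerivAt_right (hp.intervalIntegrable _ _)
        (hp.stronglyMeasurableAtFilter _ _) hp.continuousAt
    simpa [mul_comm] using hI.exp
  have hEpos : ∀ t, 0 < E t := fun t => Real.exp_pos _
  have hEcont : Continuous E := continuous_iff_continuousAt.mpr
    (fun t => (hE_deriv t).continuousAt)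
  have hE0 : E t₀ = 1 := by simp [hEdef]
  have hWE : ∀ t ≥ t₀, ‖W t‖ = E t := hWp
  have hLhat_nonneg : ∀ X, 0 ≤ X → 0 ≤ Lhat X := by
    intro X hX
    calc (0:ℝ) = Lhat 0 := hLhat0.symm
      _ ≤ Lhat X := hLhat_mono hX
  have hQcont : Continuous Q := by
    rw [funext hQdef]
    exact (continuous_const.mul continuous_id).add (continuous_const.mul hLhat_cont)
  -- the bound ‖xs t‖ ≤ u t
  have hxu : ∀ (xs : ℝ → EuclideanSpace ℝ (Fin n)) (t : ℝ), t₀ ≤ t →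
      ‖xs t‖ ≤ E t * ‖Winv t (xs t)‖ := by
    intro xs t ht
    calc ‖xs t‖ = ‖W t (Winv t (xs t))‖ := by rw [hWid]
      _ ≤ ‖W t‖ * ‖Winv t (xs t)‖ := (W t).le_opNorm _
      _ = E t * ‖Winv t (xs t)‖ := by rw [hWE t ht]
  -- the master comparison lemma
  have key : ∀ (xs : ℝ → EuclideanSpace ℝ (Fin n)),
      (∀ t ≥ t₀, HasDerivAt xs (A t (xs t) + f t (xs t)) t) →
      ∀ (t₁ : ℝ) (B B' : ℝ → ℝ),
        E t₀ * ‖Winv t₀ (xs t₀)‖ ≤ B t₀ →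
        ContinuousOn B (Set.Icc t₀ t₁) →
        (∀ τ ∈ Set.Ico t₀ t₁, HasDerivWithinAt B (B' τ) (Set.Ici τ) τ) →
        (∀ τ ∈ Set.Ico t₀ t₁, E τ * ‖Winv τ (xs τ)‖ = B τ →
          Q (E τ * ‖Winv τ (xs τ)‖) < B' τ) →
        ∀ t ∈ Set.Icc t₀ t₁, E t * ‖Winv t (xs t)‖ ≤ B t := by
    intro xs hx t₁ B B' hinit hBcont hB' hbound
    -- derivative of y = Winv · xs
    have hy_deriv : ∀ τ, t₀ ≤ τ →
        HasDerivAt (fun s => Winv s (xs s)) (Winv τ (f τ (xs τ))) τ := by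
      intro τ hτ
      have h := (hWinv_deriv τ).clm_apply (hx τ hτ)
      have heq : (-(Winv τ * A τ)) (xs τ) + (Winv τ) (A τ (xs τ) + f τ (xs τ))
          = Winv τ (f τ (xs τ)) := by
        simp [ContinuousLinearMap.mul_apply]
      rwa [heq] at h
    -- continuity of u on the interval
    have hxcont : ContinuousOn xs (Set.Ici t₀) :=
      fun t ht => (hx t ht).continuousAt.continuousWithinAt
    have hycont : ContinuousOn (fun s => Winv s (xs s)) (Set.Icc t₀ t₁) := by
      have : ContinuousOn (fun s => (Winv s, xs s)) (Set.Icc t₀ t₁) :=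
        (hWinv_cont.continuousOn).prodMk (hxcont.mono Set.Icc_subset_Ici_self)
      exact isBoundedBilinearMap_apply.continuous.comp_continuousOn this
    have hucont : ContinuousOn (fun t => E t * ‖Winv t (xs t)‖) (Set.Icc t₀ t₁) :=
      (hEcont.continuousOn).mul hycont.norm
    -- the slope bound function
    set f' : ℝ → ℝ := fun τ =>
      ‖Winv τ (xs τ)‖ * (p τ * E τ) + E τ * ‖Winv τ (f τ (xs τ))‖ with hf'def
    have hf' : ∀ τ ∈ Set.Ico t₀ t₁, ∀ r, f' τ < r →
        ∃ᶠ z in nhdsWithin τ (Set.Ioi τ),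
          slope (fun t => E t * ‖Winv t (xs t)‖) τ z < r := by
      intro τ hτ r hr
      exact slope_aux (hE_deriv τ) hEpos (hy_deriv τ hτ.1) r hr
    -- f' is below Q ∘ u
    have hQle : ∀ τ, t₀ ≤ τ → f' τ ≤ Q (E τ * ‖Winv τ (xs τ)‖) := by
      intro τ hτ
      set u : ℝ := E τ * ‖Winv τ (xs τ)‖ with hudef
      have hu0 : 0 ≤ u := mul_nonneg (hEpos τ).le (norm_nonneg _)
      have e1 : ‖Winv τ (f τ (xs τ))‖ ≤ ‖Winv τ‖ * ‖f τ (xs τ)‖ :=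
        (Winv τ).le_opNorm _
      have e2 : ‖f τ (xs τ)‖ ≤ L τ ‖xs τ‖ := hfL τ hτ _
      have e3 : L τ ‖xs τ‖ ≤ Lhat ‖xs τ‖ := hLb τ hτ _ (norm_nonneg _)
      have e4 : Lhat ‖xs τ‖ ≤ Lhat u := hLhat_mono (hxu xs τ hτ)
      have e5 : E τ * ‖Winv τ‖ = k τ := by rw [hk τ, hWE τ hτ]
      have e6 : k τ ≤ khat := (hkb τ hτ).2
      have hterm1 : ‖Winv τ (xs τ)‖ * (p τ * E τ) ≤ phat * u := by
        have : ‖Winv τ (xs τ)‖ * (p τ * E τ) = p τ * u := by rw [hudef]; ring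
        rw [this]
        exact mul_le_mul_of_nonneg_right (hpb τ hτ) hu0
      have hterm2 : E τ * ‖Winv τ (f τ (xs τ))‖ ≤ khat * Lhat u := by
        calc E τ * ‖Winv τ (f τ (xs τ))‖
            ≤ E τ * (‖Winv τ‖ * Lhat u) := by
              refine mul_le_mul_of_nonneg_left ?_ (hEpos τ).le
              exact e1.trans (mul_le_mul_of_nonneg_left ((e2.trans e3).trans e4)
                (norm_nonneg _))
          _ = k τ * Lhat u := by rw [← mul_assoc, e5]
          _ ≤ khat * Lhat u := mul_le_mul_of_nonneg_right e6 (hLhat_nonneg u hu0)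
      calc f' τ ≤ phat * u + khat * Lhat u := add_le_add hterm1 hterm2
        _ = Q u := (hQdef u).symm
    have hbound' : ∀ τ ∈ Set.Ico t₀ t₁, E τ * ‖Winv τ (xs τ)‖ = B τ → f' τ < B' τ :=
      fun τ hτ heq => lt_of_le_of_lt (hQle τ hτ.1) (hbound τ hτ heq)
    exact fun t ht => image_le_of_liminf_slope_right_lt_deriv_boundary'
      hucont hf' hinit hBcont hB' hbound' ht
  -- constant super-solutions
  have hconst : ∀ (xs : ℝ → EuclideanSpace ℝ (Fin n)),
      (∀ t ≥ t₀, HasDerivAt xs (A t (xs t) + f t (xs t)) t) →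
      ∀ C, d < C → E t₀ * ‖Winv t₀ (xs t₀)‖ ≤ C →
      ∀ t ≥ t₀, E t * ‖Winv t (xs t)‖ ≤ C := by
    intro xs hx C hdC hinit t ht
    refine key xs hx t (fun _ => C) (fun _ => 0) hinit continuousOn_const
      (fun τ _ => hasDerivWithinAt_const τ _ C) ?_ t ⟨ht, le_refl t⟩
    intro τ _ heq
    rw [heq]
    exact hQneg C hdC
  constructor
  · -- Part 1
    intro xs hx hxd t ht
    have hinit : E t₀ * ‖Winv t₀ (xs t₀)‖ ≤ d := by
      rw [hE0, one_mul]; exact hxd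
    have hud : E t * ‖Winv t (xs t)‖ ≤ d := by
      by_contra hcon
      push_neg at hcon
      have hd' : d < (d + E t * ‖Winv t (xs t)‖) / 2 := by linarith
      have := hconst xs hx _ hd' (hinit.trans hd'.le) t ht
      linarith
    exact (hxu xs t ht).trans hud
  · -- Part 2
    intro xs hx
    set c : ℝ := E t₀ * ‖Winv t₀ (xs t₀)‖ with hcdef
    set M : ℝ := max c d + 1 with hMdef
    have hdM : d < M := lt_of_le_of_lt (le_max_right c d) (lt_add_one _)
    have hcM : c ≤ M := (le_max_left c d).trans (lt_add_one _).le
    have hM : ∀ t ≥ t₀, E t * ‖Winv t (xs t)‖ ≤ M := hconst xs hx M hdM hcM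
    have hev : ∀ d' > d, ∀ᶠ t in Filter.atTop, ‖xs t‖ ≤ d' := by
      intro d' hd'
      by_cases hMd' : M ≤ d'
      · filter_upwards [Filter.eventually_ge_atTop t₀] with t ht
        exact ((hxu xs t ht).trans (hM t ht)).trans hMd'
      push_neg at hMd'
      -- d < d' < M
      obtain ⟨X₀, hX₀mem, hX₀max⟩ := isCompact_Icc.exists_isMaxOn
        (Set.nonempty_Icc.mpr hMd'.le) hQcont.continuousOn
      obtain ⟨ε, hε, hQIcc⟩ : ∃ ε : ℝ, 0 < ε ∧ ∀ X ∈ Set.Icc d' M, Q X ≤ -ε :=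
        ⟨-Q X₀, neg_pos.mpr (hQneg X₀ (lt_of_lt_of_le hd' hX₀mem.1)),
          fun X hX => by have h := hX₀max hX; simp only [Set.mem_setOf_eq] at h; linarith⟩
      obtain ⟨T, hlT⟩ : ∃ T : ℝ, ε / 2 * (T - t₀) = M - d' :=
        ⟨t₀ + 2 * (M - d') / ε, by have hε' : ε ≠ 0 := hε.ne'; field_simp; ring⟩
      set B : ℝ → ℝ := fun t => max d' (M - ε / 2 * (t - t₀)) with hBdef
      set B' : ℝ → ℝ := fun t => if t < T then -(ε / 2) else 0 with hB'def
      have hBle : ∀ t, t₀ ≤ t → B t ≤ M := by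
        intro t ht
        refine max_le hMd'.le ?_
        nlinarith
      have hBval : ∀ t, T ≤ t → B t = d' := by
        intro t ht
        refine max_eq_left ?_
        nlinarith [mul_nonneg hε.le (sub_nonneg.mpr ht)]
      have hBlin : ∀ t, t < T → B t = M - ε / 2 * (t - t₀) := by
        intro t ht
        refine max_eq_right ?_
        nlinarith [mul_pos hε (sub_pos.mpr ht)]
      have hub : ∀ t ≥ t₀, E t * ‖Winv t (xs t)‖ ≤ B t := by
        intro t ht
        refine key xs hx t B B' ?_ ?_ ?_ ?_ t ⟨ht, le_refl t⟩
        · have hBt₀ : B t₀ = max d' M := by rw [hBdef]; norm_num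
          rw [hBt₀]
          exact le_max_of_le_right hcM
        · exact (continuous_const.max (by fun_prop)).continuousOn
        · intro τ hτ
          by_cases hτT : τ < T
          · have hlin : HasDerivAt (fun z => M - ε / 2 * (z - t₀)) (-(ε / 2)) τ := by
              simpa using (((hasDerivAt_id τ).sub_const t₀).const_mul (ε / 2)).const_sub M
            have hEq : B =ᶠ[nhdsWithin τ (Set.Ici τ)] (fun z => M - ε / 2 * (z - t₀)) :=
              Filter.eventuallyEq_of_mem
                (mem_nhdsWithin_of_mem_nhds (Iio_mem_nhds hτT))
                (fun z hz => hBlin z hz)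
            have := (hlin.hasDerivWithinAt (s := Set.Ici τ)).congr_of_eventuallyEq
              hEq (hBlin τ hτT)
            simpa [hB'def, if_pos hτT] using this
          · push_neg at hτT
            have hconst' : HasDerivWithinAt (fun _ => d') (0:ℝ) (Set.Ici τ) τ :=
              hasDerivWithinAt_const τ _ d'
            have := hconst'.congr (fun z hz => hBval z (hτT.trans hz))
              (hBval τ hτT)
            simpa [hB'def, if_neg (not_lt.mpr hτT)] using this
        · intro τ hτ heq
          by_cases hτT : τ < T
          · have hQle' : Q (E τ * ‖Winv τ (xs τ)‖) ≤ -ε := by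
              apply hQIcc
              rw [heq]
              exact ⟨le_max_left _ _, hBle τ hτ.1⟩
            rw [hB'def]
            simp only [if_pos hτT]
            linarith
          · push_neg at hτT
            rw [hB'def]
            simp only [if_neg (not_lt.mpr hτT)]
            rw [heq, hBval τ hτT]
            exact hQneg d' hd'
      filter_upwards [Filter.eventually_ge_atTop (max t₀ T)] with t ht
      have ht₀ : t₀ ≤ t := (le_max_left _ _).trans ht
      have hTt : T ≤ t := (le_max_right _ _).trans ht
      calc ‖xs t‖ ≤ E t * ‖Winv t (xs t)‖ := hxu xs t ht₀
        _ ≤ B t := hub t ht₀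
        _ = d' := hBval t hTt
    have hcb : Filter.IsCoboundedUnder (· ≤ ·) Filter.atTop (fun t => ‖xs t‖) :=
      Filter.isCoboundedUnder_le_of_le Filter.atTop (fun t => norm_nonneg _)
    by_contra hcon
    push_neg at hcon
    have h1 := Filter.limsup_le_of_le hcb (hev ((d + Filter.limsup (fun t => ‖xs t‖) Filter.atTop) / 2) (by linarith))
    linarith
end

section
/- (Theorem 4, two simple roots.) In the extended-Lipschitz setting with forcing, suppose p̂ < 0, k̂ ≥ 1, F̂ > 0, L̂ as above satisfy p(t) ≤ p̂, 1 ≤ k(t) ≤ k̂, ‖F t‖ ≤ F̂ and L(t, X) ≤ L̂(X) for all t ≥ t₀, X ≥ 0. Define Q(X) = p̂ X + k̂ (L̂(X) + F̂) and suppose 0 < d₂ < d₁ satisfy Q(d₁) = Q(d₂) = 0, Q(X) > 0 for X ∈ [0, d₂), and Q(X) < 0 for X ∈ (d₂, d₁). Then for every solution x of ẋ = A(t)x + f(t,x) + F(t): (i) if ‖(W t₀)⁻¹ (x t₀)‖ ≤ d₁ then ‖x(t)‖ ≤ d₁ for all t ≥ t₀; (ii) if ‖(W t₀)⁻¹ (x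 t₀)‖ ≤ d₂ then ‖x(t)‖ ≤ d₂ for all t ≥ t₀; (iii) if ‖(W t₀)⁻¹ (x t₀)‖ < d₁ then limsup_{t → ∞} ‖x(t)‖ ≤ d₂. -/
open Set Filter Real
set_option maxHeartbeats 1600000
set_option synthInstance.maxHeartbeats 400000

/-- Theorem 4, two simple roots: with forcing, bounds `p(t) ≤ p̂ < 0`, `1 ≤ k(t) ≤ k̂`,
`‖F t‖ ≤ F̂`, `L(t,X) ≤ L̂(X)`, let `Q(X) = p̂ X + k̂ (L̂(X) + F̂)` have roots
`0 < d₂ < d₁` with `Q > 0` on `[0, d₂)` and `Q < 0` on `(d₂, d₁)`. Then solutions of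
`ẋ = A(t)x + f(t,x) + F(t)` starting with `‖(W t₀)⁻¹ x(t₀)‖ ≤ dᵢ` stay in norm below
`dᵢ`, and solutions starting with `‖(W t₀)⁻¹ x(t₀)‖ < d₁` satisfy
`limsup_{t→∞} ‖x(t)‖ ≤ d₂`. -/
theorem theorem4_two_simple_roots
    {n : ℕ} (hn : 1 ≤ n)
    (A : ℝ → (EuclideanSpace ℝ (Fin n) →L[ℝ] EuclideanSpace ℝ (Fin n)))
    (hA : Continuous A)
    (f : ℝ → EuclideanSpace ℝ (Fin n) → EuclideanSpace ℝ (Fin n))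
    (hf : Continuous fun q : ℝ × EuclideanSpace ℝ (Fin n) => f q.1 q.2)
    (F : ℝ → EuclideanSpace ℝ (Fin n)) (hF : Continuous F)
    (W Winv : ℝ → (EuclideanSpace ℝ (Fin n) →L[ℝ] EuclideanSpace ℝ (Fin n)))
    (hWinv₁ : ∀ t, (W t).comp (Winv t) = ContinuousLinearMap.id ℝ (EuclideanSpace ℝ (Fin n)))
    (hWinv₂ : ∀ t, (Winv t).comp (W t) = ContinuousLinearMap.id ℝ (EuclideanSpace ℝ (Fin n)))
    (hWinv_cont : Continuous Winv)
    (hW_deriv : ∀ t, HasDerivAt W ((A t).comp (W t)) t)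
    (t₀ : ℝ) (hWnorm : ‖W t₀‖ = 1)
    (p : ℝ → ℝ) (hp : Continuous p)
    (hWp : ∀ t ≥ t₀, ‖W t‖ = Real.exp (∫ s in t₀..t, p s))
    (k : ℝ → ℝ) (hk : ∀ t, k t = ‖W t‖ * ‖Winv t‖)
    -- extended-Lipschitz setting
    (L : ℝ → ℝ → ℝ) (hL : Continuous fun q : ℝ × ℝ => L q.1 q.2)
    (hL0 : ∀ t, L t 0 = 0)
    (hLmono : ∀ t, Monotone (L t))
    (hLlip : ∀ t, LocallyLipschitz (L t))
    (hfL : ∀ t ≥ t₀, ∀ y : EuclideanSpace ℝ (Fin n), ‖f t y‖ ≤ L t ‖y‖)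
    -- bounds by constants and an autonomous majorant
    (phat khat Fhat : ℝ) (hphat : phat < 0) (hkhat : 1 ≤ khat) (hFhat : 0 < Fhat)
    (Lhat : ℝ → ℝ) (hLhat_cont : Continuous Lhat) (hLhat_mono : Monotone Lhat)
    (hLhat_lip : LocallyLipschitz Lhat) (hLhat0 : Lhat 0 = 0)
    (hpb : ∀ t ≥ t₀, p t ≤ phat)
    (hkb : ∀ t ≥ t₀, 1 ≤ k t ∧ k t ≤ khat)
    (hFb : ∀ t ≥ t₀, ‖F t‖ ≤ Fhat)
    (hLb : ∀ t ≥ t₀, ∀ X ≥ (0 : ℝ), L t X ≤ Lhat X)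
    (Q : ℝ → ℝ) (hQdef : ∀ X, Q X = phat * X + khat * (Lhat X + Fhat))
    (d₁ d₂ : ℝ) (hd₂ : 0 < d₂) (hd : d₂ < d₁)
    (hQroot₁ : Q d₁ = 0) (hQroot₂ : Q d₂ = 0)
    (hQpos : ∀ X ∈ Set.Ico (0 : ℝ) d₂, 0 < Q X)
    (hQneg : ∀ X ∈ Set.Ioo d₂ d₁, Q X < 0)
    (x : ℝ → EuclideanSpace ℝ (Fin n))
    (hx : ∀ t ≥ t₀, HasDerivAt x (A t (x t) + f t (x t) + F t) t) :
    (‖(Winv t₀) (x t₀)‖ ≤ d₁ → ∀ t ≥ t₀, ‖x t‖ ≤ d₁) ∧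
      (‖(Winv t₀) (x t₀)‖ ≤ d₂ → ∀ t ≥ t₀, ‖x t‖ ≤ d₂) ∧
      (‖(Winv t₀) (x t₀)‖ < d₁ →
        Filter.limsup (fun t => ‖x t‖) Filter.atTop ≤ d₂) := by
  -- ## Derivative of `Winv`
  have hmul₁ : ∀ s, W s * Winv s = 1 := fun s => by
    rw [ContinuousLinearMap.mul_def, hWinv₁ s]; rfl
  have hmul₂ : ∀ s, Winv s * W s = 1 := fun s => by
    rw [ContinuousLinearMap.mul_def, hWinv₂ s]; rfl
  have hunit : ∀ s, IsUnit (W s) := fun s => ⟨⟨W s, Winv s, hmul₁ s, hmul₂ s⟩, rfl⟩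
  have hinv_eq : ∀ s, Winv s = Ring.inverse (W s) := fun s => by
    obtain ⟨v, hv⟩ := hunit s
    rw [← hv, Ring.inverse_unit]
    have h1 : Winv s * (v : _) = 1 := by rw [hv]; exact hmul₂ s
    calc Winv s = Winv s * (↑v * ↑v⁻¹) := by rw [v.mul_inv, mul_one]
    _ = ↑v⁻¹ := by rw [← mul_assoc, h1, one_mul]
  have hWinv_deriv : ∀ t, HasDerivAt Winv (-((Winv t).comp (A t))) t := by
    intro t
    have hdiff : DifferentiableAt ℝ Winv t := by
      have h1 : DifferentiableAt ℝ (fun s => Ring.inverse (W s)) t :=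
        (differentiableAt_inverse (hunit t)).comp t (hW_deriv t).differentiableAt
      exact h1.congr_of_eventuallyEq (Filter.Eventually.of_forall fun s => (hinv_eq s))
    obtain ⟨D, hD⟩ : ∃ D, HasDerivAt Winv D t := ⟨deriv Winv t, hdiff.hasDerivAt⟩
    have hprod := hD.mul (hW_deriv t)
    have hconst : HasDerivAt (fun s => Winv s * W s) 0 t := by
      have : (fun s => Winv s * W s) = fun _ => (1 : _) := funext fun s => hmul₂ s
      rw [this]; exact hasDerivAt_const t 1
    have hzero : D * W t + Winv t * ((A t).comp (W t)) = 0 := hprod.unique hconst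
    have hDval : D = -((Winv t).comp (A t)) := by
      have h2 : (D * W t) * Winv t + (Winv t * ((A t).comp (W t))) * Winv t = 0 := by
        rw [← add_mul, hzero, zero_mul]
      rw [mul_assoc, mul_assoc, hmul₁ t, mul_one] at h2
      have h3 : Winv t * ((A t).comp (W t) * Winv t) = (Winv t).comp (A t) := by
        rw [ContinuousLinearMap.mul_def, ContinuousLinearMap.mul_def,
          ContinuousLinearMap.comp_assoc, hWinv₁ t, ContinuousLinearMap.comp_id]
      rw [h3] at h2
      exact eq_neg_of_add_eq_zero_left h2
    rw [← hDval]; exact hD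
  -- ## The integral of `p` and basic facts
  set P : ℝ → ℝ := fun t => ∫ s in t₀..t, p s with hPdef
  have hP : ∀ t, HasDerivAt P (p t) t := fun t => (hp.integral_hasStrictDerivAt t₀ t).hasDerivAt
  have hP0 : P t₀ = 0 := intervalIntegral.integral_same
  have hWnorm' : ∀ t ≥ t₀, ‖W t‖ = Real.exp (P t) := hWp
  -- ## The function `y = Winv x`
  set y : ℝ → EuclideanSpace ℝ (Fin n) := fun t => Winv t (x t) with hydef
  have hy_deriv : ∀ t ≥ t₀, HasDerivAt y (Winv t (f t (x t) + F t)) t := by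
    intro t ht
    have h1 := (hWinv_deriv t).clm_apply (hx t ht)
    refine h1.congr_deriv ?_
    simp only [ContinuousLinearMap.neg_apply, ContinuousLinearMap.comp_apply, map_add]
    abel
  have hxy : ∀ t, x t = W t (y t) := fun t => by
    have := congrArg (fun g : EuclideanSpace ℝ (Fin n) →L[ℝ] EuclideanSpace ℝ (Fin n) =>
      g (x t)) (hWinv₁ t)
    simpa [hydef] using this.symm
  have hx_le : ∀ t ≥ t₀, ‖x t‖ ≤ Real.exp (P t) * ‖y t‖ := by
    intro t ht
    calc ‖x t‖ = ‖W t (y t)‖ := by rw [← hxy t]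
    _ ≤ ‖W t‖ * ‖y t‖ := (W t).le_opNorm _
    _ = Real.exp (P t) * ‖y t‖ := by rw [hWnorm' t ht]
  have hy0norm : Real.exp (P t₀) * ‖y t₀‖ = ‖Winv t₀ (x t₀)‖ := by
    rw [hP0, Real.exp_zero, one_mul]
  -- ## Norm bound on `Winv`
  have hWinv_norm : ∀ t ≥ t₀, ‖Winv t‖ ≤ khat * Real.exp (-(P t)) := by
    intro t ht
    have h1 : ‖W t‖ * ‖Winv t‖ ≤ khat := by rw [← hk t]; exact (hkb t ht).2
    rw [hWnorm' t ht] at h1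
    have h2 : (0:ℝ) < Real.exp (-(P t)) := Real.exp_pos _
    calc ‖Winv t‖ = (Real.exp (P t) * ‖Winv t‖) * Real.exp (-(P t)) := by
          rw [mul_comm (Real.exp (P t)), mul_assoc, ← Real.exp_add, add_neg_cancel,
            Real.exp_zero, mul_one]
    _ ≤ khat * Real.exp (-(P t)) := mul_le_mul_of_nonneg_right h1 h2.le
  -- ## Nonnegativity of `Lhat`
  have hLhat_nonneg : ∀ X, 0 ≤ X → 0 ≤ Lhat X := fun X hX => hLhat0 ▸ hLhat_mono hX
  -- ## The bound on `‖y'‖`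
  have hy'_bound : ∀ t ≥ t₀, ∀ X : ℝ, 0 ≤ X → ‖x t‖ ≤ X →
      ‖Winv t (f t (x t) + F t)‖ ≤ Real.exp (-(P t)) * (khat * (Lhat X + Fhat)) := by
    intro t ht X hX0 hXx
    have h1 : ‖f t (x t) + F t‖ ≤ Lhat X + Fhat := by
      calc ‖f t (x t) + F t‖ ≤ ‖f t (x t)‖ + ‖F t‖ := norm_add_le _ _
      _ ≤ L t ‖x t‖ + Fhat := add_le_add (hfL t ht _) (hFb t ht)
      _ ≤ Lhat ‖x t‖ + Fhat := add_le_add_left (hLb t ht _ (norm_nonneg _)) _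
      _ ≤ Lhat X + Fhat := add_le_add_left (hLhat_mono hXx) _
    have h2 : (0:ℝ) ≤ Lhat X + Fhat := by
      have := hLhat_nonneg X hX0; linarith
    calc ‖Winv t (f t (x t) + F t)‖ ≤ ‖Winv t‖ * ‖f t (x t) + F t‖ := (Winv t).le_opNorm _
    _ ≤ (khat * Real.exp (-(P t))) * (Lhat X + Fhat) :=
        mul_le_mul (hWinv_norm t ht) h1 (norm_nonneg _)
          (by positivity)
    _ = Real.exp (-(P t)) * (khat * (Lhat X + Fhat)) := by ring
  -- ## `Q` bounds
  have hQle : ∀ t ≥ t₀, ∀ X : ℝ, 0 ≤ X → khat * (Lhat X + Fhat) + p t * X ≤ Q X := by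
    intro t ht X hX
    rw [hQdef X]
    have : p t * X ≤ phat * X := mul_le_mul_of_nonneg_right (hpb t ht) hX
    linarith
  have hQcont : Continuous Q := by
    have hQeq : Q = fun X => phat * X + khat * (Lhat X + Fhat) := funext hQdef
    rw [hQeq]
    exact (continuous_const.mul continuous_id).add
      (continuous_const.mul (hLhat_cont.add continuous_const))
  have hy_contOn : ∀ s b : ℝ, t₀ ≤ s → ContinuousOn y (Icc s b) := fun s b hs t ht =>
    ((hy_deriv t (hs.trans ht.1)).continuousAt).continuousWithinAt
  -- ## KEY invariance claim
  have key : ∀ d : ℝ, 0 ≤ d → Q d ≤ 0 → ∀ s, t₀ ≤ s → Real.exp (P s) * ‖y s‖ ≤ d →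
      ∀ T, s ≤ T → Real.exp (P T) * ‖y T‖ ≤ d := by
    intro d hd0 hQd s hs hys T hT
    obtain ⟨K₀, U, hU, hlip⟩ := hLhat_lip d
    obtain ⟨r, hr0, hball⟩ := Metric.mem_nhds_iff.1 hU
    set K : ℝ := max (khat * K₀) 1 with hKdef
    have hK1 : (1:ℝ) ≤ K := le_max_right _ _
    have hK0 : (0:ℝ) < K := lt_of_lt_of_le one_pos hK1
    set ρ : ℝ := r / 2 with hρdef
    have hρ : 0 < ρ := half_pos hr0
    have hQlin : ∀ X, d ≤ X → X ≤ d + ρ → Q X ≤ K * (X - d) := by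
      intro X h1 h2
      have hXU : X ∈ U := hball (by
        rw [Metric.mem_ball, Real.dist_eq, abs_of_nonneg (by linarith)]
        have : ρ < r := by rw [hρdef]; linarith
        linarith)
      have hdU : d ∈ U := hball (Metric.mem_ball_self hr0)
      have hlb : Lhat X - Lhat d ≤ (K₀ : ℝ) * (X - d) := by
        have hdist := hlip.dist_le_mul X hXU d hdU
        rw [Real.dist_eq, Real.dist_eq, abs_of_nonneg (by linarith : (0:ℝ) ≤ X - d)] at hdist
        calc Lhat X - Lhat d ≤ |Lhat X - Lhat d| := le_abs_self _
        _ ≤ (K₀ : ℝ) * (X - d) := hdist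
      have hQX : Q X = Q d + (phat * (X - d) + khat * (Lhat X - Lhat d)) := by
        rw [hQdef, hQdef]; ring
      have hkK : khat * K₀ ≤ K := le_max_left _ _
      have h3 : khat * (Lhat X - Lhat d) ≤ (khat * K₀) * (X - d) := by
        calc khat * (Lhat X - Lhat d) ≤ khat * ((K₀ : ℝ) * (X - d)) :=
              mul_le_mul_of_nonneg_left hlb (by linarith)
        _ = (khat * K₀) * (X - d) := by ring
      have h4 : (khat * (K₀:ℝ)) * (X - d) ≤ K * (X - d) :=
        mul_le_mul_of_nonneg_right hkK (by linarith)
      have h5 : phat * (X - d) ≤ 0 := mul_nonpos_of_nonpos_of_nonneg hphat.le (by linarith)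
      linarith
    -- epsilon argument
    have main : ∀ η : ℝ, 0 < η → Real.exp (P T) * ‖y T‖ ≤ d + η := by
      intro η hη
      set C : ℝ := Real.exp (2 * K * (T - s)) with hCdef
      have hC0 : (0:ℝ) < C := Real.exp_pos _
      set ε : ℝ := min (ρ / C) (η / C) with hεdef
      have hε0 : 0 < ε := lt_min (div_pos hρ hC0) (div_pos hη hC0)
      have hεC₁ : ε * C ≤ ρ := by
        calc ε * C ≤ (ρ / C) * C := mul_le_mul_of_nonneg_right (min_le_left _ _) hC0.le
        _ = ρ := div_mul_cancel₀ _ hC0.ne'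
      have hεC₂ : ε * C ≤ η := by
        calc ε * C ≤ (η / C) * C := mul_le_mul_of_nonneg_right (min_le_right _ _) hC0.le
        _ = η := div_mul_cancel₀ _ hC0.ne'
      set B : ℝ → ℝ := fun t => Real.exp (-(P t)) * (d + ε * Real.exp (2*K*(t - s)))
        with hBdef
      set B' : ℝ → ℝ := fun t => (-(p t)) * Real.exp (-(P t)) * (d + ε * Real.exp (2*K*(t-s)))
        + Real.exp (-(P t)) * (ε * (2*K) * Real.exp (2*K*(t-s))) with hB'def
      have hB : ∀ t, HasDerivAt B (B' t) t := by
        intro t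
        have h1 : HasDerivAt (fun t => Real.exp (-(P t))) ((-(p t)) * Real.exp (-(P t))) t := by
          have := ((hP t).neg).exp
          refine this.congr_deriv ?_; simp only [Pi.neg_apply]; ring
        have h3 : HasDerivAt (fun t : ℝ => 2*K*(t-s)) (2*K) t := by
          simpa using ((hasDerivAt_id t).sub_const s).const_mul (2*K)
        have h2 : HasDerivAt (fun t => d + ε * Real.exp (2*K*(t-s)))
            (ε * (2*K) * Real.exp (2*K*(t-s))) t := by
          have := (h3.exp.const_mul ε).const_add d
          refine this.congr_deriv ?_; ring
        have := h1.mul h2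
        refine this.congr_deriv ?_
        all_goals simp only [hB'def]
        all_goals ring
      have ha : ‖y s‖ ≤ B s := by
        have h1 : ‖y s‖ = Real.exp (-(P s)) * (Real.exp (P s) * ‖y s‖) := by
          rw [← mul_assoc, ← Real.exp_add, neg_add_cancel, Real.exp_zero, one_mul]
        rw [h1, hBdef]
        apply mul_le_mul_of_nonneg_left _ (Real.exp_pos _).le
        have : Real.exp (2*K*(s-s)) = 1 := by rw [sub_self, mul_zero, Real.exp_zero]
        rw [this]
        linarith
      have bound : ∀ t ∈ Ico s T, ‖y t‖ = B t →
          ‖Winv t (f t (x t) + F t)‖ < B' t := by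
        intro t htm hyB
        have ht0 : t₀ ≤ t := hs.trans htm.1
        set E : ℝ := Real.exp (2*K*(t-s)) with hEdef
        have hE0 : (0:ℝ) < E := Real.exp_pos _
        set X : ℝ := d + ε * E with hXdef
        have hXval : Real.exp (P t) * ‖y t‖ = X := by
          rw [hyB, hBdef, ← mul_assoc, ← Real.exp_add, add_neg_cancel, Real.exp_zero, one_mul]
        have hXd : d ≤ X := by
          rw [hXdef]; nlinarith
        have hX0 : (0:ℝ) ≤ X := hd0.trans hXd
        have hEC : E ≤ C := by
          rw [hEdef, hCdef]
          apply Real.exp_le_exp.2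
          have := htm.2
          nlinarith
        have hXρ : X ≤ d + ρ := by
          rw [hXdef]
          have : ε * E ≤ ε * C := mul_le_mul_of_nonneg_left hEC hε0.le
          linarith
        have hxX : ‖x t‖ ≤ X := by rw [← hXval]; exact hx_le t ht0
        have hfb := hy'_bound t ht0 X hX0 hxX
        have hQX := hQlin X hXd hXρ
        have hQl := hQle t ht0 X hX0
        have hXd' : X - d = ε * E := by rw [hXdef]; ring
        have hlt : khat * (Lhat X + Fhat) < (-(p t)) * X + ε * (2*K) * E := by
          have h6 : K * (X - d) = K * (ε * E) := by rw [hXd']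
          nlinarith
        calc ‖Winv t (f t (x t) + F t)‖ ≤ Real.exp (-(P t)) * (khat * (Lhat X + Fhat)) := hfb
        _ < Real.exp (-(P t)) * ((-(p t)) * X + ε * (2*K) * E) :=
            (mul_lt_mul_iff_right₀ (Real.exp_pos _)).2 hlt
        _ = B' t := by rw [hB'def, hXdef, hEdef]; ring
      have happ := image_norm_le_of_norm_deriv_right_lt_deriv_boundary
        (f := y) (f' := fun t => Winv t (f t (x t) + F t)) (a := s) (b := T)
        (hy_contOn s T hs)
        (fun t htm => (hy_deriv t (hs.trans htm.1)).hasDerivWithinAt)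
        ha hB bound
      have hT' : T ∈ Icc s T := ⟨hT, le_refl _⟩
      have h7 : ‖y T‖ ≤ B T := happ hT'
      have h8 : Real.exp (P T) * ‖y T‖ ≤ Real.exp (P T) * B T :=
        mul_le_mul_of_nonneg_left h7 (Real.exp_pos _).le
      have h9 : Real.exp (P T) * B T = d + ε * C := by
        rw [hBdef, hCdef, ← mul_assoc, ← Real.exp_add, add_neg_cancel, Real.exp_zero, one_mul]
      rw [h9] at h8
      linarith
    exact le_of_forall_pos_le_add main
  -- ## reaching `d₂ + ε`
  have reach : ∀ ε : ℝ, 0 < ε → d₂ + ε < d₁ → Real.exp (P t₀) * ‖y t₀‖ < d₁ →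
      ∃ t₁ ≥ t₀, Real.exp (P t₁) * ‖y t₁‖ ≤ d₂ + ε := by
    intro ε hε hεd hstart
    by_contra hcon
    push_neg at hcon
    set c : ℝ := max (Real.exp (P t₀) * ‖y t₀‖) (d₂ + ε) with hcdef
    have hc1 : c < d₁ := max_lt hstart hεd
    have hc2 : d₂ + ε ≤ c := le_max_right _ _
    obtain ⟨m, hm_mem, hm_max⟩ := isCompact_Icc.exists_isMaxOn
      (⟨d₂ + ε, left_mem_Icc.2 hc2⟩ : (Icc (d₂ + ε) c).Nonempty) hQcont.continuousOn
    set δ : ℝ := -(Q m) with hδdef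
    have hδ : 0 < δ := by
      have : Q m < 0 := hQneg m ⟨by
          have := hm_mem.1; linarith, lt_of_le_of_lt hm_mem.2 hc1⟩
      rw [hδdef]; linarith
    set T : ℝ := t₀ + (2*(c - (d₂+ε)) + 2)/δ with hTdef
    have hT : t₀ ≤ T := by
      rw [hTdef]
      have : (0:ℝ) ≤ (2*(c - (d₂+ε)) + 2)/δ := div_nonneg (by linarith) hδ.le
      linarith
    set B : ℝ → ℝ := fun t => Real.exp (-(P t)) * (c - (δ/2)*(t - t₀)) with hBdef
    set B' : ℝ → ℝ := fun t => (-(p t)) * Real.exp (-(P t)) * (c - (δ/2)*(t - t₀))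
      + Real.exp (-(P t)) * (-(δ/2)) with hB'def
    have hB : ∀ t, HasDerivAt B (B' t) t := by
      intro t
      have h1 : HasDerivAt (fun t => Real.exp (-(P t))) ((-(p t)) * Real.exp (-(P t))) t := by
        have := ((hP t).neg).exp
        refine this.congr_deriv ?_; simp only [Pi.neg_apply]; ring
      have h2 : HasDerivAt (fun t : ℝ => c - (δ/2)*(t - t₀)) (-(δ/2)) t := by
        have h3 : HasDerivAt (fun t : ℝ => (δ/2)*(t - t₀)) (δ/2) t := by
          simpa using ((hasDerivAt_id t).sub_const t₀).const_mul (δ/2)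
        exact h3.const_sub c
      have := h1.mul h2
      refine this.congr_deriv ?_
      all_goals simp only [hB'def]
      all_goals ring
    have ha : ‖y t₀‖ ≤ B t₀ := by
      have h1 : ‖y t₀‖ = Real.exp (-(P t₀)) * (Real.exp (P t₀) * ‖y t₀‖) := by
        rw [← mul_assoc, ← Real.exp_add, neg_add_cancel, Real.exp_zero, one_mul]
      rw [h1, hBdef]
      apply mul_le_mul_of_nonneg_left _ (Real.exp_pos _).le
      have : c - (δ/2)*(t₀ - t₀) = c := by ring
      rw [this]
      exact le_max_left _ _
    have bound : ∀ t ∈ Ico t₀ T, ‖y t‖ = B t →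
        ‖Winv t (f t (x t) + F t)‖ < B' t := by
      intro t htm hyB
      have ht0 : t₀ ≤ t := htm.1
      set X : ℝ := c - (δ/2)*(t - t₀) with hXdef
      have hXval : Real.exp (P t) * ‖y t‖ = X := by
        rw [hyB, hBdef, ← mul_assoc, ← Real.exp_add, add_neg_cancel, Real.exp_zero, one_mul]
      have hXgt : d₂ + ε < X := by rw [← hXval]; exact hcon t ht0
      have hXle : X ≤ c := by
        rw [hXdef]
        have h1 : (0:ℝ) ≤ (δ/2)*(t - t₀) := mul_nonneg (by linarith) (by linarith)
        linarith
      have hX0 : (0:ℝ) ≤ X := by linarith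
      have hxX : ‖x t‖ ≤ X := by rw [← hXval]; exact hx_le t ht0
      have hfb := hy'_bound t ht0 X hX0 hxX
      have hQmax : Q X ≤ Q m := hm_max ⟨hXgt.le, hXle⟩
      have hQl := hQle t ht0 X hX0
      have hlt : khat * (Lhat X + Fhat) < (-(p t)) * X + (-(δ/2)) := by
        have hqm : Q m = -δ := by rw [hδdef]; ring
        have h11 : Q X ≤ -δ := hqm ▸ hQmax
        have h12 : khat * (Lhat X + Fhat) ≤ -δ - p t * X := by linarith
        clear_value X δ c T
        linarith
      calc ‖Winv t (f t (x t) + F t)‖ ≤ Real.exp (-(P t)) * (khat * (Lhat X + Fhat)) := hfb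
      _ < Real.exp (-(P t)) * ((-(p t)) * X + (-(δ/2))) :=
          (mul_lt_mul_iff_right₀ (Real.exp_pos _)).2 hlt
      _ = B' t := by rw [hB'def, hXdef]; ring
    have happ := image_norm_le_of_norm_deriv_right_lt_deriv_boundary
      (f := y) (f' := fun t => Winv t (f t (x t) + F t)) (a := t₀) (b := T)
      (hy_contOn t₀ T le_rfl)
      (fun t htm => (hy_deriv t htm.1).hasDerivWithinAt)
      ha hB bound
    have h7 : ‖y T‖ ≤ B T := happ ⟨hT, le_refl _⟩
    have h8 : Real.exp (P T) * ‖y T‖ ≤ c - (δ/2)*(T - t₀) := by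
      calc Real.exp (P T) * ‖y T‖ ≤ Real.exp (P T) * B T :=
          mul_le_mul_of_nonneg_left h7 (Real.exp_pos _).le
      _ = c - (δ/2)*(T - t₀) := by
          rw [hBdef, ← mul_assoc, ← Real.exp_add, add_neg_cancel, Real.exp_zero, one_mul]
    have h9 : c - (δ/2)*(T - t₀) = d₂ + ε - 1 := by
      rw [hTdef]
      field_simp
      ring
    have h10 := hcon T hT
    rw [h9] at h8
    linarith
  -- ## Assembly
  refine ⟨?_, ?_, ?_⟩
  · intro h0 t ht
    have h1 := key d₁ (by linarith) (le_of_eq hQroot₁) t₀ le_rfl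
      (by rw [hy0norm]; exact h0) t ht
    exact (hx_le t ht).trans h1
  · intro h0 t ht
    have h1 := key d₂ (by linarith) (le_of_eq hQroot₂) t₀ le_rfl
      (by rw [hy0norm]; exact h0) t ht
    exact (hx_le t ht).trans h1
  · intro h0
    have hlim : ∀ ε : ℝ, 0 < ε → d₂ + ε < d₁ →
        Filter.limsup (fun t => ‖x t‖) Filter.atTop ≤ d₂ + ε := by
      intro ε hε hεd
      obtain ⟨t₁, ht₁, hy1⟩ := reach ε hε hεd (by rw [hy0norm]; exact h0)
      have h2 := key (d₂+ε) (by linarith) (le_of_lt (hQneg _ ⟨by linarith, hεd⟩)) t₁ ht₁ hy1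
      have hev : ∀ᶠ t in Filter.atTop, ‖x t‖ ≤ d₂ + ε :=
        Filter.eventually_atTop.2 ⟨t₁, fun t ht => (hx_le t (ht₁.trans ht)).trans (h2 t ht)⟩
      have hlb : ∀ᶠ t in Filter.atTop, (0:ℝ) ≤ ‖x t‖ :=
        Filter.Eventually.of_forall fun t => norm_nonneg _
      exact Filter.limsup_le_of_le (Filter.IsBoundedUnder.isCoboundedUnder_le ⟨0, by
        simpa [Filter.eventually_map] using hlb⟩) hev
    by_contra hlimc
    push_neg at hlimc
    set l := Filter.limsup (fun t => ‖x t‖) Filter.atTop with hldef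
    set ε : ℝ := min ((l - d₂)/2) ((d₁ - d₂)/2) with hεdef
    have hε0 : 0 < ε := lt_min (by linarith) (by linarith)
    have hε1 : d₂ + ε < d₁ := by
      have : ε ≤ (d₁ - d₂)/2 := min_le_right _ _
      linarith
    have h3 := hlim ε hε0 hε1
    have : ε ≤ (l - d₂)/2 := min_le_left _ _
    linarith
end

section
/- (Theorem 4, repeated root.) In the extended-Lipschitz setting with forcing and with p̂ < 0, k̂ ≥ 1, F̂ > 0, L̂ as above (p(t) ≤ p̂, 1 ≤ k(t) ≤ k̂, ‖F t‖ ≤ F̂, L(t, X) ≤ L̂(X)), define Q(X) = p̂ X + k̂ (L̂(X) + F̂) and suppose d > 0 satisfies Q(d) = 0 and Q(X) > 0 for all X ∈ [0, d). Then every solution x of ẋ = A(t)x + f(t,x) + F(t) with ‖(W t₀)⁻¹ (x t₀)‖ ≤ d satisfies ‖x(t)‖ ≤ d for all t ≥ t₀. -/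
open Set intervalIntegral

set_option synthInstance.maxHeartbeats 1000000

noncomputable instance theorem4AuxTower {n : ℕ} :
    IsScalarTower ℝ (EuclideanSpace ℝ (Fin n) →L[ℝ] EuclideanSpace ℝ (Fin n))
      (EuclideanSpace ℝ (Fin n)) :=
  ⟨fun a M v => by simp [ContinuousLinearMap.smul_apply]⟩

noncomputable instance theorem4AuxTower2 {n : ℕ} :
    IsScalarTower ℝ (EuclideanSpace ℝ (Fin n) →L[ℝ] EuclideanSpace ℝ (Fin n))
      (EuclideanSpace ℝ (Fin n) →L[ℝ] EuclideanSpace ℝ (Fin n)) :=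
  ContinuousLinearMap.isScalarTower

noncomputable instance theorem4AuxComm {n : ℕ} :
    SMulCommClass ℝ (EuclideanSpace ℝ (Fin n) →L[ℝ] EuclideanSpace ℝ (Fin n))
      (EuclideanSpace ℝ (Fin n) →L[ℝ] EuclideanSpace ℝ (Fin n)) :=
  ⟨fun a M N => by ext v; simp [ContinuousLinearMap.smul_apply, ContinuousLinearMap.mul_apply]⟩

/-- Auxiliary comparison: a differentiable function `r` with `r' ≤ Q ∘ r` on `[t₀, ∞)`,
`r t₀ ≤ d`, `Q d = 0`, `Q` one-sidedly Lipschitz-bounded above `d`, stays `≤ d`. -/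
lemma aux_comparison_le
    (r r' Q : ℝ → ℝ) (t₀ d δ C : ℝ) (hδ : 0 < δ) (hC : 0 ≤ C)
    (hr : ∀ t, HasDerivAt r (r' t) t)
    (hbound : ∀ t, t₀ ≤ t → r' t ≤ Q (r t))
    (hQle : ∀ y, d ≤ y → y ≤ d + δ → Q y ≤ C * (y - d))
    (hinit : r t₀ ≤ d) :
    ∀ T, t₀ ≤ T → r T ≤ d := by
  intro T hT
  have main : ∀ η > (0:ℝ), r T ≤ d + η := by
    intro η hη
    set ε : ℝ := min δ η * Real.exp (-((C + 1) * (T - t₀))) with hεdef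
    have hεpos : 0 < ε := mul_pos (lt_min hδ hη) (Real.exp_pos _)
    set B : ℝ → ℝ := fun t => d + ε * Real.exp ((C + 1) * (t - t₀)) with hBdef
    set B' : ℝ → ℝ := fun t => ε * (Real.exp ((C + 1) * (t - t₀)) * ((C + 1) * 1)) with hB'def
    have hB'deriv : ∀ t, HasDerivAt B (B' t) t := by
      intro t
      have h1 : HasDerivAt (fun t => (C + 1) * (t - t₀)) ((C + 1) * 1) t :=
        ((hasDerivAt_id t).sub_const t₀).const_mul (C + 1)
      exact ((h1.exp).const_mul ε).const_add d
    -- key growth estimate for `ε * exp ((C+1)*(t-t₀))` when `t ≤ T`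
    have hεexp : ∀ t, t ≤ T → ε * Real.exp ((C + 1) * (t - t₀)) ≤ min δ η := by
      intro t ht
      rw [hεdef, mul_assoc, ← Real.exp_add]
      have h1 : -((C + 1) * (T - t₀)) + (C + 1) * (t - t₀) = (C + 1) * (t - T) := by ring
      rw [h1]
      have h2 : (C + 1) * (t - T) ≤ 0 := by nlinarith
      have h3 : Real.exp ((C + 1) * (t - T)) ≤ 1 := by
        calc Real.exp ((C + 1) * (t - T)) ≤ Real.exp 0 := Real.exp_le_exp.2 h2
          _ = 1 := Real.exp_zero
      nlinarith [lt_min hδ hη]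
    have ha : r t₀ ≤ B t₀ := by
      have hpos : (0:ℝ) < ε * Real.exp ((C + 1) * (t₀ - t₀)) :=
        mul_pos hεpos (Real.exp_pos _)
      simp only [hBdef]; linarith
    have bound : ∀ u ∈ Ico t₀ T, r u = B u → r' u < B' u := by
      intro u hu hru
      set e : ℝ := ε * Real.exp ((C + 1) * (u - t₀)) with hedef
      have hepos : 0 < e := mul_pos hεpos (Real.exp_pos _)
      have heδ : e ≤ δ := le_trans (hεexp u (le_of_lt hu.2)) (min_le_left _ _)
      have hru' : r u = d + e := hru
      have h1 : r' u ≤ Q (r u) := hbound u hu.1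
      have h2 : Q (r u) ≤ C * e := by
        have := hQle (r u) (by rw [hru']; linarith) (by rw [hru']; linarith)
        rw [hru'] at this ⊢; simpa using this
      have h3 : C * e < (C + 1) * e := by nlinarith
      have h4 : B' u = (C + 1) * e := by simp only [hB'def, hedef]; ring
      rw [h4]; linarith
    have hfence := image_le_of_deriv_right_lt_deriv_boundary'
      (fun u (_ : u ∈ Icc t₀ T) => (hr u).continuousAt.continuousWithinAt)
      (fun u (_ : u ∈ Ico t₀ T) => (hr u).hasDerivWithinAt)
      ha
      (fun u (_ : u ∈ Icc t₀ T) => (hB'deriv u).continuousAt.continuousWithinAt)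
      (fun u (_ : u ∈ Ico t₀ T) => (hB'deriv u).hasDerivWithinAt)
      bound
    have hT' : r T ≤ B T := hfence ⟨hT, le_refl T⟩
    have hBT : B T ≤ d + η := by
      have h1 := hεexp T (le_refl T)
      have h2 : min δ η ≤ η := min_le_right _ _
      simp only [hBdef]
      linarith
    linarith
  by_contra hcon
  push_neg at hcon
  have := main ((r T - d) / 2) (by linarith)
  linarith

set_option maxHeartbeats 2000000 in
/-- Theorem 4, repeated root: with forcing, bounds `p(t) ≤ p̂ < 0`, `1 ≤ k(t) ≤ k̂`,
`‖F t‖ ≤ F̂`, `L(t,X) ≤ L̂(X)`, let `Q(X) = p̂ X + k̂ (L̂(X) + F̂)` satisfy `Q(d) = 0`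
and `Q > 0` on `[0, d)`. Then every solution of `ẋ = A(t)x + f(t,x) + F(t)` with
`‖(W t₀)⁻¹ x(t₀)‖ ≤ d` satisfies `‖x(t)‖ ≤ d` for all `t ≥ t₀`. -/
theorem theorem4_repeated_root
    {n : ℕ} (hn : 1 ≤ n)
    (A : ℝ → (EuclideanSpace ℝ (Fin n) →L[ℝ] EuclideanSpace ℝ (Fin n)))
    (hA : Continuous A)
    (f : ℝ → EuclideanSpace ℝ (Fin n) → EuclideanSpace ℝ (Fin n))
    (hf : Continuous fun q : ℝ × EuclideanSpace ℝ (Fin n) => f q.1 q.2)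
    (F : ℝ → EuclideanSpace ℝ (Fin n)) (hF : Continuous F)
    (W Winv : ℝ → (EuclideanSpace ℝ (Fin n) →L[ℝ] EuclideanSpace ℝ (Fin n)))
    (hWinv₁ : ∀ t, (W t).comp (Winv t) = ContinuousLinearMap.id ℝ (EuclideanSpace ℝ (Fin n)))
    (hWinv₂ : ∀ t, (Winv t).comp (W t) = ContinuousLinearMap.id ℝ (EuclideanSpace ℝ (Fin n)))
    (hWinv_cont : Continuous Winv)
    (hW_deriv : ∀ t, HasDerivAt W ((A t).comp (W t)) t)
    (t₀ : ℝ) (hWnorm : ‖W t₀‖ = 1)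
    (p : ℝ → ℝ) (hp : Continuous p)
    (hWp : ∀ t ≥ t₀, ‖W t‖ = Real.exp (∫ s in t₀..t, p s))
    (k : ℝ → ℝ) (hk : ∀ t, k t = ‖W t‖ * ‖Winv t‖)
    -- extended-Lipschitz setting
    (L : ℝ → ℝ → ℝ) (hL : Continuous fun q : ℝ × ℝ => L q.1 q.2)
    (hL0 : ∀ t, L t 0 = 0)
    (hLmono : ∀ t, Monotone (L t))
    (hLlip : ∀ t, LocallyLipschitz (L t))
    (hfL : ∀ t ≥ t₀, ∀ y : EuclideanSpace ℝ (Fin n), ‖f t y‖ ≤ L t ‖y‖)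
    -- bounds by constants and an autonomous majorant
    (phat khat Fhat : ℝ) (hphat : phat < 0) (hkhat : 1 ≤ khat) (hFhat : 0 < Fhat)
    (Lhat : ℝ → ℝ) (hLhat_cont : Continuous Lhat) (hLhat_mono : Monotone Lhat)
    (hLhat_lip : LocallyLipschitz Lhat) (hLhat0 : Lhat 0 = 0)
    (hpb : ∀ t ≥ t₀, p t ≤ phat)
    (hkb : ∀ t ≥ t₀, 1 ≤ k t ∧ k t ≤ khat)
    (hFb : ∀ t ≥ t₀, ‖F t‖ ≤ Fhat)
    (hLb : ∀ t ≥ t₀, ∀ X ≥ (0 : ℝ), L t X ≤ Lhat X)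
    (Q : ℝ → ℝ) (hQdef : ∀ X, Q X = phat * X + khat * (Lhat X + Fhat))
    (d : ℝ) (hd : 0 < d)
    (hQroot : Q d = 0)
    (hQpos : ∀ X ∈ Set.Ico (0 : ℝ) d, 0 < Q X)
    (x : ℝ → EuclideanSpace ℝ (Fin n))
    (hx : ∀ t ≥ t₀, HasDerivAt x (A t (x t) + f t (x t) + F t) t)
    (hxinit : ‖(Winv t₀) (x t₀)‖ ≤ d) :
    ∀ t ≥ t₀, ‖x t‖ ≤ d := by
  -- `W t` is a unit in the algebra of continuous linear maps
  let U : ℝ → (EuclideanSpace ℝ (Fin n) →L[ℝ] EuclideanSpace ℝ (Fin n))ˣ := fun t =>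
    ⟨W t, Winv t,
      by rw [ContinuousLinearMap.mul_def, hWinv₁ t]; rfl,
      by rw [ContinuousLinearMap.mul_def, hWinv₂ t]; rfl⟩
  have hRinv : ∀ t, Ring.inverse (W t) = Winv t := fun t => Ring.inverse_unit (U t)
  -- derivative of `Winv`
  have hWinv_deriv : ∀ t, HasDerivAt Winv (-((Winv t).comp (A t))) t := by
    intro t
    have h1 : HasDerivAt (Ring.inverse ∘ W)
        ((-(ContinuousLinearMap.mulLeftRight ℝ (EuclideanSpace ℝ (Fin n) →L[ℝ] EuclideanSpace ℝ (Fin n)) (Winv t) (Winv t)))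
          ((A t).comp (W t))) t :=
      (hasFDerivAt_ringInverse (𝕜 := ℝ) (U t)).comp_hasDerivAt t (hW_deriv t)
    have h2 : HasDerivAt Winv
        ((-(ContinuousLinearMap.mulLeftRight ℝ (EuclideanSpace ℝ (Fin n) →L[ℝ] EuclideanSpace ℝ (Fin n)) (Winv t) (Winv t)))
          ((A t).comp (W t))) t := by
      apply h1.congr_of_eventuallyEq
      exact Filter.Eventually.of_forall fun s => (hRinv s).symm
    convert h2 using 1
    rw [ContinuousLinearMap.neg_apply, ContinuousLinearMap.mulLeftRight_apply]
    congr 1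
    ext v
    simp only [ContinuousLinearMap.mul_def, ContinuousLinearMap.comp_apply]
    have hv := congrArg (fun M : EuclideanSpace ℝ (Fin n) →L[ℝ] EuclideanSpace ℝ (Fin n) => M (Winv t v)) (hWinv₂ t)
    simp only [ContinuousLinearMap.comp_apply, ContinuousLinearMap.id_apply] at hv
    have hv2 := congrArg (fun M : EuclideanSpace ℝ (Fin n) →L[ℝ] EuclideanSpace ℝ (Fin n) => M v) (hWinv₁ t)
    simp only [ContinuousLinearMap.comp_apply, ContinuousLinearMap.id_apply] at hv2
    rw [hv2]
  -- continuity of `x` on `[t₀, ∞)`, and a global continuous modification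
  have hx_cont : ∀ t, t₀ ≤ t → ContinuousAt x t := fun t ht => (hx t ht).continuousAt
  set xM : ℝ → EuclideanSpace ℝ (Fin n) := fun s => x (max s t₀) with hxMdef
  have hxM_cont : Continuous xM := by
    apply continuous_iff_continuousAt.2
    intro t
    have hmaxc : Continuous fun s : ℝ => max s t₀ := continuous_id.max continuous_const
    have h1 : ContinuousAt x (max t t₀) := hx_cont _ (le_max_right _ _)
    exact ContinuousAt.comp (f := fun s : ℝ => max s t₀) h1 hmaxc.continuousAt
  have hxM_eq : ∀ s, t₀ ≤ s → xM s = x s := fun s hs => by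
    simp only [hxMdef, max_eq_left hs]
  -- the integrand and integral functions
  set g : ℝ → ℝ := fun s => ‖Winv s‖ * (Lhat ‖xM s‖ + ‖F s‖) with hgdef
  have hg_cont : Continuous g :=
    (hWinv_cont.norm).mul ((hLhat_cont.comp hxM_cont.norm).add hF.norm)
  have hg_nonneg : ∀ s, 0 ≤ g s := by
    intro s
    have h1 : 0 ≤ Lhat ‖xM s‖ := hLhat0 ▸ hLhat_mono (norm_nonneg _)
    have h2 : 0 ≤ ‖F s‖ := norm_nonneg _
    positivity
  set P : ℝ → ℝ := fun t => ∫ s in t₀..t, p s with hPdef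
  set G : ℝ → ℝ := fun t => ∫ s in t₀..t, g s with hGdef
  set c₀ : ℝ := ‖(Winv t₀) (x t₀)‖ with hc₀def
  set r : ℝ → ℝ := fun t => Real.exp (P t) * (c₀ + G t) with hrdef
  set r' : ℝ → ℝ := fun t => Real.exp (P t) * p t * (c₀ + G t) + Real.exp (P t) * g t
    with hr'def
  have hPderiv : ∀ t, HasDerivAt P (p t) t := fun t =>
    integral_hasDerivAt_right (hp.intervalIntegrable _ _)
      (hp.stronglyMeasurableAtFilter _ _) hp.continuousAt
  have hGderiv : ∀ t, HasDerivAt G (g t) t := fun t =>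
    integral_hasDerivAt_right (hg_cont.intervalIntegrable _ _)
      (hg_cont.stronglyMeasurableAtFilter _ _) hg_cont.continuousAt
  have hrderiv : ∀ t, HasDerivAt r (r' t) t := by
    intro t
    have h1 := ((hPderiv t).exp).mul ((hGderiv t).const_add c₀)
    exact h1
  -- derivative of `z t = Winv t (x t)`
  have hz_deriv : ∀ t, t₀ ≤ t →
      HasDerivAt (fun s => Winv s (x s)) (Winv t (f t (x t) + F t)) t := by
    intro t ht
    have h := (hWinv_deriv t).clm_apply (hx t ht)
    refine h.congr_deriv ?_
    simp only [ContinuousLinearMap.neg_apply, ContinuousLinearMap.comp_apply, map_add]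
    abel
  -- bound on the norm of `z`
  have hzbound : ∀ t, t₀ ≤ t → ‖Winv t (x t)‖ ≤ c₀ + G t := by
    intro t ht
    set w : ℝ → EuclideanSpace ℝ (Fin n) := fun s => Winv s (f s (xM s) + F s) with hwdef
    have hw_cont : Continuous w :=
      hWinv_cont.clm_apply ((hf.comp (continuous_id.prodMk hxM_cont)).add hF)
    have heq : (∫ s in t₀..t, w s) = Winv t (x t) - Winv t₀ (x t₀) := by
      apply integral_eq_sub_of_hasDerivAt
      · intro s hs
        rw [Set.uIcc_of_le ht] at hs
        have hs' : t₀ ≤ s := hs.1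
        have h := hz_deriv s hs'
        simp only [hwdef, hxM_eq s hs']
        exact h
      · exact hw_cont.intervalIntegrable _ _
    have hnorm : ‖∫ s in t₀..t, w s‖ ≤ |∫ s in t₀..t, g s| := by
      apply norm_integral_le_abs_of_norm_le ?_ (hg_cont.intervalIntegrable _ _)
      apply MeasureTheory.ae_restrict_of_forall_mem measurableSet_uIoc
      intro s hs
      rw [Set.uIoc_of_le ht] at hs
      have hs' : t₀ ≤ s := le_of_lt hs.1
      have h1 : ‖w s‖ ≤ ‖Winv s‖ * ‖f s (xM s) + F s‖ := (Winv s).le_opNorm _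
      have h2 : ‖f s (xM s) + F s‖ ≤ L s ‖x s‖ + ‖F s‖ := by
        rw [hxM_eq s hs']
        exact le_trans (norm_add_le _ _) (add_le_add_left (hfL s hs' (x s)) _)
      have h3 : L s ‖x s‖ ≤ Lhat ‖x s‖ := hLb s hs' _ (norm_nonneg _)
      have h4 : ‖w s‖ ≤ ‖Winv s‖ * (Lhat ‖x s‖ + ‖F s‖) := by
        calc ‖w s‖ ≤ ‖Winv s‖ * ‖f s (xM s) + F s‖ := h1
          _ ≤ ‖Winv s‖ * (Lhat ‖x s‖ + ‖F s‖) := by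
              apply mul_le_mul_of_nonneg_left _ (norm_nonneg _)
              linarith
      simpa [hgdef, hxM_eq s hs'] using h4
    have habs : |∫ s in t₀..t, g s| = G t := by
      rw [abs_of_nonneg]
      exact intervalIntegral.integral_nonneg ht fun s _ => hg_nonneg s
    calc ‖Winv t (x t)‖ = ‖Winv t₀ (x t₀) + (Winv t (x t) - Winv t₀ (x t₀))‖ := by
          congr 1; abel
      _ ≤ ‖Winv t₀ (x t₀)‖ + ‖Winv t (x t) - Winv t₀ (x t₀)‖ := norm_add_le _ _
      _ = c₀ + ‖∫ s in t₀..t, w s‖ := by rw [heq]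
      _ ≤ c₀ + |∫ s in t₀..t, g s| := by linarith
      _ = c₀ + G t := by rw [habs]
  -- `‖x t‖ ≤ r t` for `t ≥ t₀`
  have hxW : ∀ t, W t (Winv t (x t)) = x t := by
    intro t
    have h := congrArg (fun M : EuclideanSpace ℝ (Fin n) →L[ℝ] EuclideanSpace ℝ (Fin n) => M (x t)) (hWinv₁ t)
    simpa using h
  have hc₀G : ∀ t, t₀ ≤ t → 0 ≤ c₀ + G t := fun t ht =>
    le_trans (norm_nonneg _) (hzbound t ht)
  have hxr : ∀ t, t₀ ≤ t → ‖x t‖ ≤ r t := by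
    intro t ht
    calc ‖x t‖ = ‖W t (Winv t (x t))‖ := by rw [hxW]
      _ ≤ ‖W t‖ * ‖Winv t (x t)‖ := (W t).le_opNorm _
      _ = Real.exp (P t) * ‖Winv t (x t)‖ := by rw [hWp t ht]
      _ ≤ Real.exp (P t) * (c₀ + G t) :=
          mul_le_mul_of_nonneg_left (hzbound t ht) (le_of_lt (Real.exp_pos _))
      _ = r t := rfl
  have hr_nonneg : ∀ t, t₀ ≤ t → 0 ≤ r t := fun t ht =>
    le_trans (norm_nonneg _) (hxr t ht)
  -- the differential inequality `r' t ≤ Q (r t)`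
  have hkey : ∀ t, t₀ ≤ t → r' t ≤ Q (r t) := by
    intro t ht
    have hkt := hkb t ht
    have hE : Real.exp (P t) = ‖W t‖ := (hWp t ht).symm
    have hr0 : 0 ≤ r t := hr_nonneg t ht
    have hxle : ‖x t‖ ≤ r t := hxr t ht
    have h1 : Real.exp (P t) * p t * (c₀ + G t) = p t * r t := by
      simp only [hrdef]; ring
    have h2 : Real.exp (P t) * g t = k t * (Lhat ‖x t‖ + ‖F t‖) := by
      rw [hk t, hE]
      simp only [hgdef, hxM_eq t ht]
      ring
    have hL1 : Lhat ‖x t‖ ≤ Lhat (r t) := hLhat_mono hxle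
    have hL0' : 0 ≤ Lhat ‖x t‖ := hLhat0 ▸ hLhat_mono (norm_nonneg _)
    have h3 : k t * (Lhat ‖x t‖ + ‖F t‖) ≤ khat * (Lhat (r t) + Fhat) := by
      apply mul_le_mul hkt.2 (add_le_add hL1 (hFb t ht))
        (add_nonneg hL0' (norm_nonneg _)) (by linarith)
    have h4 : p t * r t ≤ phat * r t := mul_le_mul_of_nonneg_right (hpb t ht) hr0
    have h5 : r' t = p t * r t + Real.exp (P t) * g t := by
      simp only [hr'def, h1]
    rw [h5, h2, hQdef]
    linarith
  -- local Lipschitz bound on `Q` above `d`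
  obtain ⟨K, s0, hs0, hK⟩ := hLhat_lip d
  obtain ⟨δ', hδ'pos, hball⟩ := Metric.mem_nhds_iff.1 hs0
  set δ : ℝ := δ' / 2 with hδdef
  have hδpos : 0 < δ := by positivity
  have hmem : ∀ y : ℝ, d ≤ y → y ≤ d + δ → y ∈ s0 := by
    intro y h1 h2
    apply hball
    rw [Metric.mem_ball, Real.dist_eq, abs_of_nonneg (by linarith)]
    linarith
  have hdmem : d ∈ s0 := hmem d le_rfl (by linarith)
  set C : ℝ := khat * (K : ℝ) with hCdef
  have hCnonneg : 0 ≤ C := mul_nonneg (by linarith) K.coe_nonneg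
  have hQle : ∀ y, d ≤ y → y ≤ d + δ → Q y ≤ C * (y - d) := by
    intro y h1 h2
    have hy : y ∈ s0 := hmem y h1 h2
    have hLd : Lhat y - Lhat d ≤ (K : ℝ) * (y - d) := by
      have h := hK.dist_le_mul y hy d hdmem
      rw [Real.dist_eq, Real.dist_eq, abs_of_nonneg (by linarith : (0:ℝ) ≤ y - d)] at h
      calc Lhat y - Lhat d ≤ |Lhat y - Lhat d| := le_abs_self _
        _ ≤ (K : ℝ) * (y - d) := h
    have hQy : Q y = Q d + phat * (y - d) + khat * (Lhat y - Lhat d) := by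
      rw [hQdef, hQdef]; ring
    rw [hQy, hQroot]
    have h3 : phat * (y - d) ≤ 0 := mul_nonpos_of_nonpos_of_nonneg (le_of_lt hphat)
      (by linarith)
    have h4 : khat * (Lhat y - Lhat d) ≤ khat * ((K : ℝ) * (y - d)) :=
      mul_le_mul_of_nonneg_left hLd (by linarith)
    rw [hCdef]
    nlinarith
  -- initial condition for `r`
  have hrinit : r t₀ ≤ d := by
    have hP0 : P t₀ = 0 := intervalIntegral.integral_same
    have hG0 : G t₀ = 0 := intervalIntegral.integral_same
    simp only [hrdef, hP0, hG0, Real.exp_zero, one_mul, add_zero]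
    exact hxinit
  -- conclude via the comparison lemma
  intro t ht
  exact le_trans (hxr t ht)
    (aux_comparison_le r r' Q t₀ d δ C hδpos hCnonneg hrderiv hkey hQle hrinit t ht)
end
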